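/- arXiv:1908.06384 — 7 statements merged into one kernel-verified Lean document; each statement's English description precedes it below -/
import Mathlib

section
/- Let r>0 and ℓ>0, let B denote the closed disk {k ∈ ℂ : |k| ≤ r}, and for n ∈ ℤ set a_n := πn/(2ℓ). Suppose F : ℂ → ℂ is holomorphic on B, satisfies |F(k) − 1| < 1 − e^{−π/2} for all k ∈ B, and satisfies the contraction condition (e^{π/2}/(4ℓ))·max_{k∈B}|F′(k)| < 1. Then for every integer n with |n| ≤ ⌊2ℓr/π − 1/2⌋, there exists exactly one k in the closed disk {k ∈ ℂ : |k − a_n| ≤ π/(4ℓ)} satisfying e^{4ikℓ} = F(k). -/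
open Metric Set

set_option maxHeartbeats 1000000


lemma aux_norm_log_le {w : ℂ} (h : ‖w - 1‖ < 1) :
    ‖Complex.log w‖ ≤ -Real.log (1 - ‖w - 1‖) := by
  set z : ℂ := w - 1 with hzdef
  have hw : w = 1 + z := by rw [hzdef]; ring
  have hs := Complex.hasSum_taylorSeries_log h
  have hnorm : ∀ n : ℕ, ‖(-1 : ℂ) ^ (n + 1) * z ^ n / (n : ℂ)‖ = ‖z‖ ^ n / (n : ℝ) := by
    intro n
    rw [norm_div, norm_mul, norm_pow, norm_pow, norm_neg, norm_one, one_pow, one_mul]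
    simp
  have hreal : HasSum (fun n : ℕ => ‖z‖ ^ n / (n : ℝ)) (-Real.log (1 - ‖z‖)) := by
    have h0 : |‖z‖| < 1 := by rwa [abs_of_nonneg (norm_nonneg z)]
    have h1 := Real.hasSum_pow_div_log_of_abs_lt_one h0
    have h2 : (fun n : ℕ => ‖z‖ ^ (n + 1) / ((n + 1 : ℕ) : ℝ))
        = fun n : ℕ => ‖z‖ ^ (n + 1) / ((n : ℝ) + 1) := by
      funext n; push_cast; ring
    rw [← hasSum_nat_add_iff' 1]
    simpa [h2] using h1
  have hsummable : Summable fun n : ℕ => ‖(-1 : ℂ) ^ (n + 1) * z ^ n / (n : ℂ)‖ := by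
    have := hreal.summable
    simpa [hnorm] using this
  calc ‖Complex.log w‖ = ‖∑' n : ℕ, (-1 : ℂ) ^ (n + 1) * z ^ n / (n : ℂ)‖ := by
        rw [hw, hs.tsum_eq]
    _ ≤ ∑' n : ℕ, ‖(-1 : ℂ) ^ (n + 1) * z ^ n / (n : ℂ)‖ := norm_tsum_le_tsum_norm hsummable
    _ = ∑' n : ℕ, ‖z‖ ^ n / (n : ℝ) := by simp_rw [hnorm]
    _ = -Real.log (1 - ‖z‖) := hreal.tsum_eq

lemma aux_norm_log_lt {w : ℂ} (h : ‖w - 1‖ < 1 - Real.exp (-(Real.pi / 2))) :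
    ‖Complex.log w‖ < Real.pi / 2 := by
  have hexp : (0:ℝ) < Real.exp (-(Real.pi / 2)) := Real.exp_pos _
  have h1 : ‖w - 1‖ < 1 := by linarith
  have h2 := aux_norm_log_le h1
  have h3 : Real.exp (-(Real.pi / 2)) < 1 - ‖w - 1‖ := by linarith
  have h4 : -(Real.pi / 2) < Real.log (1 - ‖w - 1‖) := by
    calc -(Real.pi / 2) = Real.log (Real.exp (-(Real.pi / 2))) := (Real.log_exp _).symm
    _ < Real.log (1 - ‖w - 1‖) := Real.log_lt_log hexp h3
  linarith

lemma aux_slit {w : ℂ} (h : ‖w - 1‖ < 1) : w ∈ Complex.slitPlane := by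
  rw [Complex.mem_slitPlane_iff]
  left
  have h1 : |(w - 1).re| ≤ ‖w - 1‖ := by
    exact Complex.abs_re_le_norm _
  have h2 : (w - 1).re = w.re - 1 := by simp
  have := abs_le.mp h1
  simp only [h2] at this
  linarith [this.1]


lemma aux_schwarz_unique {Φ : ℂ → ℂ} {A : ℂ} {R : ℝ} (hR : 0 < R)
    (hΦ : DifferentiableOn ℂ Φ (closedBall A R))
    (hmap : ∀ k ∈ closedBall A R, ‖Φ k - A‖ < R / 2)
    {k₁ k₂ : ℂ} (h₁ : k₁ ∈ closedBall A R) (h₂ : k₂ ∈ closedBall A R)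
    (hfix₁ : Φ k₁ = k₁) (hfix₂ : Φ k₂ = k₂) : k₁ = k₂ := by
  have hRC : ((R : ℂ)) ≠ 0 := by exact_mod_cast hR.ne'
  set a₁ : ℂ := (k₁ - A) / R with ha₁def
  set a₂ : ℂ := (k₂ - A) / R with ha₂def
  have hnormdiv : ∀ k : ℂ, ‖(k - A) / (R : ℂ)‖ = ‖k - A‖ / R := by
    intro k
    rw [norm_div]
    congr 1
    rw [Complex.norm_real, Real.norm_of_nonneg hR.le]
  have ha₁ : ‖a₁‖ < 1 / 2 := by
    rw [ha₁def, hnormdiv, div_lt_iff₀ hR]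
    have := hmap k₁ h₁; rw [hfix₁] at this; linarith
  have ha₂ : ‖a₂‖ < 1 / 2 := by
    rw [ha₂def, hnormdiv, div_lt_iff₀ hR]
    have := hmap k₂ h₂; rw [hfix₂] at this; linarith
  set c : ℂ := (starRingEnd ℂ) a₁ with hcdef
  have hcnorm : ‖c‖ = ‖a₁‖ := by rw [hcdef]; exact RCLike.norm_conj a₁
  set m : ℂ → ℂ := fun w => (a₁ - w) / (1 - c * w) with hmdef
  -- denominator nonzero
  have hden : ∀ w : ℂ, ‖w‖ < 1 → (1 : ℂ) - c * w ≠ 0 := by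
    intro w hw hzero
    have h1 : (1 : ℂ) = c * w := by linear_combination hzero
    have : (1:ℝ) = ‖c * w‖ := by rw [← h1, norm_one]
    rw [norm_mul, hcnorm] at this
    nlinarith [norm_nonneg a₁, norm_nonneg w]
  -- key normSq identity
  have hid : ∀ w : ℂ, Complex.normSq (1 - c * w) - Complex.normSq (a₁ - w)
      = (1 - Complex.normSq a₁) * (1 - Complex.normSq w) := by
    intro w
    rw [Complex.normSq_sub, Complex.normSq_sub, Complex.normSq_one, Complex.normSq_mul, hcdef,
      Complex.normSq_conj]
    have h1 : ((1:ℂ) * (starRingEnd ℂ) ((starRingEnd ℂ) a₁ * w)).re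
        = (a₁ * (starRingEnd ℂ) w).re := by
      rw [one_mul, map_mul, Complex.conj_conj]
    rw [h1]
    ring
  have hnsq : ∀ z : ℂ, Complex.normSq z = ‖z‖ ^ 2 := by
    intro z; rw [Complex.sq_norm]
  -- m maps unit ball to unit ball
  have hmaps1 : ∀ w : ℂ, ‖w‖ < 1 → ‖m w‖ < 1 := by
    intro w hw
    have hd := hden w hw
    have hdpos : 0 < ‖(1:ℂ) - c * w‖ := norm_pos_iff.mpr hd
    rw [hmdef]
    simp only
    rw [norm_div, div_lt_one hdpos]
    have hkey : Complex.normSq (a₁ - w) < Complex.normSq (1 - c * w) := by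
      have := hid w
      have ha₁1 : Complex.normSq a₁ < 1 := by rw [hnsq]; nlinarith [norm_nonneg a₁]
      have hw1 : Complex.normSq w < 1 := by rw [hnsq]; nlinarith [norm_nonneg w]
      nlinarith
    rw [hnsq, hnsq] at hkey
    nlinarith [norm_nonneg (a₁ - w), norm_nonneg ((1:ℂ) - c * w)]
  -- m maps half ball into ball of radius 4/5
  have hmaps2 : ∀ w : ℂ, ‖w‖ < 1 / 2 → ‖m w‖ < 4 / 5 := by
    intro w hw
    have hw1 : ‖w‖ < 1 := by linarith
    have hd := hden w hw1
    have hdpos : 0 < ‖(1:ℂ) - c * w‖ := norm_pos_iff.mpr hd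
    rw [hmdef]
    simp only
    rw [norm_div, div_lt_iff₀ hdpos]
    have hub : ‖(1:ℂ) - c * w‖ ≤ 1 + ‖a₁‖ * ‖w‖ := by
      calc ‖(1:ℂ) - c * w‖ ≤ ‖(1:ℂ)‖ + ‖c * w‖ := norm_sub_le _ _
      _ = 1 + ‖a₁‖ * ‖w‖ := by rw [norm_one, norm_mul, hcnorm]
    have hidw := hid w
    rw [hnsq, hnsq, hnsq, hnsq] at hidw
    have hx0 : (0:ℝ) ≤ ‖a₁‖ := norm_nonneg _
    have hy0 : (0:ℝ) ≤ ‖w‖ := norm_nonneg _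
    have hN0 : (0:ℝ) ≤ ‖a₁ - w‖ := norm_nonneg _
    have hxy : ‖a₁‖ * ‖w‖ ≤ 1 / 4 := by
      calc ‖a₁‖ * ‖w‖ ≤ (1 / 2) * (1 / 2) := mul_le_mul ha₁.le hw.le hy0 (by norm_num)
      _ = 1 / 4 := by norm_num
    have hd54 : ‖(1:ℂ) - c * w‖ ≤ 5 / 4 := by linarith
    have h34a : (3:ℝ) / 4 < 1 - ‖a₁‖ ^ 2 := by nlinarith
    have h34b : (3:ℝ) / 4 < 1 - ‖w‖ ^ 2 := by nlinarith
    have h916 : (9:ℝ) / 16 < (1 - ‖a₁‖ ^ 2) * (1 - ‖w‖ ^ 2) := by nlinarith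
    have hd2 : ‖(1:ℂ) - c * w‖ ^ 2 ≤ 25 / 16 := by nlinarith
    have hN2 : ‖a₁ - w‖ ^ 2 < 16 / 25 * ‖(1:ℂ) - c * w‖ ^ 2 := by nlinarith
    nlinarith [hN2, hN0, hdpos]
  -- involution
  have hca₁ : (1 : ℂ) - c * a₁ ≠ 0 := by
    intro hzero
    have h1 : (1:ℂ) = c * a₁ := by linear_combination hzero
    have : (1:ℝ) = ‖c * a₁‖ := by rw [← h1, norm_one]
    rw [norm_mul, hcnorm] at this
    nlinarith [norm_nonneg a₁]
  have hinv : ∀ w : ℂ, ‖w‖ < 1 → m (m w) = w := by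
    intro w hw
    have hd := hden w hw
    have hd2 := hden (m w) (hmaps1 w hw)
    rw [hmdef] at hd2 ⊢
    simp only at hd2 ⊢
    rw [div_eq_iff hd2]
    have e : (a₁ - w) / (1 - c * w) * (1 - c * w) = a₁ - w := div_mul_cancel₀ _ hd
    linear_combination -e
  have hm0 : m 0 = a₁ := by rw [hmdef]; simp
  have hma₁ : m a₁ = 0 := by rw [hmdef]; simp
  -- the normalized map
  set f : ℂ → ℂ := fun w => (Φ (A + (R : ℂ) * w) - A) / R with hfdef
  have haff : ∀ w : ℂ, ‖w‖ < 1 → A + (R : ℂ) * w ∈ closedBall A R := by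
    intro w hw
    rw [mem_closedBall, dist_eq_norm]
    have : A + (R : ℂ) * w - A = (R : ℂ) * w := by ring
    rw [this, norm_mul, Complex.norm_real, Real.norm_of_nonneg hR.le]
    nlinarith [norm_nonneg w]
  have hf_diff : DifferentiableOn ℂ f (ball (0 : ℂ) 1) := by
    have h1 : DifferentiableOn ℂ (fun w : ℂ => A + (R : ℂ) * w) (ball (0 : ℂ) 1) :=
      (((differentiable_id.const_mul ((R : ℂ))).const_add A)).differentiableOn
    have h2 : MapsTo (fun w : ℂ => A + (R : ℂ) * w) (ball (0 : ℂ) 1) (closedBall A R) := by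
      intro w hw
      exact haff w (mem_ball_zero_iff.mp hw)
    exact ((hΦ.comp h1 h2).sub_const A).div_const _
  have hf_maps : ∀ w : ℂ, ‖w‖ < 1 → ‖f w‖ < 1 / 2 := by
    intro w hw
    rw [hfdef]
    simp only
    rw [norm_div, Complex.norm_real, Real.norm_of_nonneg hR.le, div_lt_iff₀ hR]
    have := hmap _ (haff w hw)
    linarith
  have hfa₁ : f a₁ = a₁ := by
    rw [hfdef]
    simp only
    have h1 : A + (R : ℂ) * a₁ = k₁ := by
      rw [ha₁def]
      field_simp
      ring
    rw [h1, hfix₁, ← ha₁def]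
  have hfa₂ : f a₂ = a₂ := by
    rw [hfdef]
    simp only
    have h1 : A + (R : ℂ) * a₂ = k₂ := by
      rw [ha₂def]
      field_simp
      ring
    rw [h1, hfix₂, ← ha₂def]
  -- m is differentiable on the unit ball
  have hm_diff : DifferentiableOn ℂ m (ball (0 : ℂ) 1) := by
    intro w hw
    have hw1 : ‖w‖ < 1 := mem_ball_zero_iff.mp hw
    have : DifferentiableAt ℂ m w := by
      rw [hmdef]
      exact ((differentiable_const a₁).sub differentiable_id).differentiableAt.div
        (((differentiable_id.const_mul c).const_sub 1)).differentiableAt (hden w hw1)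
    exact this.differentiableWithinAt
  set g : ℂ → ℂ := m ∘ f ∘ m with hgdef
  have hg_diff : DifferentiableOn ℂ g (ball (0 : ℂ) 1) := by
    have hfm : DifferentiableOn ℂ (f ∘ m) (ball (0 : ℂ) 1) := by
      apply hf_diff.comp hm_diff
      intro w hw
      exact mem_ball_zero_iff.mpr (hmaps1 w (mem_ball_zero_iff.mp hw))
    apply hm_diff.comp hfm
    intro w hw
    have h1 : ‖m w‖ < 1 := hmaps1 w (mem_ball_zero_iff.mp hw)
    have h2 : ‖f (m w)‖ < 1 / 2 := hf_maps _ h1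
    exact mem_ball_zero_iff.mpr (by simp only [Function.comp_apply]; linarith)
  have hg0 : g 0 = 0 := by
    rw [hgdef]
    simp only [Function.comp_apply]
    rw [hm0, hfa₁, hma₁]
  have hg_maps : MapsTo g (ball (0 : ℂ) 1) (ball (g 0) (4 / 5)) := by
    intro w hw
    rw [hg0, mem_ball_zero_iff, hgdef]
    simp only [Function.comp_apply]
    have h1 : ‖m w‖ < 1 := hmaps1 w (mem_ball_zero_iff.mp hw)
    have h2 : ‖f (m w)‖ < 1 / 2 := hf_maps _ h1
    exact hmaps2 _ h2
  set b : ℂ := m a₂ with hbdef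
  have hb_mem : b ∈ ball (0 : ℂ) 1 := by
    rw [hbdef]
    exact mem_ball_zero_iff.mpr (hmaps1 a₂ (by linarith))
  have hgb : g b = b := by
    rw [hgdef, hbdef]
    simp only [Function.comp_apply]
    rw [hinv a₂ (by linarith), hfa₂]
  have hschwarz := Complex.dist_le_div_mul_dist_of_mapsTo_ball hg_diff (hg_maps.mono_right ball_subset_closedBall) hb_mem
  rw [hgb, hg0] at hschwarz
  have hb0 : b = 0 := by
    have h1 : dist b 0 ≤ 4 / 5 * dist b 0 := by
      calc dist b 0 ≤ 4 / 5 / 1 * dist b 0 := hschwarz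
      _ = 4 / 5 * dist b 0 := by norm_num
    have h2 : (0:ℝ) ≤ dist b 0 := dist_nonneg
    have : dist b 0 = 0 := by linarith
    exact dist_eq_zero.mp this
  have ha₁₂ : a₂ = a₁ := by
    rw [hbdef, hmdef] at hb0
    simp only at hb0
    have hd2 := hden a₂ (by linarith : ‖a₂‖ < 1)
    have := div_eq_zero_iff.mp hb0
    rcases this with h | h
    · linear_combination -h
    · exact absurd h hd2
  have : (k₂ - A) / (R : ℂ) = (k₁ - A) / (R : ℂ) := by
    rw [← ha₁def, ← ha₂def, ha₁₂]
  field_simp at this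
  linear_combination -this

/-- For a function `F` holomorphic on the closed disk `B` of radius `r`,
with `|F(k) - 1| < 1 - e^{-π/2}` on `B` and satisfying the contraction condition
`(e^{π/2}/(4ℓ)) · max_B |F'| < 1`, for every integer `n` with `|n| ≤ ⌊2ℓr/π - 1/2⌋`
the equation `e^{4ikℓ} = F(k)` has exactly one solution in the closed disk of radius
`π/(4ℓ)` centered at `a_n = πn/(2ℓ)`. -/
theorem closely_spaced_wavenumbers_exist_unique
    (r ℓ : ℝ) (hr : 0 < r) (hℓ : 0 < ℓ) (F : ℂ → ℂ)
    (hF : DifferentiableOn ℂ F (Metric.closedBall (0 : ℂ) r))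
    (hF1 : ∀ k ∈ Metric.closedBall (0 : ℂ) r,
      ‖F k - 1‖ < 1 - Real.exp (-(Real.pi / 2)))
    (hcontr : Real.exp (Real.pi / 2) / (4 * ℓ) *
      sSup ((fun k => ‖deriv F k‖) '' Metric.closedBall (0 : ℂ) r) < 1)
    (n : ℤ) (hn : |n| ≤ ⌊2 * ℓ * r / Real.pi - 1 / 2⌋) :
    ∃! k : ℂ,
      k ∈ Metric.closedBall ((Real.pi * n / (2 * ℓ) : ℝ) : ℂ) (Real.pi / (4 * ℓ)) ∧
      Complex.exp (4 * Complex.I * k * ℓ) = F k := by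
  have hπ : (0:ℝ) < Real.pi := Real.pi_pos
  set A : ℂ := ((Real.pi * n / (2 * ℓ) : ℝ) : ℂ) with hAdef
  set R : ℝ := Real.pi / (4 * ℓ) with hRdef
  have hR0 : 0 < R := by rw [hRdef]; positivity
  -- the small disk is inside the big one
  have hincl : closedBall A R ⊆ closedBall (0 : ℂ) r := by
    intro k hk
    rw [mem_closedBall] at hk ⊢
    have hnr : (|n| : ℝ) ≤ 2 * ℓ * r / Real.pi - 1 / 2 := by
      exact_mod_cast Int.le_floor.mp hn
    have hAnorm : dist A 0 = Real.pi * |(n : ℝ)| / (2 * ℓ) := by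
      rw [dist_zero_right, hAdef, Complex.norm_real, Real.norm_eq_abs, abs_div, abs_mul,
        abs_of_pos hπ, abs_of_pos (by positivity : (0:ℝ) < 2 * ℓ)]
    have habs : |(n : ℝ)| = ((|n| : ℤ) : ℝ) := by
      rw [Int.cast_abs]
    have h1 : Real.pi * |(n : ℝ)| / (2 * ℓ) + R ≤ r := by
      rw [hRdef, habs]
      have h2 : ((|n| : ℤ) : ℝ) + 1 / 2 ≤ 2 * ℓ * r / Real.pi := by
        rw [habs] at hnr; linarith
      have h3 : (((|n| : ℤ) : ℝ) + 1 / 2) * Real.pi ≤ 2 * ℓ * r := by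
        rw [← le_div_iff₀ hπ]; exact h2
      rw [div_add_div _ _ (by positivity : (2*ℓ) ≠ 0) (by positivity : (4*ℓ) ≠ 0),
        div_le_iff₀ (by positivity : (0:ℝ) < 2 * ℓ * (4 * ℓ))]
      nlinarith [abs_nonneg n, hℓ, hπ]
    calc dist k 0 ≤ dist k A + dist A 0 := dist_triangle _ _ _
    _ ≤ R + Real.pi * |(n : ℝ)| / (2 * ℓ) := by rw [hAnorm] at *; linarith
    _ ≤ r := by linarith
  -- basic facts about F on the small disk
  have hF1' : ∀ k ∈ closedBall A R, ‖F k - 1‖ < 1 - Real.exp (-(Real.pi / 2)) := by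
    intro k hk
    exact hF1 k (hincl hk)
  have hslit : ∀ k ∈ closedBall A R, F k ∈ Complex.slitPlane := by
    intro k hk
    refine aux_slit (lt_of_lt_of_le (hF1' k hk) ?_)
    linarith [Real.exp_pos (-(Real.pi / 2))]
  have hFne : ∀ k ∈ closedBall A R, F k ≠ 0 := fun k hk =>
    Complex.slitPlane_ne_zero (hslit k hk)
  have hlog : ∀ k ∈ closedBall A R, ‖Complex.log (F k)‖ < Real.pi / 2 := fun k hk =>
    aux_norm_log_lt (hF1' k hk)
  have hFd : DifferentiableOn ℂ F (closedBall A R) := hF.mono hincl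
  have hlogFd : DifferentiableOn ℂ (fun k => Complex.log (F k)) (closedBall A R) := by
    intro k hk
    exact DifferentiableAt.comp_differentiableWithinAt k
      (Complex.differentiableAt_log (hslit k hk)) (hFd k hk)
  -- constants
  have hlC : ((ℓ : ℂ)) ≠ 0 := by exact_mod_cast hℓ.ne'
  have h4Il : (4 * Complex.I * (ℓ : ℂ)) ≠ 0 := by
    simp [Complex.I_ne_zero, hlC]
  have hconst : ‖4 * Complex.I * (ℓ : ℂ)‖ = 4 * ℓ := by
    rw [norm_mul, norm_mul, Complex.norm_I, Complex.norm_real, Real.norm_of_nonneg hℓ.le]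
    simp
  have h4lR : 4 * ℓ * R = Real.pi := by
    rw [hRdef]; field_simp
  have hexpA : Complex.exp (4 * Complex.I * A * (ℓ : ℂ)) = 1 := by
    have h1 : 4 * Complex.I * A * (ℓ : ℂ) = (n : ℂ) * (2 * (Real.pi : ℂ) * Complex.I) := by
      rw [hAdef]
      push_cast
      field_simp
      ring
    rw [h1]
    exact Complex.exp_int_mul_two_pi_mul_I n
  -- characterization of solutions in the disk
  have hchar : ∀ k ∈ closedBall A R,
      (Complex.exp (4 * Complex.I * k * ℓ) = F k ↔
        4 * Complex.I * (ℓ : ℂ) * (k - A) = Complex.log (F k)) := by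
    intro k hk
    have hsplit : 4 * Complex.I * k * (ℓ : ℂ)
        = 4 * Complex.I * A * (ℓ : ℂ) + 4 * Complex.I * (ℓ : ℂ) * (k - A) := by ring
    constructor
    · intro hek
      have h1 : Complex.exp (4 * Complex.I * (ℓ : ℂ) * (k - A)) = F k := by
        rw [hsplit, Complex.exp_add, hexpA, one_mul] at hek
        exact hek
      have h2 : Complex.exp (4 * Complex.I * (ℓ : ℂ) * (k - A))
          = Complex.exp (Complex.log (F k)) := by
        rw [Complex.exp_log (hFne k hk)]; exact h1
      obtain ⟨m, hm⟩ := Complex.exp_eq_exp_iff_exists_int.mp h2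
      have hv : ‖4 * Complex.I * (ℓ : ℂ) * (k - A)‖ ≤ Real.pi := by
        rw [norm_mul, hconst]
        have hkA : ‖k - A‖ ≤ R := by rwa [mem_closedBall, dist_eq_norm] at hk
        calc 4 * ℓ * ‖k - A‖ ≤ 4 * ℓ * R := by
              apply mul_le_mul_of_nonneg_left hkA (by positivity)
        _ = Real.pi := h4lR
      have hm2 : (m : ℂ) * (2 * (Real.pi : ℂ) * Complex.I)
          = 4 * Complex.I * (ℓ : ℂ) * (k - A) - Complex.log (F k) := by
        rw [hm]; ring
      have hmn : |(m : ℝ)| * (2 * Real.pi) < 2 * Real.pi := by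
        have h3 : ‖(m : ℂ) * (2 * (Real.pi : ℂ) * Complex.I)‖ = |(m : ℝ)| * (2 * Real.pi) := by
          rw [norm_mul, norm_mul, norm_mul, Complex.norm_I, mul_one]
          have : ‖(m : ℂ)‖ = |(m : ℝ)| := by
            rw [← Complex.ofReal_intCast, Complex.norm_real, Real.norm_eq_abs]
          rw [this]
          have h2pi : ‖(2 : ℂ)‖ = 2 := by norm_num
          have hpiC : ‖((Real.pi : ℝ) : ℂ)‖ = Real.pi := by
            rw [Complex.norm_real, Real.norm_of_nonneg hπ.le]
          rw [h2pi, hpiC]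
        calc |(m : ℝ)| * (2 * Real.pi) = ‖(m : ℂ) * (2 * (Real.pi : ℂ) * Complex.I)‖ := h3.symm
        _ = ‖4 * Complex.I * (ℓ : ℂ) * (k - A) - Complex.log (F k)‖ := by rw [hm2]
        _ ≤ ‖4 * Complex.I * (ℓ : ℂ) * (k - A)‖ + ‖Complex.log (F k)‖ := norm_sub_le _ _
        _ < Real.pi + Real.pi / 2 := by
              have := hlog k hk
              have := hv
              linarith
        _ < 2 * Real.pi := by linarith
      have hm0 : m = 0 := by
        by_contra hm0
        have h1le : (1 : ℝ) ≤ |(m : ℝ)| := by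
          have := Int.one_le_abs hm0
          calc (1:ℝ) = ((1:ℤ):ℝ) := by norm_num
          _ ≤ ((|m| : ℤ) : ℝ) := by exact_mod_cast this
          _ = |(m : ℝ)| := by rw [Int.cast_abs]
        nlinarith
      rw [hm0] at hm
      simpa using hm
    · intro hfix
      rw [show (4 : ℂ) * Complex.I * k * (ℓ : ℂ)
          = 4 * Complex.I * A * (ℓ : ℂ) + 4 * Complex.I * (ℓ : ℂ) * (k - A) from by ring,
        Complex.exp_add, hexpA, one_mul, hfix, Complex.exp_log (hFne k hk)]
  -- existence of a fixed point
  have hexists : ∃ k ∈ closedBall A R,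
      4 * Complex.I * (ℓ : ℂ) * (k - A) = Complex.log (F k) := by
    by_contra hcon
    push_neg at hcon
    set G : ℂ → ℂ := fun k => 4 * Complex.I * (ℓ : ℂ) * (k - A) - Complex.log (F k) with hGdef
    have hGne : ∀ k ∈ closedBall A R, G k ≠ 0 := by
      intro k hk
      rw [hGdef]
      exact sub_ne_zero.mpr (hcon k hk)
    have hGdiff : DifferentiableOn ℂ G (closedBall A R) := by
      apply DifferentiableOn.sub _ hlogFd
      exact ((differentiable_id.sub_const A).const_mul (4 * Complex.I * (ℓ : ℂ))).differentiableOn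
    have hWd : DiffContOnCl ℂ (fun k => (G k)⁻¹) (ball A R) := by
      apply DifferentiableOn.diffContOnCl
      rw [closure_ball A hR0.ne']
      exact hGdiff.inv hGne
    have hfr : ∀ z ∈ frontier (ball A R), ‖(G z)⁻¹‖ ≤ (Real.pi / 2)⁻¹ := by
      rw [frontier_ball A hR0.ne']
      intro z hz
      have hzD : z ∈ closedBall A R := sphere_subset_closedBall hz
      have hz1 : ‖z - A‖ = R := by rwa [mem_sphere_iff_norm] at hz
      have h1 : ‖4 * Complex.I * (ℓ : ℂ) * (z - A)‖ = Real.pi := by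
        rw [norm_mul, hconst, hz1, h4lR]
      have hlb : Real.pi / 2 < ‖G z‖ := by
        have h2 := hlog z hzD
        have h3 : ‖4 * Complex.I * (ℓ : ℂ) * (z - A)‖ - ‖Complex.log (F z)‖ ≤ ‖G z‖ := by
          rw [hGdef]; exact norm_sub_norm_le _ _
        rw [h1] at h3; linarith
      rw [norm_inv]
      exact inv_anti₀ (by positivity) hlb.le
    have hAc : A ∈ closure (ball A R) := by
      rw [closure_ball A hR0.ne']; exact mem_closedBall_self hR0.le
    have hineq := Complex.norm_le_of_forall_mem_frontier_norm_le isBounded_ball hWd hfr hAc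
    have hGA : ‖G A‖ < Real.pi / 2 := by
      have h1 : G A = -Complex.log (F A) := by rw [hGdef]; simp
      rw [h1, norm_neg]
      exact hlog A (mem_closedBall_self hR0.le)
    have hGApos : 0 < ‖G A‖ := norm_pos_iff.mpr (hGne A (mem_closedBall_self hR0.le))
    rw [norm_inv] at hineq
    have h2 : (0:ℝ) < Real.pi / 2 := by linarith
    have hfin : Real.pi / 2 ≤ ‖G A‖ := by
      by_contra hlt
      push_neg at hlt
      have := one_div_lt_one_div_of_lt hGApos hlt
      rw [one_div, one_div] at this
      linarith
    linarith
  obtain ⟨k₀, hk₀D, hk₀⟩ := hexists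
  -- the fixed-point map
  set Φ : ℂ → ℂ := fun k => A + Complex.log (F k) / (4 * Complex.I * (ℓ : ℂ)) with hΦdef
  have hΦdiff : DifferentiableOn ℂ Φ (closedBall A R) := (hlogFd.div_const _).const_add A
  have hΦmap : ∀ k ∈ closedBall A R, ‖Φ k - A‖ < R / 2 := by
    intro k hk
    have h1 : Φ k - A = Complex.log (F k) / (4 * Complex.I * (ℓ : ℂ)) := by rw [hΦdef]; ring
    rw [h1, norm_div, hconst, div_lt_iff₀ (by positivity : (0:ℝ) < 4 * ℓ)]
    have h2 := hlog k hk
    nlinarith [h4lR]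
  have hΦfix : ∀ k ∈ closedBall A R,
      4 * Complex.I * (ℓ : ℂ) * (k - A) = Complex.log (F k) → Φ k = k := by
    intro k hk h
    rw [hΦdef]
    simp only
    rw [← h]
    field_simp
    ring
  refine ⟨k₀, ⟨hk₀D, (hchar k₀ hk₀D).mpr hk₀⟩, ?_⟩
  rintro y ⟨hyD, hy⟩
  exact aux_schwarz_unique hR0 hΦdiff hΦmap hyD hk₀D
    (hΦfix y hyD ((hchar y hyD).mp hy)) (hΦfix k₀ hk₀D hk₀)
end

section
/- Let r>0, ℓ>0, and a ∈ ℝ with |a| + π/(4ℓ) ≤ r. Let B denote the closed disk {k ∈ ℂ : |k| ≤ r}, and suppose F : ℂ → ℂ is holomorphic on B and satisfies |F(k) − 1| ≤ 1 − e^{−π/2} for all k ∈ B. Then for every z ∈ ℂ with |z| ≤ π/(4ℓ) one has |−(i/(4ℓ))·Log F(z + a)| ≤ π/(4ℓ); that is, the map z ↦ −(i/(4ℓ))·Log F(z + a) maps the closed disk of radius π/(4ℓ) centered at 0 into itself. -/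
/-- If `|a| + π/(4ℓ) ≤ r`, `F` is holomorphic on the closed disk `B` of
radius `r` and `|F(k) - 1| ≤ 1 - e^{-π/2}` on `B`, then the map
`z ↦ -(i/(4ℓ)) Log F(z + a)` maps the closed disk of radius `π/(4ℓ)` centered at `0`
into itself. -/
theorem log_map_maps_disk_into_itself
    (r ℓ a : ℝ) (hr : 0 < r) (hℓ : 0 < ℓ) (ha : |a| + Real.pi / (4 * ℓ) ≤ r)
    (F : ℂ → ℂ) (hF : DifferentiableOn ℂ F (Metric.closedBall (0 : ℂ) r))
    (hF1 : ∀ k ∈ Metric.closedBall (0 : ℂ) r,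
      ‖F k - 1‖ ≤ 1 - Real.exp (-(Real.pi / 2))) :
    ∀ z : ℂ, ‖z‖ ≤ Real.pi / (4 * ℓ) →
      ‖-(Complex.I / (4 * ℓ)) * Complex.log (F (z + (a : ℂ)))‖ ≤
        Real.pi / (4 * ℓ) := by
  intro z hz
  have hmem : z + (a : ℂ) ∈ Metric.closedBall (0 : ℂ) r := by
    simp only [Metric.mem_closedBall, dist_zero_right]
    calc ‖z + (a : ℂ)‖ ≤ ‖z‖ + ‖(a : ℂ)‖ := norm_add_le _ _
      _ ≤ Real.pi / (4 * ℓ) + |a| := by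
          rw [Complex.norm_real, Real.norm_eq_abs]; exact add_le_add_left hz _
      _ ≤ r := by linarith
  set w := F (z + (a : ℂ)) with hw
  have hbd : ‖w - 1‖ ≤ 1 - Real.exp (-(Real.pi / 2)) := hF1 _ hmem
  have hexp : (0:ℝ) < Real.exp (-(Real.pi / 2)) := Real.exp_pos _
  -- real part positive
  have hre : Real.exp (-(Real.pi / 2)) ≤ w.re := by
    have h1 : |(w - 1).re| ≤ ‖w - 1‖ := Complex.abs_re_le_norm _
    have : (w - 1).re = w.re - 1 := by simp
    rw [this] at h1
    have := abs_le.mp h1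
    linarith [this.1]
  have hwne : w ≠ 0 := by
    intro h
    rw [h] at hre
    simp at hre
    linarith
  -- modulus bounds
  have habs_lb : Real.exp (-(Real.pi / 2)) ≤ ‖w‖ := by
    calc Real.exp (-(Real.pi / 2)) ≤ w.re := hre
      _ ≤ |w.re| := le_abs_self _
      _ ≤ ‖w‖ := Complex.abs_re_le_norm _
  have habs_ub : ‖w‖ ≤ Real.exp (Real.pi / 2) := by
    have h1 : ‖w‖ ≤ ‖w - 1‖ + ‖(1:ℂ)‖ := by
      have := norm_add_le (w - 1) 1
      simpa using this
    have h2 : ‖w‖ ≤ 2 := by simp at h1; linarith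
    calc ‖w‖ ≤ 2 := h2
      _ ≤ Real.exp (Real.pi / 2) := by
          have : (1.5707 : ℝ) ≤ Real.pi / 2 := by
            have := Real.pi_gt_d6; linarith
          calc (2:ℝ) ≤ Real.exp 1.5707 := by
                have h3 : (1:ℝ) + 1.5707 ≤ Real.exp 1.5707 := by
                  have := Real.add_one_le_exp (1.5707:ℝ); linarith
                linarith
            _ ≤ Real.exp (Real.pi / 2) := Real.exp_le_exp.mpr this
  have hlog_re : |Real.log ‖w‖| ≤ Real.pi / 2 := by
    rw [abs_le]
    constructor
    · have := Real.log_le_log (Real.exp_pos _) habs_lb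
      rwa [Real.log_exp] at this
    · have := Real.log_le_log (lt_of_lt_of_le hexp habs_lb) habs_ub
      rwa [Real.log_exp] at this
  have harg : |Complex.arg w| ≤ Real.pi / 2 :=
    Complex.abs_arg_le_pi_div_two_iff.mpr (le_of_lt (lt_of_lt_of_le hexp hre))
  -- |Log w| ≤ π
  have hlog : ‖Complex.log w‖ ≤ Real.pi := by
    calc ‖Complex.log w‖
        ≤ |(Complex.log w).re| + |(Complex.log w).im| :=
          Complex.norm_le_abs_re_add_abs_im _
      _ ≤ Real.pi / 2 + Real.pi / 2 := by
          rw [Complex.log_re, Complex.log_im]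
          exact add_le_add hlog_re harg
      _ = Real.pi := by ring
  rw [norm_mul]
  have h4ℓ : (0:ℝ) < 4 * ℓ := by linarith
  have hcoef : ‖(-(Complex.I / (4 * ℓ)))‖ = 1 / (4 * ℓ) := by
    rw [norm_neg, norm_div, Complex.norm_I,
      show ((4:ℂ) * ℓ) = ((4 * ℓ : ℝ) : ℂ) by push_cast; ring,
      Complex.norm_real, Real.norm_eq_abs, abs_of_pos h4ℓ]
  rw [hcoef]
  rw [div_eq_mul_inv (Real.pi) (4*ℓ), one_div, mul_comm]
  exact mul_le_mul_of_nonneg_right hlog (by positivity)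
end

section
/- Let h : ℂ → ℂ be an entire function, let m ∈ ℕ with m ≥ 1, and let a ∈ ℂ. Then Σ_{Θ} [ D^{|Θ|}h(a) · ∏_{θ ∈ Θ} D^{|θ|−1}[h^{|θ|}](a) ] = (1/(m+1)) · D^{m}[h^{m+1}](a), where the sum runs over all partitions Θ of the set {1, …, m} into nonempty blocks, |Θ| denotes the number of blocks of Θ, |θ| denotes the cardinality of a block θ, h^{j} is the j-th power of h, and D^{j} denotes the j-th complex derivative. -/
namespace FdB12
open Finset PowerSeries



variable {f g : ℂ → ℂ}

lemma diffIter (hf : Differentiable ℂ f) (n : ℕ) : Differentiable ℂ (iteratedDeriv n f) :=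
  (hf.contDiff (n := ⊤)).differentiable_iteratedDeriv n (by simp)

/-- Leibniz formula for iterated derivatives of entire functions. -/
lemma iteratedDeriv_mul' (hf : Differentiable ℂ f) (hg : Differentiable ℂ g) (n : ℕ) (x : ℂ) :
    iteratedDeriv n (f * g) x
      = ∑ k ∈ range (n + 1), (n.choose k : ℂ) * iteratedDeriv k f x * iteratedDeriv (n - k) g x := by
  induction n generalizing x with
  | zero => simp [iteratedDeriv_zero]
  | succ n ih =>
    rw [iteratedDeriv_succ]
    have h2 : deriv (iteratedDeriv n (f * g)) x =
        deriv (fun y => ∑ k ∈ range (n + 1),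
          (n.choose k : ℂ) * iteratedDeriv k f y * iteratedDeriv (n - k) g y) x := by
      apply Filter.EventuallyEq.deriv_eq
      filter_upwards with y using ih y
    rw [h2, deriv_fun_sum (fun k _ => by
      exact (((diffIter hf k).const_mul _).mul (diffIter hg (n-k))).differentiableAt)]
    have h3 : ∀ k ∈ range (n+1),
        deriv (fun y => (n.choose k : ℂ) * iteratedDeriv k f y * iteratedDeriv (n - k) g y) x
        = (n.choose k : ℂ) * (iteratedDeriv (k+1) f x * iteratedDeriv (n - k) g x)
            + (n.choose k : ℂ) * (iteratedDeriv k f x * iteratedDeriv (n - k + 1) g x) := by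
      intro k _
      have e : (fun y => (n.choose k : ℂ) * iteratedDeriv k f y * iteratedDeriv (n - k) g y)
          = fun y => (n.choose k : ℂ) * (iteratedDeriv k f y * iteratedDeriv (n - k) g y) := by
        funext y; ring
      rw [e, deriv_const_mul (d := fun y => iteratedDeriv k f y * iteratedDeriv (n - k) g y) _ (((diffIter hf k).mul (diffIter hg (n-k))).differentiableAt),
        deriv_fun_mul ((diffIter hf k).differentiableAt) ((diffIter hg (n-k)).differentiableAt),
        ← iteratedDeriv_succ, ← iteratedDeriv_succ]
      ring
    rw [Finset.sum_congr rfl h3, Finset.sum_add_distrib]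
    -- Pascal recombination
    have eR : ∑ k ∈ range (n + 2), ((n+1).choose k : ℂ) * iteratedDeriv k f x
            * iteratedDeriv (n + 1 - k) g x
        = (∑ j ∈ range (n+1), ((n+1).choose (j+1) : ℂ) * iteratedDeriv (j+1) f x
            * iteratedDeriv (n - j) g x)
          + iteratedDeriv 0 f x * iteratedDeriv (n+1) g x := by
      rw [Finset.sum_range_succ']
      simp [Nat.succ_sub_succ]
    rw [eR]
    have eP : ∀ j ∈ range (n+1), ((n+1).choose (j+1) : ℂ) * iteratedDeriv (j+1) f x
            * iteratedDeriv (n - j) g x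
        = (n.choose j : ℂ) * (iteratedDeriv (j+1) f x * iteratedDeriv (n - j) g x)
          + (n.choose (j+1) : ℂ) * (iteratedDeriv (j+1) f x * iteratedDeriv (n - j) g x) := by
      intro j _
      rw [Nat.choose_succ_succ]
      push_cast
      ring
    rw [Finset.sum_congr rfl eP, Finset.sum_add_distrib]
    have eL : ∑ k ∈ range (n+1), (n.choose k : ℂ) * (iteratedDeriv k f x * iteratedDeriv (n - k + 1) g x)
        = (∑ j ∈ range (n+1), (n.choose (j+1) : ℂ)
            * (iteratedDeriv (j+1) f x * iteratedDeriv (n - j) g x))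
          + iteratedDeriv 0 f x * iteratedDeriv (n+1) g x := by
      have e1 : ∀ k ∈ range (n+1), (n.choose k : ℂ) * (iteratedDeriv k f x * iteratedDeriv (n - k + 1) g x)
          = (n.choose k : ℂ) * (iteratedDeriv k f x * iteratedDeriv (n + 1 - k) g x) := by
        intro k hk
        have hk' := mem_range.mp hk
        have e : n - k + 1 = n + 1 - k := by omega
        rw [e]
      rw [Finset.sum_congr rfl e1]
      have e2 : ∑ k ∈ range (n+2), (n.choose k : ℂ) * (iteratedDeriv k f x * iteratedDeriv (n + 1 - k) g x)
          = ∑ k ∈ range (n+1), (n.choose k : ℂ) * (iteratedDeriv k f x * iteratedDeriv (n + 1 - k) g x) := by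
        rw [Finset.sum_range_succ, Nat.choose_succ_self]
        push_cast
        ring
      rw [← e2, Finset.sum_range_succ']
      simp [Nat.succ_sub_succ]
    rw [eL]
    ring


/-- Taylor series of `h` at `a`. -/
noncomputable def Tay (h : ℂ → ℂ) (a : ℂ) : PowerSeries ℂ :=
  PowerSeries.mk fun n => iteratedDeriv n h a / (n.factorial : ℂ)

lemma coeff_Tay (h : ℂ → ℂ) (a : ℂ) (n : ℕ) :
    (coeff n) (Tay h a) = iteratedDeriv n h a / (n.factorial : ℂ) := coeff_mk _ _

lemma iteratedDeriv_const_fun : ∀ n, n ≠ 0 → ∀ (c x : ℂ), iteratedDeriv n (fun _ : ℂ => c) x = 0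
  | 0, h => absurd rfl h
  | (n+1), _ => by
    intro c x
    rw [iteratedDeriv_succ']
    have e : deriv (fun _ : ℂ => c) = fun _ : ℂ => (0:ℂ) := by funext y; simp
    rw [e]
    cases n with
    | zero => simp
    | succ k => exact iteratedDeriv_const_fun (k+1) (by omega) 0 x

lemma iteratedDeriv_eq_Tay (h : ℂ → ℂ) (a : ℂ) (n : ℕ) :
    iteratedDeriv n h a = (n.factorial : ℂ) * coeff n (Tay h a) := by
  have hne : ((n.factorial : ℂ)) ≠ 0 := Nat.cast_ne_zero.mpr n.factorial_ne_zero
  rw [coeff_Tay]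
  field_simp

/-- Taylor coefficients of powers of an entire function. -/
lemma taylor_pow (h : ℂ → ℂ) (hh : Differentiable ℂ h) (a : ℂ) (j : ℕ) (n : ℕ) :
    iteratedDeriv n (fun z => h z ^ j) a = (n.factorial : ℂ) * coeff n ((Tay h a) ^ j) := by
  induction j generalizing n with
  | zero =>
    simp only [pow_zero]
    rcases Nat.eq_zero_or_pos n with rfl | hn
    · simp [iteratedDeriv_zero]
    · have e1 : iteratedDeriv n (fun _ : ℂ => (1:ℂ)) a = 0 := by
        exact iteratedDeriv_const_fun n (by omega) 1 a
      have e2 : (coeff n) (1 : PowerSeries ℂ) = 0 := by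
        rw [coeff_one, if_neg (by omega)]
      rw [e1, e2, mul_zero]
  | succ j ih =>
    have hfj : Differentiable ℂ (fun z => h z ^ j) := fun z => (hh z).pow j
    have e0 : (fun z : ℂ => h z ^ (j+1)) = (fun z => h z ^ j) * h := by
      funext z; simp [pow_succ]
    rw [e0, iteratedDeriv_mul' hfj hh n a]
    rw [pow_succ, PowerSeries.coeff_mul, Finset.Nat.sum_antidiagonal_eq_sum_range_succ_mk,
      Finset.mul_sum]
    apply Finset.sum_congr rfl
    intro k hk
    have hk' : k ≤ n := by have := mem_range.mp hk; omega
    rw [ih k, iteratedDeriv_eq_Tay h a (n - k)]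
    have hfact : ((n.factorial : ℂ)) = (n.choose k : ℂ) * (k.factorial : ℂ) * ((n-k).factorial : ℂ) := by
      rw [← Nat.cast_mul, ← Nat.cast_mul, Nat.choose_mul_factorial_mul_factorial hk']
    rw [hfact]
    ring




lemma coeff_pow_eq_zero {A : PowerSeries ℂ} (h0 : constantCoeff A = 0) :
    ∀ p n, n < p → coeff n (A ^ p) = 0 := by
  intro p
  induction p with
  | zero => intro n hn; omega
  | succ p ih =>
    intro n hn
    rw [pow_succ, PowerSeries.coeff_mul]
    apply Finset.sum_eq_zero
    intro ij hij
    have hij' := Finset.HasAntidiagonal.mem_antidiagonal.mp hij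
    rcases Nat.eq_zero_or_pos ij.2 with h2 | h2
    · have : coeff ij.2 A = 0 := by
        rw [h2]; simpa [PowerSeries.coeff_zero_eq_constantCoeff] using h0
      rw [this, mul_zero]
    · have : ij.1 < p := by omega
      rw [ih ij.1 this, zero_mul]

lemma work (A : PowerSeries ℂ) (p n : ℕ) :
    ((n+1 : ℕ) : ℂ) * coeff (n+1) (A ^ (p+1))
      = ((p+1 : ℕ) : ℂ) * ∑ s ∈ range (n+1),
          coeff (s+1) A * ((s+1 : ℕ) : ℂ) * coeff (n-s) (A ^ p) := by
  have d1 : d⁄dX ℂ (A ^ (p+1)) = (p+1) • ((A ^ p) * d⁄dX ℂ A) := by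
    rw [Derivation.leibniz_pow]
    simp [smul_eq_mul]
  have lhs : coeff n (d⁄dX ℂ (A ^ (p+1))) = coeff (n+1) (A ^ (p+1)) * (n+1 : ℂ) := by
    rw [PowerSeries.coeff_derivative]
  have rhs : coeff n ((p+1) • ((A ^ p) * d⁄dX ℂ A))
      = ((p+1 : ℕ) : ℂ) * ∑ s ∈ range (n+1),
          coeff (s+1) A * ((s+1 : ℕ) : ℂ) * coeff (n-s) (A ^ p) := by
    rw [map_nsmul, nsmul_eq_mul]
    congr 1
    rw [mul_comm (A ^ p), PowerSeries.coeff_mul,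
      Finset.Nat.sum_antidiagonal_eq_sum_range_succ_mk]
    apply Finset.sum_congr rfl
    intro s _
    rw [PowerSeries.coeff_derivative]
    push_cast
    ring
  calc ((n+1 : ℕ) : ℂ) * coeff (n+1) (A ^ (p+1))
      = coeff n (d⁄dX ℂ (A ^ (p+1))) := by rw [lhs]; push_cast; ring
    _ = _ := by rw [d1, rhs]

/-- Lagrange coefficients. -/
noncomputable def lagv (H : PowerSeries ℂ) : ℕ → ℂ :=
  fun k => if k = 0 then 0 else coeff (k-1) (H ^ k) / (k : ℂ)

noncomputable def lagV (H : PowerSeries ℂ) : PowerSeries ℂ := PowerSeries.mk (lagv H)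

lemma coeff_lagV (H : PowerSeries ℂ) (k : ℕ) : coeff k (lagV H) = lagv H k :=
  PowerSeries.coeff_mk _ _

lemma constantCoeff_lagV (H : PowerSeries ℂ) : constantCoeff (lagV H) = 0 := by
  rw [← PowerSeries.coeff_zero_eq_constantCoeff, coeff_lagV, lagv]
  simp

lemma coeff_lagV_pow_zero (H : PowerSeries ℂ) {n p : ℕ} (h : n < p) :
    coeff n ((lagV H) ^ p) = 0 :=
  coeff_pow_eq_zero (constantCoeff_lagV H) p n h

/-- Main induction: Lagrange inversion for powers plus the fixed-point equation. -/
theorem lag_main (H : PowerSeries ℂ) : ∀ k : ℕ,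
    (∀ j, 1 ≤ j → j ≤ k →
      (k : ℂ) * coeff k ((lagV H) ^ j) = (j : ℂ) * coeff (k - j) (H ^ k)) ∧
    (∑ p ∈ range k, coeff p H * coeff (k-1) ((lagV H) ^ p) = lagv H k) := by
  intro k
  induction k using Nat.strong_induction_on with
  | _ k IH =>
  constructor
  · -- power part P(k, j)
    intro j hj1 hjk
    rcases eq_or_lt_of_le hj1 with hj1' | hj2
    · -- j = 1 : definitional
      obtain rfl : j = 1 := hj1'.symm
      obtain ⟨k', rfl⟩ : ∃ k', k = k' + 1 := ⟨k - 1, by omega⟩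
      rw [pow_one, coeff_lagV, lagv, if_neg (by omega),
        show k' + 1 - 1 = k' from by omega]
      have hne : ((k' + 1 : ℕ) : ℂ) ≠ 0 := Nat.cast_ne_zero.mpr (by omega)
      push_cast at hne ⊢
      field_simp
    · -- j ≥ 2
      obtain ⟨i, rfl⟩ : ∃ i, j = i + 2 := ⟨j - 2, by omega⟩
      obtain ⟨d, rfl⟩ : ∃ d, k = i + d + 2 := ⟨k - (i+2), by omega⟩
      set V := lagV H with hVdef
      rw [show i + d + 2 - (i + 2) = d from by omega]
      -- chain of reductions for S := coeff (i+d+2) (V^(i+2))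
      have step1 : coeff (i+d+2) (V ^ (i+2))
          = ∑ s ∈ range (i+d+3), coeff s V * coeff (i+d+2-s) (V ^ (i+1)) := by
        rw [show V ^ (i+2) = V * V ^ (i+1) from by ring, PowerSeries.coeff_mul,
          Finset.Nat.sum_antidiagonal_eq_sum_range_succ_mk]
      have step2 : coeff (i+d+2) (V ^ (i+2))
          = ∑ s ∈ range (i+d+1), coeff (s+1) V * coeff (i+d+1-s) (V ^ (i+1)) := by
        rw [step1, show i+d+3 = (i+d+2)+1 from by omega, Finset.sum_range_succ']
        have hz : coeff 0 V * coeff (i+d+2-0) (V ^ (i+1)) = 0 := by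
          rw [show coeff 0 V = constantCoeff V from by
              rw [PowerSeries.coeff_zero_eq_constantCoeff],
            constantCoeff_lagV H, zero_mul]
        rw [hz, add_zero, Finset.sum_range_succ]
        have htop : coeff (i+d+1+1) V * coeff (i+d+2-(i+d+1+1)) (V ^ (i+1)) = 0 := by
          rw [show i+d+2-(i+d+1+1) = 0 from by omega,
            coeff_lagV_pow_zero H (show 0 < i+1 from by omega), mul_zero]
        rw [htop, add_zero]
        apply Finset.sum_congr rfl
        intro s _
        rw [show i+d+2-(s+1) = i+d+1-s from by omega]
      have step3 : coeff (i+d+2) (V ^ (i+2))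
          = ∑ s ∈ range (i+d+1),
              (∑ p ∈ range (i+d+2), coeff p H * coeff s (V ^ p))
                * coeff (i+d+1-s) (V ^ (i+1)) := by
        rw [step2]
        apply Finset.sum_congr rfl
        intro s hs
        have hs' : s < i+d+1 := mem_range.mp hs
        congr 1
        have fp := (IH (s+1) (by omega)).2
        rw [coeff_lagV, ← fp, show s+1-1 = s from by omega]
        apply Finset.sum_subset (Finset.range_subset_range.mpr (by omega))
        intro p hp hnp
        have hsp : s < p := by
          have h2 : ¬ p < s + 1 := fun hc => hnp (mem_range.mpr hc)
          omega
        rw [coeff_lagV_pow_zero H hsp, mul_zero]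
      have step4 : coeff (i+d+2) (V ^ (i+2))
          = ∑ p ∈ range (i+d+2), coeff p H * coeff (i+d+1) (V ^ (p+(i+1))) := by
        rw [step3]
        have ext : ∑ s ∈ range (i+d+2),
              (∑ p ∈ range (i+d+2), coeff p H * coeff s (V ^ p))
                * coeff (i+d+1-s) (V ^ (i+1))
            = ∑ s ∈ range (i+d+1),
              (∑ p ∈ range (i+d+2), coeff p H * coeff s (V ^ p))
                * coeff (i+d+1-s) (V ^ (i+1)) := by
          rw [Finset.sum_range_succ, show i+d+1-(i+d+1) = 0 from by omega,
            coeff_lagV_pow_zero H (show 0 < i+1 from by omega), mul_zero, add_zero]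
        rw [← ext]
        simp only [Finset.sum_mul]
        rw [Finset.sum_comm]
        apply Finset.sum_congr rfl
        intro p _
        conv_rhs => rw [pow_add, PowerSeries.coeff_mul,
          Finset.Nat.sum_antidiagonal_eq_sum_range_succ_mk, Finset.mul_sum]
        apply Finset.sum_congr (by rw [show i+d+1+1 = i+d+2 from by omega])
        intro s _
        ring
      have hS : ((i+d+1 : ℕ) : ℂ) * coeff (i+d+2) (V ^ (i+2))
          = ∑ p ∈ range (d+1), coeff p H * ((p+(i+1) : ℕ) : ℂ)
              * coeff (d-p) (H ^ (i+d+1)) := by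
        rw [step4, Finset.mul_sum]
        rw [show (∑ p ∈ range (i+d+2), ((i+d+1 : ℕ) : ℂ) *
              (coeff p H * coeff (i+d+1) (V ^ (p+(i+1)))))
            = ∑ p ∈ range (d+1), ((i+d+1 : ℕ) : ℂ) *
              (coeff p H * coeff (i+d+1) (V ^ (p+(i+1)))) from
          (Finset.sum_subset (Finset.range_subset_range.mpr (by omega)) (fun p hp hnp => by
            have hdp : i+d+1 < p+(i+1) := by
              have h2 : ¬ p < d + 1 := fun hc => hnp (mem_range.mpr hc)
              omega
            rw [coeff_lagV_pow_zero H hdp, mul_zero, mul_zero])).symm]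
        apply Finset.sum_congr rfl
        intro p hp
        have hp' : p < d + 1 := mem_range.mp hp
        have ihp := (IH (i+d+1) (by omega)).1 (p+(i+1)) (by omega) (by omega)
        rw [show i+d+1-(p+(i+1)) = d - p from by omega] at ihp
        calc ((i+d+1 : ℕ) : ℂ) * (coeff p H * coeff (i+d+1) (V ^ (p+(i+1))))
            = coeff p H * (((i+d+1 : ℕ) : ℂ) * coeff (i+d+1) (V ^ (p+(i+1)))) := by ring
          _ = coeff p H * (((p+(i+1) : ℕ) : ℂ) * coeff (d-p) (H ^ (i+d+1))) := by rw [ihp]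
          _ = _ := by ring
      have hE2 : ∑ p ∈ range (d+1), coeff p H * coeff (d-p) (H ^ (i+d+1))
          = coeff d (H ^ (i+d+2)) := by
        rw [show H ^ (i+d+2) = H * H ^ (i+d+1) from by ring, PowerSeries.coeff_mul,
          Finset.Nat.sum_antidiagonal_eq_sum_range_succ_mk]
      have hT : ∑ p ∈ range (d+1), coeff p H * ((p+(i+1) : ℕ) : ℂ)
              * coeff (d-p) (H ^ (i+d+1))
          = (∑ p ∈ range (d+1), coeff p H * ((p : ℕ) : ℂ) * coeff (d-p) (H ^ (i+d+1)))
            + ((i : ℂ) + 1) * ∑ p ∈ range (d+1), coeff p H * coeff (d-p) (H ^ (i+d+1)) := by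
        rw [Finset.mul_sum, ← Finset.sum_add_distrib]
        apply Finset.sum_congr rfl
        intro p _
        push_cast
        ring
      have hE1 : ((i+d+2 : ℕ) : ℂ) *
          (∑ p ∈ range (d+1), coeff p H * ((p : ℕ) : ℂ) * coeff (d-p) (H ^ (i+d+1)))
          = ((d : ℕ) : ℂ) * coeff d (H ^ (i+d+2)) := by
        rcases Nat.eq_zero_or_pos d with rfl | hd
        · simp
        · obtain ⟨d', rfl⟩ : ∃ d', d = d' + 1 := ⟨d - 1, by omega⟩
          rw [Finset.sum_range_succ']
          simp only [Nat.cast_zero, mul_zero, zero_mul, add_zero]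
          rw [show i+(d'+1)+1 = i+d'+2 from by omega, show i+(d'+1)+2 = i+d'+3 from by omega]
          have e1 : ∀ s ∈ range (d'+1),
              coeff (s+1) H * ((s+1 : ℕ) : ℂ) * coeff (d'+1-(s+1)) (H ^ (i+d'+2))
              = coeff (s+1) H * ((s+1 : ℕ) : ℂ) * coeff (d'-s) (H ^ (i+d'+2)) := by
            intro s _
            rw [show d'+1-(s+1) = d'-s from by omega]
          rw [Finset.sum_congr rfl e1]
          have hw := work H (i+d'+2) d'
          rw [show i+d'+2+1 = i+d'+3 from by omega] at hw
          linear_combination (norm := (push_cast; ring1)) -hw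
      -- assemble
      have hne : ((i+d+1 : ℕ) : ℂ) ≠ 0 := Nat.cast_ne_zero.mpr (by omega)
      have key : ((i+d+1 : ℕ) : ℂ) * (((i+d+2 : ℕ) : ℂ) * coeff (i+d+2) (V ^ (i+2)))
          = ((i+d+1 : ℕ) : ℂ) * (((i+2 : ℕ) : ℂ) * coeff d (H ^ (i+d+2))) := by
        linear_combination (norm := (push_cast; ring1))
          (((i+d+2 : ℕ) : ℂ)) * hS + (((i+d+2 : ℕ) : ℂ)) * hT + hE1
            + (((i : ℂ)+1) * ((i+d+2 : ℕ) : ℂ)) * hE2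
      have goal2 := mul_left_cancel₀ hne key
      linear_combination (norm := (push_cast; ring1)) goal2
  · -- fixed point part
    rcases Nat.eq_zero_or_pos k with rfl | hk
    · simp [lagv]
    rcases eq_or_lt_of_le (show 1 ≤ k from hk) with hk1 | hk2
    · -- k = 1
      obtain rfl : k = 1 := hk1.symm
      rw [lagv, if_neg (by omega)]
      simp [pow_one]
    · -- k = r + 2
      obtain ⟨r, rfl⟩ : ∃ r, k = r + 2 := ⟨k - 2, by omega⟩
      set V := lagV H with hVdef
      rw [Finset.sum_range_succ', lagv, if_neg (by omega),
        show r + 2 - 1 = r + 1 from by omega]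
      have hz : coeff 0 H * coeff (r+1) (V ^ 0) = 0 := by
        rw [pow_zero, PowerSeries.coeff_one,
          if_neg (by omega), mul_zero]
      rw [hz, add_zero]
      have hterm : ∀ p ∈ range (r+1),
          ((r+1 : ℕ) : ℂ) * (coeff (p+1) H * coeff (r+1) (V ^ (p+1)))
          = coeff (p+1) H * ((p+1 : ℕ) : ℂ) * coeff (r-p) (H ^ (r+1)) := by
        intro p hp
        have hp' : p < r + 1 := mem_range.mp hp
        have ihp := (IH (r+1) (by omega)).1 (p+1) (by omega) (by omega)
        rw [show r+1-(p+1) = r-p from by omega] at ihp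
        calc ((r+1 : ℕ) : ℂ) * (coeff (p+1) H * coeff (r+1) (V ^ (p+1)))
            = coeff (p+1) H * (((r+1 : ℕ) : ℂ) * coeff (r+1) (V ^ (p+1))) := by ring
          _ = coeff (p+1) H * (((p+1 : ℕ) : ℂ) * coeff (r-p) (H ^ (r+1))) := by rw [ihp]
          _ = _ := by ring
      have h1 : ((r+1 : ℕ) : ℂ) * ∑ p ∈ range (r+1),
            coeff (p+1) H * coeff (r+1) (V ^ (p+1))
          = ∑ p ∈ range (r+1), coeff (p+1) H * ((p+1 : ℕ) : ℂ) * coeff (r-p) (H ^ (r+1)) := by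
        rw [Finset.mul_sum]
        exact Finset.sum_congr rfl hterm
      have hw := work H (r+1) r
      have hne1 : ((r+1 : ℕ) : ℂ) ≠ 0 := Nat.cast_ne_zero.mpr (by omega)
      have hne2 : ((r+2 : ℕ) : ℂ) ≠ 0 := Nat.cast_ne_zero.mpr (by omega)
      rw [show r+1+1 = r+2 from by omega] at hw
      have key : ((r+1 : ℕ) : ℂ) * ((∑ p ∈ range (r+1),
            coeff (p+1) H * coeff (r+1) (V ^ (p+1))) * ((r+2 : ℕ) : ℂ))
          = ((r+1 : ℕ) : ℂ) * coeff (r+1) (H ^ (r+2)) := by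
        linear_combination (norm := (push_cast; ring1)) (((r+2 : ℕ) : ℂ)) * h1 - hw
      have goal2 := mul_left_cancel₀ hne1 key
      rw [eq_div_iff (by push_cast at hne2 ⊢; exact hne2)]
      linear_combination (norm := (push_cast; ring1)) goal2




variable {ι : Type*} [DecidableEq ι]

open Classical in
/-- The finset of all partitions of `s` into nonempty blocks. -/
noncomputable def parts (s : Finset ι) : Finset (Finset (Finset ι)) :=
  (s.powerset.powerset).filter (fun Θ =>
    (∀ θ ∈ Θ, θ.Nonempty) ∧ (Θ : Set (Finset ι)).PairwiseDisjoint id ∧ Θ.sup id = s)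

lemma mem_parts {s : Finset ι} {Θ : Finset (Finset ι)} :
    Θ ∈ parts s ↔
      (∀ θ ∈ Θ, θ.Nonempty) ∧ (Θ : Set (Finset ι)).PairwiseDisjoint id ∧ Θ.sup id = s := by
  classical
  rw [parts, Finset.mem_filter]
  constructor
  · exact fun h => by convert h.2
  · intro h
    refine ⟨?_, by convert h⟩
    rw [Finset.mem_powerset]
    intro θ hθ
    rw [Finset.mem_powerset]
    have : id θ ≤ Θ.sup id := Finset.le_sup hθ
    rw [h.2.2] at this
    exact this

lemma parts_empty : parts (∅ : Finset ι) = {∅} := by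
  ext Θ
  rw [mem_parts, Finset.mem_singleton]
  constructor
  · rintro ⟨h1, _, h3⟩
    rw [Finset.eq_empty_iff_forall_notMem]
    intro θ hθ
    have h4 : id θ ≤ Θ.sup id := Finset.le_sup hθ
    rw [h3] at h4
    obtain ⟨z, hz⟩ := h1 θ hθ
    exact absurd (h4 hz) (Finset.notMem_empty z)
  · rintro rfl
    refine ⟨by simp, by simp, by simp⟩

/-- Decomposition of partitions of `s` according to the block containing a fixed `e ∈ s`. -/
lemma parts_decompose (s : Finset ι) (e : ι) (he : e ∈ s) (F : Finset (Finset ι) → ℂ) :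
    ∑ Θ ∈ parts s, F Θ
      = ∑ b ∈ (s.erase e).powerset,
          ∑ Θ' ∈ parts ((s.erase e) \ b), F (insert (insert e b) Θ') := by
  rw [Finset.sum_sigma']
  -- unique block containing e
  have hex : ∀ Θ ∈ parts s, ∃! θ, θ ∈ Θ ∧ e ∈ θ := by
    intro Θ hΘ
    obtain ⟨h1, h2, h3⟩ := mem_parts.mp hΘ
    have : e ∈ Θ.sup id := h3 ▸ he
    obtain ⟨θ, hθ, heθ⟩ := Finset.mem_sup.mp this
    refine ⟨θ, ⟨hθ, heθ⟩, ?_⟩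
    rintro θ' ⟨hθ', heθ'⟩
    by_contra hne
    exact Finset.disjoint_left.mp (h2 hθ' hθ hne) heθ' heθ
  -- facts about blocks
  have hblocksub : ∀ Θ ∈ parts s, ∀ θ ∈ Θ, θ ⊆ s := by
    intro Θ hΘ θ hθ
    obtain ⟨_, _, h3⟩ := mem_parts.mp hΘ
    have : id θ ≤ Θ.sup id := Finset.le_sup hθ
    rw [h3] at this; exact this
  have hins : ∀ (b : Finset ι) (Θ' : Finset (Finset ι)), b ⊆ s.erase e →
      Θ' ∈ parts ((s.erase e) \ b) → insert (insert e b) Θ' ∈ parts s := by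
    intro b Θ' hb hΘ'
    obtain ⟨h1, h2, h3⟩ := mem_parts.mp hΘ'
    have hblock' : ∀ θ ∈ Θ', θ ⊆ (s.erase e) \ b := by
      intro θ hθ
      have : id θ ≤ Θ'.sup id := Finset.le_sup hθ
      rw [h3] at this; exact this
    have heb : e ∉ b := fun h => (Finset.mem_erase.mp (hb h)).1 rfl
    have hAdisj : ∀ θ ∈ Θ', Disjoint (insert e b) θ := by
      intro θ hθ
      rw [Finset.disjoint_left]
      intro z hz hzθ
      have hzt := hblock' θ hθ hzθ
      rw [Finset.mem_sdiff, Finset.mem_erase] at hzt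
      rcases Finset.mem_insert.mp hz with rfl | hzb
      · exact hzt.1.1 rfl
      · exact hzt.2 hzb
    rw [mem_parts]
    refine ⟨?_, ?_, ?_⟩
    · intro θ hθ
      rcases Finset.mem_insert.mp hθ with rfl | hθ'
      · exact Finset.insert_nonempty e b
      · exact h1 θ hθ'
    · rw [Finset.coe_insert]
      exact h2.insert (fun θ hθ _ => hAdisj θ hθ)
    · rw [Finset.sup_insert, h3]
      ext z
      simp only [Finset.mem_union, Finset.mem_insert, Finset.mem_sdiff, Finset.mem_erase,
        id_eq, Finset.sup_eq_union]
      constructor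
      · rintro ((rfl | hzb) | ⟨⟨_, hzs⟩, _⟩)
        · exact he
        · exact (Finset.mem_erase.mp (hb hzb)).2
        · exact hzs
      · intro hzs
        by_cases hze : z = e
        · exact Or.inl (Or.inl hze)
        · by_cases hzb : z ∈ b
          · exact Or.inl (Or.inr hzb)
          · exact Or.inr ⟨⟨hze, hzs⟩, hzb⟩
  refine Finset.sum_bij'
    (fun Θ hΘ =>
      (⟨(Finset.choose (fun θ => e ∈ θ) Θ (hex Θ hΘ)).erase e,
        Θ.erase (Finset.choose (fun θ => e ∈ θ) Θ (hex Θ hΘ))⟩ :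
        Σ _ : Finset ι, Finset (Finset ι)))
    (fun p _ => insert (insert e p.1) p.2) ?_ ?_ ?_ ?_ ?_
  · -- hi : lands in the sigma set
    intro Θ hΘ
    set A := Finset.choose (fun θ => e ∈ θ) Θ (hex Θ hΘ) with hA
    have hAmem : A ∈ Θ := Finset.choose_mem _ _ _
    have heA : e ∈ A := Finset.choose_property (fun θ => e ∈ θ) Θ (hex Θ hΘ)
    obtain ⟨h1, h2, h3⟩ := mem_parts.mp hΘ
    rw [Finset.mem_sigma]
    constructor
    · rw [Finset.mem_powerset]
      exact Finset.erase_subset_erase e (hblocksub Θ hΘ A hAmem)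
    · rw [mem_parts]
      refine ⟨fun θ hθ => h1 θ (Finset.mem_of_mem_erase hθ),
        h2.subset (Finset.coe_subset.mpr (Finset.erase_subset _ _)), ?_⟩
      have hset : (s.erase e) \ (A.erase e) = s \ A := by
        ext z
        simp only [Finset.mem_sdiff, Finset.mem_erase]
        constructor
        · rintro ⟨⟨hz1, hz2⟩, hz3⟩
          exact ⟨hz2, fun hzA => hz3 ⟨hz1, hzA⟩⟩
        · rintro ⟨hz1, hz2⟩
          have hzne : z ≠ e := fun h => hz2 (h ▸ heA)
          exact ⟨⟨hzne, hz1⟩, fun hc => hz2 hc.2⟩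
      rw [hset]
      apply le_antisymm
      · apply Finset.sup_le
        intro θ hθ
        obtain ⟨hne, hθΘ⟩ := Finset.mem_erase.mp hθ
        show θ ⊆ s \ A
        rw [Finset.subset_sdiff]
        exact ⟨hblocksub Θ hΘ θ hθΘ, h2 hθΘ hAmem hne⟩
      · intro z hz
        obtain ⟨hzs, hzA⟩ := Finset.mem_sdiff.mp hz
        have : z ∈ Θ.sup id := h3 ▸ hzs
        obtain ⟨θ, hθ, hzθ⟩ := Finset.mem_sup.mp this
        have hne : θ ≠ A := fun h => hzA (h ▸ hzθ)
        exact Finset.mem_sup.mpr ⟨θ, Finset.mem_erase.mpr ⟨hne, hθ⟩, hzθ⟩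
  · -- hj : insert map lands in parts s
    rintro ⟨b, Θ'⟩ hp
    rw [Finset.mem_sigma] at hp
    exact hins b Θ' (Finset.mem_powerset.mp hp.1) hp.2
  · -- left inverse
    intro Θ hΘ
    have hAmem : Finset.choose (fun θ => e ∈ θ) Θ (hex Θ hΘ) ∈ Θ := Finset.choose_mem _ _ _
    have heA : e ∈ Finset.choose (fun θ => e ∈ θ) Θ (hex Θ hΘ) :=
      Finset.choose_property (fun θ => e ∈ θ) Θ (hex Θ hΘ)
    dsimp only
    rw [Finset.insert_erase heA, Finset.insert_erase hAmem]
  · -- right inverse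
    rintro ⟨b, Θ'⟩ hp
    rw [Finset.mem_sigma] at hp
    obtain ⟨hb, hΘ'⟩ := hp
    rw [Finset.mem_powerset] at hb
    obtain ⟨h1, h2, h3⟩ := mem_parts.mp hΘ'
    have hblock' : ∀ θ ∈ Θ', θ ⊆ (s.erase e) \ b := by
      intro θ hθ
      have : id θ ≤ Θ'.sup id := Finset.le_sup hθ
      rw [h3] at this; exact this
    have heb : e ∉ b := fun h => (Finset.mem_erase.mp (hb h)).1 rfl
    have hAnot : insert e b ∉ Θ' := by
      intro hc
      have := hblock' _ hc (Finset.mem_insert_self e b)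
      rw [Finset.mem_sdiff, Finset.mem_erase] at this
      exact this.1.1 rfl
    have hkey : ∀ (hmem : insert (insert e b) Θ' ∈ parts s),
        Finset.choose (fun θ => e ∈ θ) (insert (insert e b) Θ') (hex _ hmem)
          = insert e b := by
      intro hmem
      apply (hex _ hmem).unique
        ⟨Finset.choose_mem (fun θ => e ∈ θ) (insert (insert e b) Θ') (hex _ hmem),
          Finset.choose_property (fun θ => e ∈ θ) (insert (insert e b) Θ') (hex _ hmem)⟩
      exact ⟨Finset.mem_insert_self _ _, Finset.mem_insert_self e b⟩
    dsimp only
    rw [hkey, Finset.erase_insert heb, Finset.erase_insert hAnot]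
    exact hins b Θ' hb hΘ'
  · -- summand equality
    intro Θ hΘ
    have hAmem : Finset.choose (fun θ => e ∈ θ) Θ (hex Θ hΘ) ∈ Θ := Finset.choose_mem _ _ _
    have heA : e ∈ Finset.choose (fun θ => e ∈ θ) Θ (hex Θ hΘ) :=
      Finset.choose_property (fun θ => e ∈ θ) Θ (hex Θ hΘ)
    dsimp only
    rw [Finset.insert_erase heA, Finset.insert_erase hAmem]


lemma sum_powerset_card (t : Finset ι) (φ : ℕ → ℂ) :
    ∑ b ∈ t.powerset, φ b.card
      = ∑ j ∈ range (t.card + 1), (t.card.choose j : ℂ) * φ j := by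
  rw [Finset.powerset_card_biUnion, Finset.sum_biUnion]
  · apply Finset.sum_congr rfl
    intro j _
    have hc : ∀ b ∈ Finset.powersetCard j t, φ b.card = φ j := fun b hb => by
      rw [(Finset.mem_powersetCard.mp hb).2]
    rw [Finset.sum_congr rfl hc, Finset.sum_const, Finset.card_powersetCard, nsmul_eq_mul]
  · intro a _ b _ hab
    simp only [Function.onFun]
    rw [Finset.disjoint_left]
    intro x hxa hxb
    exact hab ((Finset.mem_powersetCard.mp hxa).2.symm.trans (Finset.mem_powersetCard.mp hxb).2)

lemma series_step (W : PowerSeries ℂ) (h0 : constantCoeff W = 0) (u : ℕ → ℂ) (n : ℕ) :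
    ((n+1:ℕ):ℂ) * ∑ p ∈ range (n+2), u p * coeff (n+1) (W^p)
      = ∑ j ∈ range (n+1), (((j+1:ℕ):ℂ) * coeff (j+1) W) *
          (∑ q ∈ range (n-j+1), ((q+1:ℕ):ℂ) * u (q+1) * coeff (n-j) (W^q)) := by
  rw [Finset.mul_sum, Finset.sum_range_succ']
  have hz : ((n+1:ℕ):ℂ) * (u 0 * coeff (n+1) (W^0)) = 0 := by
    rw [pow_zero, PowerSeries.coeff_one, if_neg (by omega)]
    ring
  rw [hz, add_zero]
  have hterm : ∀ p ∈ range (n+1),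
      ((n+1:ℕ):ℂ) * (u (p+1) * coeff (n+1) (W^(p+1)))
      = ∑ j ∈ range (n+1), (((j+1:ℕ):ℂ) * coeff (j+1) W) *
          (((p+1:ℕ):ℂ) * u (p+1) * coeff (n-j) (W^p)) := by
    intro p _
    have hw := work W p n
    calc ((n+1:ℕ):ℂ) * (u (p+1) * coeff (n+1) (W^(p+1)))
        = u (p+1) * (((n+1:ℕ):ℂ) * coeff (n+1) (W^(p+1))) := by ring
      _ = u (p+1) * (((p+1:ℕ):ℂ) * ∑ s ∈ range (n+1),
            coeff (s+1) W * ((s+1:ℕ):ℂ) * coeff (n-s) (W^p)) := by rw [hw]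
      _ = _ := by
          rw [Finset.mul_sum, Finset.mul_sum]
          apply Finset.sum_congr rfl
          intro j _
          ring
  rw [Finset.sum_congr rfl hterm, Finset.sum_comm]
  apply Finset.sum_congr rfl
  intro j hj
  rw [← Finset.mul_sum]
  congr 1
  symm
  apply Finset.sum_subset (Finset.range_subset_range.mpr (by omega))
  intro p hp hnp
  have hlt : n - j < p := by
    have h1 := mem_range.mp hp
    have h2 : ¬ p < n - j + 1 := fun hc => hnp (mem_range.mpr hc)
    omega
  rw [coeff_pow_eq_zero h0 p (n-j) hlt]
  ring




lemma insert_not_mem_of_parts {s : Finset ι} {e : ι} {b : Finset ι} (hb : b ⊆ s.erase e)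
    {Θ' : Finset (Finset ι)} (hΘ' : Θ' ∈ parts ((s.erase e) \ b)) :
    insert e b ∉ Θ' := by
  intro hc
  obtain ⟨h1, h2, h3⟩ := mem_parts.mp hΘ'
  have hsub : insert e b ⊆ (s.erase e) \ b := by
    have : id (insert e b) ≤ Θ'.sup id := Finset.le_sup hc
    rw [h3] at this; exact this
  have := hsub (Finset.mem_insert_self e b)
  rw [Finset.mem_sdiff, Finset.mem_erase] at this
  exact this.1.1 rfl

/-- Combinatorial exponential formula: the partition sum equals a coefficient of a
formal composition. -/
theorem comb (W : PowerSeries ℂ) (h0 : constantCoeff W = 0) :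
    ∀ n : ℕ, ∀ (u : ℕ → ℂ) (s : Finset ι), s.card = n →
    ∑ Θ ∈ parts s, ((Θ.card.factorial : ℂ) * u Θ.card) *
        ∏ θ ∈ Θ, ((θ.card.factorial : ℂ) * coeff θ.card W)
      = (n.factorial : ℂ) * ∑ p ∈ range (n+1), u p * coeff n (W ^ p) := by
  intro n
  induction n using Nat.strong_induction_on with
  | _ n IH =>
  intro u s hcard
  rcases Nat.eq_zero_or_pos n with rfl | hn
  · obtain rfl := Finset.card_eq_zero.mp hcard
    rw [parts_empty, Finset.sum_singleton]
    simp
  · obtain ⟨m, rfl⟩ : ∃ m, n = m + 1 := ⟨n-1, by omega⟩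
    obtain ⟨e, he⟩ := Finset.card_pos.mp (by omega : 0 < s.card)
    rw [parts_decompose s e he]
    have hcard_erase : (s.erase e).card = m := by
      rw [Finset.card_erase_of_mem he, hcard]
      omega
    set φ : ℕ → ℂ := fun j => (((j+1).factorial : ℂ) * coeff (j+1) W) *
        (((m-j).factorial : ℂ) *
          ∑ q ∈ range ((m-j)+1), ((q+1:ℕ):ℂ) * u (q+1) * coeff (m-j) (W^q)) with hφ
    have hinner : ∀ b ∈ (s.erase e).powerset,
        (∑ Θ' ∈ parts ((s.erase e) \ b),
          ((((insert (insert e b) Θ').card).factorial : ℂ) * u (insert (insert e b) Θ').card) *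
            ∏ θ ∈ insert (insert e b) Θ', ((θ.card.factorial : ℂ) * coeff θ.card W))
        = φ b.card := by
      intro b hbp
      rw [Finset.mem_powerset] at hbp
      have heb : e ∉ b := fun h => (Finset.mem_erase.mp (hbp h)).1 rfl
      have hbcard : (insert e b).card = b.card + 1 := Finset.card_insert_of_notMem heb
      have hcard_sdiff : ((s.erase e) \ b).card = m - b.card := by
        rw [Finset.card_sdiff_of_subset hbp, hcard_erase]
      have hstep : ∀ Θ' ∈ parts ((s.erase e) \ b),
          ((((insert (insert e b) Θ').card).factorial : ℂ) * u (insert (insert e b) Θ').card) *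
            ∏ θ ∈ insert (insert e b) Θ', ((θ.card.factorial : ℂ) * coeff θ.card W)
          = (((b.card+1).factorial : ℂ) * coeff (b.card+1) W) *
              (((Θ'.card.factorial : ℂ) * (((Θ'.card+1:ℕ):ℂ) * u (Θ'.card+1))) *
                ∏ θ ∈ Θ', ((θ.card.factorial : ℂ) * coeff θ.card W)) := by
        intro Θ' hΘ'
        have hAnot : insert e b ∉ Θ' := insert_not_mem_of_parts hbp hΘ'
        rw [Finset.card_insert_of_notMem hAnot, Finset.prod_insert hAnot, hbcard,
          Nat.factorial_succ (Θ'.card)]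
        push_cast
        ring
      rw [Finset.sum_congr rfl hstep, ← Finset.mul_sum,
        IH (m - b.card) (by omega) (fun q => ((q+1:ℕ):ℂ) * u (q+1)) _ hcard_sdiff, hφ]
    rw [Finset.sum_congr rfl hinner, sum_powerset_card, hcard_erase]
    -- now the power series side
    have hps := series_step W h0 u m
    have hfac : (((m+1).factorial : ℕ) : ℂ) = ((m+1:ℕ):ℂ) * ((m.factorial : ℕ) : ℂ) := by
      rw [Nat.factorial_succ]; push_cast; ring
    calc ∑ j ∈ range (m+1), (m.choose j : ℂ) * φ j
        = ((m.factorial : ℕ) : ℂ) * ∑ j ∈ range (m+1),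
            (((j+1:ℕ):ℂ) * coeff (j+1) W) *
              (∑ q ∈ range ((m-j)+1), ((q+1:ℕ):ℂ) * u (q+1) * coeff (m-j) (W^q)) := by
          rw [Finset.mul_sum]
          apply Finset.sum_congr rfl
          intro j hj
          have hjm : j ≤ m := by have := mem_range.mp hj; omega
          have h1 := Nat.choose_mul_factorial_mul_factorial hjm
          have h1c : ((m.choose j : ℕ):ℂ) * ((j.factorial : ℕ):ℂ) * (((m-j).factorial : ℕ):ℂ)
              = ((m.factorial : ℕ):ℂ) := by exact_mod_cast congrArg (Nat.cast (R := ℂ)) h1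
          simp only [hφ]
          rw [Nat.factorial_succ j, ← h1c]
          push_cast
          ring
      _ = (((m+1).factorial : ℕ) : ℂ) * ∑ p ∈ range (m+1+1), u p * coeff (m+1) (W ^ p) := by
          rw [show m+1+1 = m+2 from by omega, ← hps, hfac]
          ring


end FdB12

open FdB12 Finset PowerSeries

open Classical in
/-- Faà di Bruno-type identity: for an entire function `h`, `m ≥ 1`
and `a ∈ ℂ`, summing over all partitions `Θ` of the `m`-element set `Fin m` into
nonempty blocks,
`Σ_Θ D^{|Θ|}h(a) · ∏_{θ ∈ Θ} D^{|θ|-1}[h^{|θ|}](a) = (1/(m+1)) · D^m[h^{m+1}](a)`. -/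
theorem faa_di_bruno_partition_identity
    (h : ℂ → ℂ) (hh : Differentiable ℂ h) (m : ℕ) (hm : 1 ≤ m) (a : ℂ) :
    ∑ Θ ∈ Finset.univ.filter (fun Θ : Finset (Finset (Fin m)) =>
        (∀ θ ∈ Θ, θ.Nonempty) ∧
        (Θ : Set (Finset (Fin m))).PairwiseDisjoint id ∧
        Θ.sup id = Finset.univ),
      iteratedDeriv Θ.card h a *
        ∏ θ ∈ Θ, iteratedDeriv (θ.card - 1) (fun k => (h k) ^ θ.card) a
    = (1 / ((m : ℂ) + 1)) * iteratedDeriv m (fun k => (h k) ^ (m + 1)) a := by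
  classical
  set H := Tay h a with hHdef
  have hset : Finset.univ.filter (fun Θ : Finset (Finset (Fin m)) =>
        (∀ θ ∈ Θ, θ.Nonempty) ∧
        (Θ : Set (Finset (Fin m))).PairwiseDisjoint id ∧
        Θ.sup id = Finset.univ) = parts (Finset.univ : Finset (Fin m)) := by
    rw [parts, Finset.powerset_univ, Finset.powerset_univ]
    convert rfl
  rw [hset]
  have hLHS : ∀ Θ ∈ parts (Finset.univ : Finset (Fin m)),
      iteratedDeriv Θ.card h a *
          ∏ θ ∈ Θ, iteratedDeriv (θ.card - 1) (fun k => (h k) ^ θ.card) a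
        = ((Θ.card.factorial : ℂ) * coeff Θ.card H) *
          ∏ θ ∈ Θ, ((θ.card.factorial : ℂ) * coeff θ.card (lagV H)) := by
    intro Θ hΘ
    obtain ⟨h1, -, -⟩ := mem_parts.mp hΘ
    congr 1
    · rw [iteratedDeriv_eq_Tay h a]
    · apply Finset.prod_congr rfl
      intro θ hθ
      obtain ⟨c, hc⟩ : ∃ c, θ.card = c + 1 :=
        ⟨θ.card - 1, by have := Finset.card_pos.mpr (h1 θ hθ); omega⟩
      rw [hc, show c + 1 - 1 = c from by omega, taylor_pow h hh a (c+1) c,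
        coeff_lagV, lagv, if_neg (by omega), show c + 1 - 1 = c from by omega,
        Nat.factorial_succ]
      have hne : ((c+1 : ℕ) : ℂ) ≠ 0 := Nat.cast_ne_zero.mpr (by omega)
      push_cast at hne ⊢
      field_simp
      ring
  rw [Finset.sum_congr rfl hLHS,
    comb (lagV H) (constantCoeff_lagV H) m (fun p => coeff p H)
      (Finset.univ : Finset (Fin m)) (by simp)]
  have hfp := (lag_main H (m+1)).2
  rw [show m + 1 - 1 = m from by omega] at hfp
  rw [hfp, lagv, if_neg (by omega), show m + 1 - 1 = m from by omega,
    taylor_pow h hh a (m+1) m]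
  have hne : ((m+1 : ℕ) : ℂ) ≠ 0 := Nat.cast_ne_zero.mpr (by omega)
  push_cast at hne ⊢
  field_simp
  rfl
end

section
/- For every m ∈ ℕ with m ≥ 1, Σ_{Θ} ∏_{θ ∈ Θ} |θ|^{|θ|−1} = (m+1)^{m−1}, where the sum runs over all partitions Θ of the set {1, …, m} into nonempty blocks and |θ| denotes the cardinality of a block θ. -/
open Finset

noncomputable def abelA (n : ℕ) (x y : ℚ) : ℚ :=
  ∑ k ∈ range (n+1), (n.choose k : ℚ) * (x * (x + k)^((k:ℤ)-1) * (y + n - k)^((n:ℤ)-(k:ℤ)))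

noncomputable def abelB (n : ℕ) (x y : ℚ) : ℚ :=
  ∑ k ∈ range (n+1), (n.choose k : ℚ) * (x * (x + k)^((k:ℤ)-1) * (y * (y + n - k)^((n:ℤ)-(k:ℤ)-1)))

lemma base_pos {x : ℚ} (hx : 0 < x) {n k : ℕ} (hk : k ≤ n) : 0 < x + n - k := by
  have : (k:ℚ) ≤ n := by exact_mod_cast hk
  linarith

lemma choose_split (n : ℕ) (t : ℕ → ℚ) :
    ∑ k ∈ range (n+2), ((n+1).choose k : ℚ) * t k
    = ∑ k ∈ range (n+1), (n.choose k : ℚ) * t k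
      + ∑ k ∈ range (n+1), (n.choose k : ℚ) * t (k+1) := by
  rw [Finset.sum_range_succ' (fun k => ((n+1).choose k : ℚ) * t k)]
  have h1 : ∀ k, (((n+1).choose (k+1) : ℕ) : ℚ) = (n.choose k : ℚ) + (n.choose (k+1) : ℚ) := by
    intro k; rw [Nat.choose_succ_succ]; push_cast; ring
  calc (∑ k ∈ range (n+1), ((n+1).choose (k+1) : ℚ) * t (k+1)) + ((n+1).choose 0 : ℚ) * t 0
      = (∑ k ∈ range (n+1), ((n.choose k : ℚ) * t (k+1) + (n.choose (k+1) : ℚ) * t (k+1)))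
        + (n.choose 0 : ℚ) * t 0 := by
        simp only [Nat.choose_zero_right]
        congr 1
        refine Finset.sum_congr rfl fun k _ => ?_
        rw [h1]; ring
    _ = ∑ k ∈ range (n+1), (n.choose k : ℚ) * t k + ∑ k ∈ range (n+1), (n.choose k : ℚ) * t (k+1) := by
        rw [Finset.sum_add_distrib]
        have h3 : ∑ k ∈ range (n+1), (n.choose k : ℚ) * t k
            = (∑ k ∈ range n, (n.choose (k+1) : ℚ) * t (k+1)) + (n.choose 0 : ℚ) * t 0 := by
          rw [Finset.sum_range_succ' (fun k => (n.choose k : ℚ) * t k)]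
        have h2 : ∑ k ∈ range (n+1), (n.choose (k+1) : ℚ) * t (k+1)
            = ∑ k ∈ range n, (n.choose (k+1) : ℚ) * t (k+1) := by
          rw [Finset.sum_range_succ]
          simp
        rw [h2, h3]; ring

lemma abel_main : ∀ n : ℕ, (∀ x y : ℚ, 0 < x → 0 < y → abelA n x y = (x + y + n)^n)
    := by
  intro n
  induction n with
  | zero =>
    intro x y hx hy
    simp [abelA]
    exact mul_inv_cancel₀ hx.ne'
  | succ n ih =>
    have hB : ∀ x y : ℚ, 0 < x → 0 < y →
        abelB (n+1) x y = (x + y) * (x + y + (n+1))^n := by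
      intro x y hx hy
      unfold abelB
      push_cast
      rw [show n+1+1 = n+2 from rfl,
        choose_split n (fun k => x * (x + k)^((k:ℤ)-1) * (y * (y + ((n:ℚ)+1) - k)^(((n:ℤ)+1)-(k:ℤ)-1)))]
      have part1 : ∑ k ∈ range (n+1), (n.choose k : ℚ) *
            (x * (x + k)^((k:ℤ)-1) * (y * (y + ((n:ℚ)+1) - k)^(((n:ℤ)+1)-(k:ℤ)-1)))
          = y * abelA n x (y+1) := by
        unfold abelA
        rw [Finset.mul_sum]
        refine Finset.sum_congr rfl fun k hk => ?_
        have hb : ((y+1) + n - k : ℚ) = (y + ((n:ℚ)+1) - k : ℚ) := by ring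
        have he : (((n:ℤ)+1)-(k:ℤ)-1) = ((n:ℤ)-(k:ℤ)) := by ring
        rw [hb, he]; ring
      have part2 : ∑ k ∈ range (n+1), (n.choose k : ℚ) *
            (x * (x + (k+1:ℕ))^(((k+1:ℕ):ℤ)-1) * (y * (y + ((n:ℚ)+1) - (k+1:ℕ))^(((n:ℤ)+1)-((k+1:ℕ):ℤ)-1)))
          = x * abelA n y (x+1) := by
        unfold abelA
        rw [Finset.mul_sum, ← Finset.sum_range_reflect]
        simp only [Nat.add_sub_cancel]
        refine Finset.sum_congr rfl fun k hk => ?_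
        have hkn : k ≤ n := by
          simp only [Finset.mem_range] at hk; omega
        have hc : ((n.choose (n - k) : ℕ) : ℚ) = ((n.choose k : ℕ) : ℚ) := by
          exact_mod_cast Nat.choose_symm hkn
        have hcq : ((n - k : ℕ) : ℚ) = (n : ℚ) - k := by
          rw [Nat.cast_sub hkn]
        have hcz : ((n - k : ℕ) : ℤ) = (n : ℤ) - k := by
          rw [Nat.cast_sub hkn]
        push_cast [hcq, hcz, hc]
        have hb1 : (x + ((n:ℚ) - k + 1) : ℚ) = (x + 1 + (n:ℚ) - k) := by ring
        have hb2 : (y + ((n:ℚ)+1) - ((n:ℚ) - k + 1) : ℚ) = (y + k) := by ring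
        have he1 : ((n:ℤ) - k + 1 - 1 : ℤ) = ((n:ℤ) - k) := by ring
        have he2 : ((n:ℤ) + 1 - ((n:ℤ) - k + 1) - 1 : ℤ) = ((k:ℤ) - 1) := by ring
        rw [hb1, hb2, he1, he2]
        ring
      rw [part1, part2, ih x (y+1) hx (by linarith), ih y (x+1) hy (by linarith)]
      have : (x + (y+1) + n : ℚ) = (y + (x+1) + n) := by ring
      rw [this]
      have : (y + (x+1) + n : ℚ) = x + y + ((n:ℚ)+1) := by ring
      rw [this]
      ring
    intro x y hx hy
    unfold abelA
    have hsplit : ∀ k ∈ range (n+2), ((n+1).choose k : ℚ) *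
          (x * (x + k)^((k:ℤ)-1) * (y + ((n:ℚ)+1) - k)^(((n:ℤ)+1)-(k:ℤ)))
        = ((n+1).choose k : ℚ) * (x * (x + k)^((k:ℤ)-1) * (y * (y + ((n:ℚ)+1) - k)^(((n:ℤ)+1)-(k:ℤ)-1)))
          + ((n+1).choose k : ℚ) * ((((n:ℚ)+1) - k) * (x * (x + k)^((k:ℤ)-1) * (y + ((n:ℚ)+1) - k)^(((n:ℤ)+1)-(k:ℤ)-1))) := by
      intro k hk
      have hkn : k ≤ n + 1 := by simp only [Finset.mem_range] at hk; omega
      have hbpos : (0:ℚ) < y + ((n:ℚ)+1) - k := by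
        have := base_pos hy (n := n+1) (k := k) hkn
        push_cast at this ⊢; linarith
      have : (y + ((n:ℚ)+1) - k)^(((n:ℤ)+1)-(k:ℤ))
          = (y + ((n:ℚ)+1) - k) * (y + ((n:ℚ)+1) - k)^(((n:ℤ)+1)-(k:ℤ)-1) := by
        rw [← zpow_one_add₀ hbpos.ne']
        congr 1; ring
      rw [this]; ring
    have hA2 : ∑ k ∈ range (n+2), (((n+1).choose k : ℕ) : ℚ) *
          ((((n:ℚ)+1) - k) * (x * (x + k)^((k:ℤ)-1) * (y + ((n:ℚ)+1) - k)^(((n:ℤ)+1)-(k:ℤ)-1)))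
        = ((n:ℚ)+1) * abelA n x (y+1) := by
      rw [Finset.sum_range_succ]
      have hlast : ((((n:ℚ)+1) - ((n+1:ℕ):ℚ))) = 0 := by push_cast; ring
      have hz : (((n+1).choose (n+1) : ℕ) : ℚ) *
          ((((n:ℚ)+1) - ((n+1:ℕ):ℚ)) * (x * (x + ((n+1:ℕ):ℚ))^(((n+1:ℕ):ℤ)-1) * (y + ((n:ℚ)+1) - ((n+1:ℕ):ℚ))^(((n:ℤ)+1)-((n+1:ℕ):ℤ)-1))) = 0 := by
        rw [hlast]; ring
      rw [hz, add_zero]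
      unfold abelA
      rw [Finset.mul_sum]
      refine Finset.sum_congr rfl fun k hk => ?_
      have hkn : k ≤ n := by simp only [Finset.mem_range] at hk; omega
      have hch : (((n+1).choose k : ℕ) : ℚ) * (((n:ℚ)+1) - k) = ((n:ℚ)+1) * ((n.choose k : ℕ) : ℚ) := by
        have h1 : (n+1).choose (k+1) * (k+1) = (n+1).choose k * (n+1-k) := Nat.choose_succ_right_eq (n+1) k
        have h2 : (n+1) * n.choose k = (n+1).choose (k+1) * (k+1) := Nat.add_one_mul_choose_eq n k
        have h3 : (n+1).choose k * (n+1-k) = (n+1) * n.choose k := by omega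
        have h4 : (((n+1).choose k * (n+1-k) : ℕ) : ℚ) = (((n+1) * n.choose k : ℕ) : ℚ) := by
          exact_mod_cast h3
        push_cast [Nat.cast_sub (show k ≤ n+1 by omega)] at h4
        push_cast
        linarith [h4]
      have hb : ((y+1) + n - k : ℚ) = (y + ((n:ℚ)+1) - k) := by ring
      have he : (((n:ℤ)+1)-(k:ℤ)-1) = ((n:ℤ)-(k:ℤ)) := by ring
      rw [hb, he, ← mul_assoc, hch]
      ring
    push_cast
    rw [show n+1+1 = n+2 from rfl]
    have hT1 : ∑ k ∈ range (n+2), (((n+1).choose k : ℕ) : ℚ) *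
          (x * (x + k)^((k:ℤ)-1) * (y * (y + ((n:ℚ)+1) - k)^(((n:ℤ)+1)-(k:ℤ)-1)))
        = abelB (n+1) x y := by
      unfold abelB
      push_cast
      rfl
    calc ∑ k ∈ range (n+2), (((n+1).choose k : ℕ) : ℚ) *
          (x * (x + k)^((k:ℤ)-1) * (y + ((n:ℚ)+1) - k)^(((n:ℤ)+1)-(k:ℤ)))
        = ∑ k ∈ range (n+2), ((((n+1).choose k : ℕ) : ℚ) *
            (x * (x + k)^((k:ℤ)-1) * (y * (y + ((n:ℚ)+1) - k)^(((n:ℤ)+1)-(k:ℤ)-1)))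
          + (((n+1).choose k : ℕ) : ℚ) *
            ((((n:ℚ)+1) - k) * (x * (x + k)^((k:ℤ)-1) * (y + ((n:ℚ)+1) - k)^(((n:ℤ)+1)-(k:ℤ)-1)))) :=
          Finset.sum_congr rfl hsplit
      _ = abelB (n+1) x y + ((n:ℚ)+1) * abelA n x (y+1) := by
          rw [Finset.sum_add_distrib, hT1, hA2]
      _ = (x + y + ((n:ℚ)+1))^(n+1) := by
          rw [hB x y hx hy, ih x (y+1) hx (by linarith)]
          have : (x + (y+1) + n : ℚ) = x + y + ((n:ℚ)+1) := by ring
          rw [this]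
          ring

lemma abelNat (n : ℕ) :
    ∑ j ∈ range (n+1), n.choose j * (j+1)^j * (n+1-j)^(n-1-j) = (n+2)^n := by
  have h := abel_main n 1 1 one_pos one_pos
  unfold abelA at h
  rw [← Finset.sum_range_reflect] at h
  simp only [Nat.add_sub_cancel] at h
  have key : ∀ j ∈ range (n+1),
      ((n.choose j * (j+1)^j * (n+1-j)^(n-1-j) : ℕ) : ℚ)
      = (n.choose (n-j) : ℚ) * (1 * (1 + ((n-j:ℕ):ℚ))^(((n-j:ℕ):ℤ)-1) * (1 + (n:ℚ) - ((n-j:ℕ):ℚ))^((n:ℤ)-((n-j:ℕ):ℤ))) := by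
    intro j hj
    have hjn : j ≤ n := by simp only [Finset.mem_range] at hj; omega
    have hc : n.choose (n-j) = n.choose j := Nat.choose_symm hjn
    have h2 : ((n:ℤ)-((n-j:ℕ):ℤ)) = ((j:ℕ):ℤ) := by omega
    have h2' : (1 + (n:ℚ) - ((n-j:ℕ):ℚ)) = ((j+1:ℕ):ℚ) := by
      push_cast [Nat.cast_sub hjn]; ring
    rw [hc, h2, h2', zpow_natCast]
    rcases Nat.lt_or_ge j n with hlt | hge
    · have h3 : (((n-j:ℕ):ℤ)-1) = ((n-1-j : ℕ):ℤ) := by omega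
      have h4 : (1 + ((n-j:ℕ):ℚ)) = ((n+1-j : ℕ):ℚ) := by
        push_cast [Nat.cast_sub hjn, Nat.cast_sub (show j ≤ n+1 by omega)]; ring
      rw [h3, h4, zpow_natCast]
      push_cast
      ring
    · have hjn' : j = n := by omega
      subst hjn'
      simp
  have hsum : ((∑ j ∈ range (n+1), n.choose j * (j+1)^j * (n+1-j)^(n-1-j) : ℕ) : ℚ)
      = ((1:ℚ) + 1 + n)^n := by
    rw [Nat.cast_sum, Finset.sum_congr rfl key]
    exact h
  have : ((1:ℚ)+1+(n:ℚ))^n = (((n+2)^n : ℕ) : ℚ) := by push_cast; ring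
  rw [this] at hsum
  exact_mod_cast hsum

variable {α : Type*} [DecidableEq α]

noncomputable def blkOf (a : α) (Θ : Finset (Finset α)) : Finset α :=
  if h : ∃ θ ∈ Θ, a ∈ θ then h.choose else ∅

lemma blkOf_spec {a : α} {Θ : Finset (Finset α)} (h : ∃ θ ∈ Θ, a ∈ θ) :
    blkOf a Θ ∈ Θ ∧ a ∈ blkOf a Θ := by
  rw [blkOf, dif_pos h]
  exact ⟨h.choose_spec.1, h.choose_spec.2⟩

lemma blkOf_eq {a : α} {Θ : Finset (Finset α)}
    (hd : (Θ : Set (Finset α)).PairwiseDisjoint id)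
    {θ : Finset α} (hθ : θ ∈ Θ) (haθ : a ∈ θ) : blkOf a Θ = θ := by
  have h : ∃ θ ∈ Θ, a ∈ θ := ⟨θ, hθ, haθ⟩
  obtain ⟨hmem, hain⟩ := blkOf_spec h
  by_contra hne
  have := hd hmem hθ hne
  exact (Finset.disjoint_left.1 this) hain haθ

open Classical in
lemma partW {α : Type*} [Fintype α] [DecidableEq α] (s : Finset α) :
    ∑ Θ ∈ Finset.univ.filter (fun Θ : Finset (Finset α) =>
        (∀ θ ∈ Θ, θ.Nonempty) ∧
        (Θ : Set (Finset α)).PairwiseDisjoint id ∧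
        Θ.sup id = s),
      ∏ θ ∈ Θ, θ.card ^ (θ.card - 1)
    = (s.card + 1) ^ (s.card - 1) := by
  induction s using Finset.strongInduction with
  | _ s ih =>
  rcases s.eq_empty_or_nonempty with rfl | ⟨a, ha⟩
  · have hset : Finset.univ.filter (fun Θ : Finset (Finset α) =>
        (∀ θ ∈ Θ, θ.Nonempty) ∧
        (Θ : Set (Finset α)).PairwiseDisjoint id ∧
        Θ.sup id = (∅ : Finset α)) = {∅} := by
      ext Θ
      simp only [mem_filter, mem_univ, true_and, mem_singleton]
      constructor
      · rintro ⟨h1, _, h3⟩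
        rw [Finset.eq_empty_iff_forall_notMem]
        intro θ hθ
        have hle : θ ≤ Θ.sup id := Finset.le_sup (f := id) hθ
        rw [h3] at hle
        obtain ⟨x, hx⟩ := h1 θ hθ
        exact absurd (hle hx) (Finset.notMem_empty x)
      · rintro rfl
        exact ⟨by simp, by simp, rfl⟩
    rw [hset]
    simp
  · -- nonempty case
    set n := s.card - 1 with hn
    have hcard : s.card = n + 1 := by
      have := Finset.card_pos.2 ⟨a, ha⟩; omega
    -- decomposition
    have decomp : ∑ Θ ∈ Finset.univ.filter (fun Θ : Finset (Finset α) =>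
        (∀ θ ∈ Θ, θ.Nonempty) ∧
        (Θ : Set (Finset α)).PairwiseDisjoint id ∧
        Θ.sup id = s),
      ∏ θ ∈ Θ, θ.card ^ (θ.card - 1)
      = ∑ θ ∈ s.powerset.filter (fun θ => a ∈ θ),
          θ.card ^ (θ.card - 1) *
          ∑ Θ' ∈ Finset.univ.filter (fun Θ' : Finset (Finset α) =>
            (∀ θ' ∈ Θ', θ'.Nonempty) ∧
            (Θ' : Set (Finset α)).PairwiseDisjoint id ∧
            Θ'.sup id = s \ θ),
            ∏ θ' ∈ Θ', θ'.card ^ (θ'.card - 1) := by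
      have hmulsum : ∀ θ ∈ s.powerset.filter (fun θ => a ∈ θ),
          θ.card ^ (θ.card - 1) *
          ∑ Θ' ∈ Finset.univ.filter (fun Θ' : Finset (Finset α) =>
            (∀ θ' ∈ Θ', θ'.Nonempty) ∧
            (Θ' : Set (Finset α)).PairwiseDisjoint id ∧
            Θ'.sup id = s \ θ),
            ∏ θ' ∈ Θ', θ'.card ^ (θ'.card - 1)
          = ∑ Θ' ∈ Finset.univ.filter (fun Θ' : Finset (Finset α) =>
            (∀ θ' ∈ Θ', θ'.Nonempty) ∧
            (Θ' : Set (Finset α)).PairwiseDisjoint id ∧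
            Θ'.sup id = s \ θ),
            θ.card ^ (θ.card - 1) * ∏ θ' ∈ Θ', θ'.card ^ (θ'.card - 1) :=
        fun θ _ => Finset.mul_sum _ _ _
      rw [Finset.sum_congr rfl hmulsum, Finset.sum_sigma']
      have hexists : ∀ Θ ∈ Finset.univ.filter (fun Θ : Finset (Finset α) =>
          (∀ θ ∈ Θ, θ.Nonempty) ∧
          (Θ : Set (Finset α)).PairwiseDisjoint id ∧
          Θ.sup id = s), blkOf a Θ ∈ Θ ∧ a ∈ blkOf a Θ := by
        intro Θ hΘ
        simp only [mem_filter, mem_univ, true_and] at hΘ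
        apply blkOf_spec
        have : a ∈ Θ.sup id := by rw [hΘ.2.2]; exact ha
        simpa using Finset.mem_sup.1 this
      refine Finset.sum_nbij' (fun Θ => ⟨blkOf a Θ, Θ.erase (blkOf a Θ)⟩)
        (fun p => insert p.1 p.2) ?_ ?_ ?_ ?_ ?_
      · -- maps into sigma
        intro Θ hΘ
        obtain ⟨hbmem, hab⟩ := hexists Θ hΘ
        simp only [mem_filter, mem_univ, true_and] at hΘ
        obtain ⟨h1, h2, h3⟩ := hΘ
        have hbs : blkOf a Θ ⊆ s := by
          rw [← h3]; exact Finset.le_sup (f := id) hbmem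
        have hpd' : ((Θ.erase (blkOf a Θ) : Finset (Finset α)) : Set (Finset α)).PairwiseDisjoint id := by
          apply h2.subset
          intro x hx
          exact Finset.mem_of_mem_erase hx
        have hins : blkOf a Θ ∪ (Θ.erase (blkOf a Θ)).sup id = s := by
          have h4 : (insert (blkOf a Θ) (Θ.erase (blkOf a Θ))).sup id = s := by
            rw [Finset.insert_erase hbmem]; exact h3
          rw [Finset.sup_insert, id_eq, Finset.sup_eq_union] at h4
          exact h4
        have hdis : Disjoint (blkOf a Θ) ((Θ.erase (blkOf a Θ)).sup id) :=
          Finset.disjoint_sup_right.2 (fun θ hθ =>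
            h2 hbmem (Finset.mem_of_mem_erase hθ) (Ne.symm (Finset.ne_of_mem_erase hθ)))
        have hsup : (Θ.erase (blkOf a Θ)).sup id = s \ blkOf a Θ := by
          ext x
          simp only [Finset.mem_sdiff]
          constructor
          · intro hx
            refine ⟨by rw [← hins]; exact Finset.mem_union_right _ hx,
              fun hxb => Finset.disjoint_left.1 hdis hxb hx⟩
          · rintro ⟨hxs, hxb⟩
            rw [← hins] at hxs
            rcases Finset.mem_union.1 hxs with h | h
            · exact absurd h hxb
            · exact h
        simp only [Finset.mem_sigma, mem_filter, mem_univ, true_and, Finset.mem_powerset]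
        exact ⟨⟨hbs, hab⟩, fun θ' hθ' => h1 θ' (Finset.mem_of_mem_erase hθ'), hpd', hsup⟩
      · -- reverse map
        rintro ⟨θ, Θ'⟩ hp
        simp only [Finset.mem_sigma, mem_filter, mem_univ, true_and, Finset.mem_powerset] at hp
        obtain ⟨⟨hθs, haθ⟩, h1', h2', h3'⟩ := hp
        have hsub' : ∀ θ' ∈ Θ', θ' ⊆ s \ θ := fun θ' hθ' => by
          rw [← h3']; exact Finset.le_sup (f := id) hθ'
        have hdisj : ∀ θ' ∈ Θ', Disjoint θ θ' := fun θ' hθ' =>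
          Finset.disjoint_left.2 (fun x hxθ hxθ' =>
            (Finset.mem_sdiff.1 (hsub' θ' hθ' hxθ')).2 hxθ)
        simp only [mem_filter, mem_univ, true_and]
        refine ⟨?_, ?_, ?_⟩
        · intro θ'' hθ''
          rcases Finset.mem_insert.1 hθ'' with rfl | h
          · exact ⟨a, haθ⟩
          · exact h1' _ h
        · rw [Finset.coe_insert]
          exact h2'.insert (fun θ' hθ' _ => hdisj θ' hθ')
        · rw [Finset.sup_insert, id_eq, h3', Finset.sup_eq_union,
            Finset.union_sdiff_of_subset hθs]
      · -- left inverse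
        intro Θ hΘ
        exact Finset.insert_erase (hexists Θ hΘ).1
      · -- right inverse
        rintro ⟨θ, Θ'⟩ hp
        simp only [Finset.mem_sigma, mem_filter, mem_univ, true_and, Finset.mem_powerset] at hp
        obtain ⟨⟨hθs, haθ⟩, h1', h2', h3'⟩ := hp
        have hsub' : ∀ θ' ∈ Θ', θ' ⊆ s \ θ := fun θ' hθ' => by
          rw [← h3']; exact Finset.le_sup (f := id) hθ'
        have hdisj : ∀ θ' ∈ Θ', Disjoint θ θ' := fun θ' hθ' =>
          Finset.disjoint_left.2 (fun x hxθ hxθ' =>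
            (Finset.mem_sdiff.1 (hsub' θ' hθ' hxθ')).2 hxθ)
        have hnot : θ ∉ Θ' := fun h =>
          (Finset.mem_sdiff.1 (hsub' θ h haθ)).2 haθ
        have hpd : ((insert θ Θ' : Finset (Finset α)) : Set (Finset α)).PairwiseDisjoint id := by
          rw [Finset.coe_insert]
          exact h2'.insert (fun θ' hθ' _ => hdisj θ' hθ')
        have hblk : blkOf a (insert θ Θ') = θ :=
          blkOf_eq hpd (Finset.mem_insert_self θ Θ') haθ
        show (⟨blkOf a (insert θ Θ'), (insert θ Θ').erase (blkOf a (insert θ Θ'))⟩ :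
            Σ _ : Finset α, Finset (Finset α)) = ⟨θ, Θ'⟩
        rw [hblk, Finset.erase_insert hnot]
      · -- summand equality
        intro Θ hΘ
        exact (Finset.mul_prod_erase Θ _ (hexists Θ hΘ).1).symm
    rw [decomp]
    -- rewrite inner sums using ih
    have step2 : ∀ θ ∈ s.powerset.filter (fun θ => a ∈ θ),
        θ.card ^ (θ.card - 1) *
          ∑ Θ' ∈ Finset.univ.filter (fun Θ' : Finset (Finset α) =>
            (∀ θ' ∈ Θ', θ'.Nonempty) ∧
            (Θ' : Set (Finset α)).PairwiseDisjoint id ∧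
            Θ'.sup id = s \ θ),
            ∏ θ' ∈ Θ', θ'.card ^ (θ'.card - 1)
        = θ.card ^ (θ.card - 1) * (s.card - θ.card + 1) ^ (s.card - θ.card - 1) := by
      intro θ hθ
      simp only [mem_filter, Finset.mem_powerset] at hθ
      obtain ⟨hθs, haθ⟩ := hθ
      have hss : s \ θ ⊂ s := by
        apply Finset.sdiff_ssubset hθs ⟨a, haθ⟩
      rw [ih _ hss, Finset.card_sdiff_of_subset hθs]
    rw [Finset.sum_congr rfl step2]
    -- group by cardinality
    have step3 : ∑ θ ∈ s.powerset.filter (fun θ => a ∈ θ),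
        θ.card ^ (θ.card - 1) * (s.card - θ.card + 1) ^ (s.card - θ.card - 1)
        = ∑ k ∈ range (n+2), ((s.powerset.filter (fun θ => a ∈ θ)).filter
            (fun θ => θ.card = k)).card * (k ^ (k - 1) * (s.card - k + 1) ^ (s.card - k - 1)) := by
      have hmaps : ∀ θ ∈ s.powerset.filter (fun θ => a ∈ θ), θ.card ∈ range (n+2) := by
        intro θ hθ
        simp only [mem_filter, Finset.mem_powerset] at hθ
        have := Finset.card_le_card hθ.1
        rw [Finset.mem_range]; omega
      rw [← Finset.sum_fiberwise_of_maps_to hmaps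
        (fun θ => θ.card ^ (θ.card - 1) * (s.card - θ.card + 1) ^ (s.card - θ.card - 1))]
      refine Finset.sum_congr rfl fun k _ => ?_
      have : ∀ θ ∈ (s.powerset.filter (fun θ => a ∈ θ)).filter (fun θ => θ.card = k),
          θ.card ^ (θ.card - 1) * (s.card - θ.card + 1) ^ (s.card - θ.card - 1)
          = k ^ (k - 1) * (s.card - k + 1) ^ (s.card - k - 1) := by
        intro θ hθ
        simp only [mem_filter] at hθ
        rw [hθ.2]
      rw [Finset.sum_congr rfl this, Finset.sum_const, smul_eq_mul]
    rw [step3]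
    -- fiber cardinalities
    have step4 : ∀ k, ((s.powerset.filter (fun θ => a ∈ θ)).filter
            (fun θ => θ.card = k)).card = if k = 0 then 0 else n.choose (k-1) := by
      intro k
      rcases Nat.eq_zero_or_pos k with rfl | hk
      · rw [if_pos rfl, Finset.card_eq_zero, Finset.eq_empty_iff_forall_notMem]
        intro θ hθ
        simp only [mem_filter, Finset.mem_powerset, Finset.card_eq_zero] at hθ
        rcases hθ with ⟨⟨_, haθ⟩, rfl⟩
        exact absurd haθ (Finset.notMem_empty a)
      · rw [if_neg (by omega)]
        have hbij : ((s.powerset.filter (fun θ => a ∈ θ)).filter (fun θ => θ.card = k)).card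
            = ((s.erase a).powersetCard (k-1)).card := by
          apply Finset.card_nbij' (fun θ => θ.erase a) (fun σ => insert a σ)
          · intro θ hθ
            simp only [Finset.mem_coe, mem_filter, Finset.mem_powerset] at hθ
            rcases hθ with ⟨⟨hθs, haθ⟩, hcardθ⟩
            rw [Finset.mem_coe, Finset.mem_powersetCard]
            exact ⟨Finset.erase_subset_erase a hθs,
              by rw [Finset.card_erase_of_mem haθ, hcardθ]⟩
          · intro σ hσ
            rw [Finset.mem_coe, Finset.mem_powersetCard] at hσ
            rcases hσ with ⟨hσs, hcardσ⟩
            have hanσ : a ∉ σ := fun h => (Finset.notMem_erase a s) (hσs h)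
            simp only [Finset.mem_coe, mem_filter, Finset.mem_powerset]
            refine ⟨⟨?_, Finset.mem_insert_self a σ⟩, ?_⟩
            · intro x hx
              rcases Finset.mem_insert.1 hx with rfl | hx
              · exact ha
              · exact Finset.mem_of_mem_erase (hσs hx)
            · rw [Finset.card_insert_of_notMem hanσ, hcardσ]; omega
          · intro θ hθ
            simp only [Finset.mem_coe, mem_filter, Finset.mem_powerset] at hθ
            exact Finset.insert_erase hθ.1.2
          · intro σ hσ
            rw [Finset.mem_coe, Finset.mem_powersetCard] at hσ
            have hanσ : a ∉ σ := fun h => (Finset.notMem_erase a s) (hσ.1 h)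
            exact Finset.erase_insert hanσ
        rw [hbij, Finset.card_powersetCard, Finset.card_erase_of_mem ha, hcard]
        simp
    -- final Abel computation
    have step5 : ∑ k ∈ range (n+2), ((s.powerset.filter (fun θ => a ∈ θ)).filter
            (fun θ => θ.card = k)).card * (k ^ (k - 1) * (s.card - k + 1) ^ (s.card - k - 1))
        = ∑ j ∈ range (n+1), n.choose j * (j+1)^j * (n+1-j)^(n-1-j) := by
      rw [Finset.sum_range_succ']
      have h0 : ((s.powerset.filter (fun θ => a ∈ θ)).filter (fun θ => θ.card = 0)).card
          * (0 ^ (0 - 1) * (s.card - 0 + 1) ^ (s.card - 0 - 1)) = 0 := by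
        rw [step4 0, if_pos rfl, zero_mul]
      rw [h0, add_zero]
      refine Finset.sum_congr rfl fun j hj => ?_
      have hjn : j ≤ n := by simp only [Finset.mem_range] at hj; omega
      rw [step4 (j+1), if_neg (by omega)]
      have e1 : j + 1 - 1 = j := by omega
      have e2 : s.card - (j+1) + 1 = n + 1 - j := by omega
      have e3 : s.card - (j+1) - 1 = n - 1 - j := by omega
      rw [e1, e2, e3, mul_assoc]
    rw [step5, abelNat, hcard]


open Classical in
/-- Summing over all partitions `Θ` of the `m`-element set `Fin m` into
nonempty blocks, `Σ_Θ ∏_{θ ∈ Θ} |θ|^{|θ|-1} = (m+1)^{m-1}`. -/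
theorem partition_weight_sum
    (m : ℕ) (hm : 1 ≤ m) :
    ∑ Θ ∈ Finset.univ.filter (fun Θ : Finset (Finset (Fin m)) =>
        (∀ θ ∈ Θ, θ.Nonempty) ∧
        (Θ : Set (Finset (Fin m))).PairwiseDisjoint id ∧
        Θ.sup id = Finset.univ),
      ∏ θ ∈ Θ, θ.card ^ (θ.card - 1)
    = (m + 1) ^ (m - 1) := by
  have h := partW (α := Fin m) Finset.univ
  simpa using h
end

section
/- For all m, p ∈ ℕ with 1 ≤ p ≤ m, Σ_{Θ : |Θ| = p} ∏_{θ ∈ Θ} |θ|^{|θ|−1} = ( (m−1)! / ((p−1)!·(m−p)!) ) · m^{m−p}, where the sum runs over all partitions Θ of the set {1, …, m} into exactly p nonempty blocks and |θ| denotes the cardinality of a block θ. -/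
open Finset Function

namespace PWS

variable {α : Type*} [Fintype α] [DecidableEq α]
set_option linter.unusedSectionVars false

/-- `f` is eventually idempotent: each orbit reaches a fixed point. -/
def EF (f : α → α) : Prop := ∀ x, ∃ n, f (f^[n] x) = f^[n] x

/-- the eventual fixed point ("root") of `x` under `f`. -/
def rt (f : α → α) (x : α) : α := f^[Fintype.card α] x

lemma iter_fixed {f : α → α} {y : α} (h : f y = y) (n : ℕ) : f^[n] y = y :=
  Function.IsFixedPt.iterate h n

lemma rt_fixed {f : α → α} (hf : EF f) (x : α) : f (rt f x) = rt f x := by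
  classical
  set m := Fintype.card α with hm
  have hx := hf x
  set n₀ := Nat.find hx with hn₀
  have hspec : f (f^[n₀] x) = f^[n₀] x := Nat.find_spec hx
  have hle : n₀ ≤ m := by
    by_contra hgt
    push_neg at hgt
    -- pigeonhole on 0..m
    have hcard : (Finset.range (m + 1)).card = m + 1 := by simp
    have hmap : ∀ i ∈ Finset.range (m + 1), f^[i] x ∈ (Finset.univ : Finset α) := by
      intro i _; exact mem_univ _
    have hlt : (Finset.univ : Finset α).card < (Finset.range (m + 1)).card := by
      simp [hm]
    obtain ⟨i, hi, j, hj, hij, heq⟩ :=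
      Finset.exists_ne_map_eq_of_card_lt_of_maps_to hlt hmap
    have hi' : i < m + 1 := Finset.mem_range.mp hi
    have hj' : j < m + 1 := Finset.mem_range.mp hj
    clear hi hj
    -- wlog i < j
    wlog hlt2 : i < j generalizing i j
    · exact this j i (Ne.symm hij) heq.symm hj' hi' (by omega)
    set d := j - i with hd
    have hdpos : 1 ≤ d := by omega
    have hji : j = i + d := by omega
    have hper : ∀ t, f^[i + t * d] x = f^[i] x := by
      intro t
      induction t with
      | zero => simp
      | succ t ih =>
        have : i + (t + 1) * d = d + (i + t * d) := by ring
        rw [this, Function.iterate_add_apply, ih, ← Function.iterate_add_apply]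
        have : d + i = j := by omega
        rw [this, ← heq]
    -- take t = n₀
    have hbig : n₀ ≤ i + n₀ * d := by
      calc n₀ = n₀ * 1 := by ring
      _ ≤ n₀ * d := Nat.mul_le_mul_left _ hdpos
      _ ≤ i + n₀ * d := Nat.le_add_left _ _
    have hcollapse : f^[i + n₀ * d] x = f^[n₀] x := by
      have : i + n₀ * d = (i + n₀ * d - n₀) + n₀ := by omega
      rw [this, Function.iterate_add_apply]
      exact iter_fixed hspec _
    have : f (f^[i] x) = f^[i] x := by
      rw [← hper n₀, hcollapse, hspec, ← hcollapse, hper n₀]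
    exact Nat.find_min hx (by omega) this
  have : rt f x = f^[n₀] x := by
    unfold rt
    rw [← hm]
    have : m = (m - n₀) + n₀ := by omega
    rw [this, Function.iterate_add_apply]
    exact iter_fixed hspec _
  rw [this]; exact hspec

lemma rt_of_fixed {f : α → α} {x : α} (h : f x = x) : rt f x = x := iter_fixed h _

lemma rt_iter_of_fixed {f : α → α} (hf : EF f) (x : α) (k : ℕ) :
    f^[k] (rt f x) = rt f x := iter_fixed (rt_fixed hf x) k

lemma iter_ge_rt {f : α → α} (hf : EF f) (x : α) {n : ℕ} (hn : Fintype.card α ≤ n) :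
    f^[n] x = rt f x := by
  have : n = (n - Fintype.card α) + Fintype.card α := by omega
  rw [this, Function.iterate_add_apply]
  exact rt_iter_of_fixed hf x _

lemma rt_hit {f : α → α} (hf : EF f) {r y : α} (hr : f r = r) {j : ℕ}
    (h : f^[j] y = r) : rt f y = r := by
  rcases le_or_gt j (Fintype.card α) with hj | hj
  · unfold rt
    have : Fintype.card α = (Fintype.card α - j) + j := by omega
    rw [this, Function.iterate_add_apply, h]
    exact iter_fixed hr _
  · rw [iter_ge_rt hf y (le_of_lt hj)] at h
    exact h

lemma rt_avoid {f : α → α} (hf : EF f) {r y : α} (hr : f r = r) (h : rt f y ≠ r) :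
    ∀ j, f^[j] y ≠ r := fun j hj => h (rt_hit hf hr hj)

lemma orbit_congr {f f' : α → α} {r x : α} (h : ∀ y, y ≠ r → f' y = f y) :
    ∀ n, (∀ i, i < n → f^[i] x ≠ r) → f'^[n] x = f^[n] x := by
  intro n
  induction n with
  | zero => simp
  | succ n ih =>
    intro havoid
    rw [Function.iterate_succ_apply', Function.iterate_succ_apply',
      ih (fun i hi => havoid i (by omega)), h _ (havoid n (by omega))]

lemma rt_apply {f : α → α} (hf : EF f) (x : α) : rt f (f x) = rt f x := by
  unfold rt
  rw [← Function.iterate_succ_apply, Function.iterate_succ_apply']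
  exact rt_fixed hf x

lemma rt_iter_apply {f : α → α} (hf : EF f) (x : α) (k : ℕ) : rt f (f^[k] x) = rt f x := by
  induction k with
  | zero => rfl
  | succ k ih => rw [Function.iterate_succ_apply', rt_apply hf, ih]

lemma rt_rt {f : α → α} (hf : EF f) (x : α) : rt f (rt f x) = rt f x :=
  rt_of_fixed (rt_fixed hf x)

/-- number of fixed points -/
def nfix (f : α → α) : ℕ := (univ.filter fun x => f x = x).card

section Update

variable {f f' : α → α} {r v : α}

lemma A0 (hf : EF f) (hr : f r = r) (hv : rt f v ≠ r) : v ≠ r := by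
  intro h; apply hv; rw [h]; exact rt_of_fixed hr

lemma A2 (hf : EF f) (hr : f r = r) (hv : rt f v ≠ r) : EF (update f r v) := by
  intro x
  set m := Fintype.card α with hm
  have hupd : ∀ y, y ≠ r → update f r v y = f y := fun y hy => Function.update_of_ne hy _ _
  by_cases hx : rt f x = r
  · have hex : ∃ k, f^[k] x = r := ⟨m, hx⟩
    set k₀ := Nat.find hex with hk₀
    have hk₀spec : f^[k₀] x = r := Nat.find_spec hex
    have horb : (update f r v)^[k₀] x = f^[k₀] x :=
      orbit_congr hupd k₀ (fun i hi => Nat.find_min hex hi)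
    refine ⟨m + (1 + k₀), ?_⟩
    have hv' : (update f r v)^[m + (1 + k₀)] x = rt f v := by
      rw [Function.iterate_add_apply, Function.iterate_add_apply,
        Function.iterate_one, horb, hk₀spec, Function.update_self]
      rw [orbit_congr hupd m (fun i _ => rt_avoid hf hr hv i)]
      rfl
    rw [hv', hupd _ hv, rt_fixed hf v]
  · refine ⟨m, ?_⟩
    rw [orbit_congr hupd m (fun i _ => rt_avoid hf hr hx i)]
    have : rt f x = f^[m] x := rfl
    rw [← this, hupd _ hx, rt_fixed hf x]

lemma A3 (hf : EF f) (hr : f r = r) (hv : rt f v ≠ r) :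
    (univ.filter fun x => update f r v x = x) = (univ.filter fun x => f x = x).erase r := by
  ext x
  by_cases hx : x = r
  · subst hx
    simp [Function.update_self, A0 hf hr hv]
  · simp [Function.update_of_ne hx, hx]

lemma B1 (hf' : EF f') (hr : f' r ≠ r) : EF (update f' r r) := by
  intro x
  set f := update f' r r with hf
  have hupd : ∀ y, y ≠ r → f y = f' y := fun y hy => Function.update_of_ne hy _ _
  have hfr : f r = r := Function.update_self _ _ _
  by_cases hhit : ∃ k, f^[k] x = r
  · obtain ⟨k, hk⟩ := hhit
    exact ⟨k, by rw [hk, hfr]⟩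
  · push_neg at hhit
    refine ⟨Fintype.card α, ?_⟩
    have horb : f^[Fintype.card α] x = f'^[Fintype.card α] x :=
      (orbit_congr (fun y hy => (hupd y hy).symm) _ (fun i _ => hhit i)).symm
    have hwr : rt f' x ≠ r := fun h => hr (h ▸ rt_fixed hf' x)
    rw [horb]
    have : f'^[Fintype.card α] x = rt f' x := rfl
    rw [this, hupd _ hwr, rt_fixed hf' x]

lemma B2 (hf' : EF f') (hr : f' r ≠ r) :
    (univ.filter fun x => update f' r r x = x) = insert r (univ.filter fun x => f' x = x) := by
  ext x
  by_cases hx : x = r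
  · subst hx; simp [Function.update_self]
  · simp [Function.update_of_ne hx, hx]

lemma B3 (hf' : EF f') (hr : f' r ≠ r) : rt (update f' r r) (f' r) ≠ r := by
  set f := update f' r r with hf
  set v := f' r with hv
  have hupd : ∀ y, y ≠ r → f y = f' y := fun y hy => Function.update_of_ne hy _ _
  have hm1 : 1 ≤ Fintype.card α := Fintype.card_pos_iff.mpr ⟨r⟩
  intro hcon
  have hex : ∃ k, f^[k] v = r := ⟨Fintype.card α, hcon⟩
  set k₀ := Nat.find hex with hk₀
  have hk₀spec : f^[k₀] v = r := Nat.find_spec hex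
  have horb : f'^[k₀] v = f^[k₀] v :=
    orbit_congr (fun y hy => (hupd y hy).symm) k₀ (fun i hi => Nat.find_min hex hi)
  have hper1 : f'^[k₀ + 1] r = r := by
    rw [Function.iterate_add_apply, Function.iterate_one, ← hv, horb, hk₀spec]
  have hper : ∀ t, f'^[(k₀ + 1) * t] r = r := by
    intro t
    induction t with
    | zero => simp
    | succ t ih =>
      have : (k₀ + 1) * (t + 1) = (k₀ + 1) * t + (k₀ + 1) := by ring
      rw [this, Function.iterate_add_apply, hper1, ih]
  have hbig : Fintype.card α ≤ (k₀ + 1) * Fintype.card α := Nat.le_mul_of_pos_left _ (by omega)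
  have : rt f' r = r := by
    rw [← iter_ge_rt hf' r hbig, hper]
  apply hr
  calc f' r = f' (rt f' r) := by rw [this]
  _ = rt f' r := rt_fixed hf' r
  _ = r := this

lemma RT1 (hr : f r = r) : update (update f r v) r r = f := by
  rw [Function.update_idem]
  have h2 : update f r r = update f r (f r) := by rw [hr]
  rw [h2, Function.update_eq_self]

lemma RT2 : update (update f' r r) r (f' r) = f' := by
  rw [Function.update_idem, Function.update_eq_self]

end Update

open scoped Classical in
/-- the set of eventually idempotent functions with `p` fixed points -/
noncomputable def F (α : Type*) [Fintype α] [DecidableEq α] (p : ℕ) : Finset (α → α) :=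
  univ.filter fun f => EF f ∧ nfix f = p

lemma card_filter_pair {γ δ : Type*} [Fintype γ] [Fintype δ] [DecidableEq γ] [DecidableEq δ]
    (A : γ → Prop) (B : γ → δ → Prop) [DecidablePred A]
    [DecidablePred (fun x : γ × δ => A x.1 ∧ B x.1 x.2)] [∀ c, DecidablePred (B c)] :
    ((univ : Finset (γ × δ)).filter fun x => A x.1 ∧ B x.1 x.2).card
      = ∑ c ∈ univ.filter A, (univ.filter fun d => B c d).card := by
  rw [Finset.card_eq_sum_card_fiberwise
    (f := Prod.fst) (t := univ.filter A)
    (fun x hx => by simp only [Finset.mem_coe, mem_filter, mem_univ, true_and] at hx ⊢; exact hx.1)]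
  refine Finset.sum_congr rfl fun c hc => ?_
  simp only [mem_filter, mem_univ, true_and] at hc
  apply Finset.card_nbij (i := Prod.snd)
  · intro x hx
    simp only [Finset.mem_coe, mem_filter, mem_univ, true_and] at hx ⊢
    rw [← hx.2]; exact hx.1.2
  · intro x hx y hy hxy
    simp only [Set.mem_setOf_eq, Finset.coe_filter, mem_univ, true_and] at hx hy
    exact Prod.ext (hx.2.trans hy.2.symm) hxy
  · intro d hd
    simp only [Finset.mem_coe, mem_filter, mem_univ, true_and] at hd
    have hmem : (c, d) ∈ ((univ : Finset (γ × δ)).filter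
        (fun x => A x.1 ∧ B x.1 x.2)).filter (fun a => a.1 = c) := by
      simp only [mem_filter, mem_univ, true_and]
      exact ⟨⟨hc, hd⟩, trivial⟩
    exact ⟨(c, d), hmem, rfl⟩

lemma card_filter_pair' {γ δ : Type*} [Fintype γ] [Fintype δ] [DecidableEq γ] [DecidableEq δ]
    (B : γ → δ → Prop) [DecidablePred (fun x : γ × δ => B x.1 x.2)] [∀ c, DecidablePred (B c)] :
    ((univ : Finset (γ × δ)).filter fun x => B x.1 x.2).card
      = ∑ c : γ, (univ.filter fun d => B c d).card := by
  rw [Finset.card_eq_sum_card_fiberwise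
    (f := Prod.fst) (t := univ) (fun x _ => mem_univ _)]
  refine Finset.sum_congr rfl fun c _ => ?_
  apply Finset.card_nbij (i := Prod.snd)
  · intro x hx
    simp only [Finset.mem_coe, mem_filter, mem_univ, true_and] at hx ⊢
    rw [← hx.2]; exact hx.1
  · intro x hx y hy hxy
    simp only [Set.mem_setOf_eq, Finset.coe_filter, mem_univ, true_and] at hx hy
    exact Prod.ext (hx.2.trans hy.2.symm) hxy
  · intro d hd
    simp only [Finset.mem_coe, mem_filter, mem_univ, true_and] at hd
    have hmem : (c, d) ∈ ((univ : Finset (γ × δ)).filter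
        (fun x => B x.1 x.2)).filter (fun a => a.1 = c) := by
      simp only [mem_filter, mem_univ, true_and]
      exact ⟨hd, trivial⟩
    exact ⟨(c, d), hmem, rfl⟩

open scoped Classical in
lemma recurrence (p : ℕ) :
    (F α (p + 1)).card * (Fintype.card α * p) = (F α p).card * (Fintype.card α - p) := by
  have hS := card_filter_pair (γ := α → α) (δ := α × α)
    (fun f => EF f ∧ nfix f = p + 1) (fun f d => f d.2 = d.2 ∧ rt f d.1 ≠ d.2)
  have hT := card_filter_pair (γ := α → α) (δ := α)
    (fun f => EF f ∧ nfix f = p) (fun f r => ¬ f r = r)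
  have step1 : ∀ f ∈ univ.filter (fun f : α → α => EF f ∧ nfix f = p + 1),
      ((univ : Finset (α × α)).filter fun d => f d.2 = d.2 ∧ rt f d.1 ≠ d.2).card
        = Fintype.card α * p := by
    intro f hf
    simp only [mem_filter, mem_univ, true_and] at hf
    have h2 := card_filter_pair' (γ := α) (δ := α) (fun v r => f r = r ∧ rt f v ≠ r)
    have step2 : ∀ v ∈ (univ : Finset α),
        ((univ : Finset α).filter fun r => f r = r ∧ rt f v ≠ r).card = p := by
      intro v _
      have hrw : ((univ : Finset α).filter fun r => f r = r ∧ rt f v ≠ r)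
          = ((univ : Finset α).filter fun x => f x = x).erase (rt f v) := by
        ext r
        simp only [mem_filter, mem_univ, true_and, mem_erase]
        constructor
        · rintro ⟨h1, h2⟩; exact ⟨fun h => h2 h.symm, h1⟩
        · rintro ⟨h1, h2⟩; exact ⟨h2, fun h => h1 h.symm⟩
      rw [hrw, Finset.card_erase_of_mem (by
        simp only [mem_filter, mem_univ, true_and]; exact rt_fixed hf.1 v)]
      have hnf : ((univ : Finset α).filter fun x => f x = x).card = p + 1 := hf.2
      rw [hnf]
      exact Nat.add_sub_cancel _ _
    exact h2.trans ((Finset.sum_congr rfl step2).trans (by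
      rw [Finset.sum_const, Finset.card_univ, smul_eq_mul]))
  have step3 : ∀ f ∈ univ.filter (fun f : α → α => EF f ∧ nfix f = p),
      ((univ : Finset α).filter fun r => ¬ f r = r).card = Fintype.card α - p := by
    intro f hf
    simp only [mem_filter, mem_univ, true_and] at hf
    have hnf : ((univ : Finset α).filter fun x => f x = x).card = p := hf.2
    rw [Finset.filter_not, Finset.card_sdiff_of_subset (Finset.filter_subset _ _), Finset.card_univ, hnf]
  have hSr := hS.trans ((Finset.sum_congr rfl step1).trans (by
    rw [Finset.sum_const, smul_eq_mul]))
  have hTr := hT.trans ((Finset.sum_congr rfl step3).trans (by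
    rw [Finset.sum_const, smul_eq_mul]))
  have hF1 : (F α (p + 1)).card = (univ.filter (fun f : α → α => EF f ∧ nfix f = p + 1)).card := by
    congr 1
  have hF2 : (F α p).card = (univ.filter (fun f : α → α => EF f ∧ nfix f = p)).card := by
    congr 1
  rw [hF1, hF2, ← hSr, ← hTr]
  apply Finset.card_nbij' (i := fun x => (update x.1 x.2.2 x.2.1, x.2.2))
    (j := fun y => (update y.1 y.2 y.2, (y.1 y.2, y.2)))
  · rintro ⟨f, v, r⟩ hx
    simp only [Finset.coe_filter, Set.mem_setOf_eq, mem_filter, mem_univ, true_and] at hx ⊢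
    obtain ⟨⟨hEF, hn⟩, hr, hv⟩ := hx
    refine ⟨⟨A2 hEF hr hv, ?_⟩, ?_⟩
    · unfold nfix
      rw [A3 hEF hr hv, Finset.card_erase_of_mem (by
        simp only [mem_filter, mem_univ, true_and]; exact hr)]
      have h3 : ((univ : Finset α).filter fun x => f x = x).card = p + 1 := hn
      rw [h3]
      exact Nat.add_sub_cancel _ _
    · simp only [Function.update_self]
      exact A0 hEF hr hv
  · rintro ⟨f', r⟩ hy
    simp only [Finset.coe_filter, Set.mem_setOf_eq, mem_filter, mem_univ, true_and] at hy ⊢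
    obtain ⟨⟨hEF', hn⟩, hr⟩ := hy
    refine ⟨⟨B1 hEF' hr, ?_⟩, Function.update_self _ _ _, B3 hEF' hr⟩
    unfold nfix
    rw [B2 hEF' hr, Finset.card_insert_of_notMem (by
      simp only [mem_filter, mem_univ, true_and]; exact hr)]
    have h3 : ((univ : Finset α).filter fun x => f' x = x).card = p := hn
    rw [h3]
  · rintro ⟨f, v, r⟩ hx
    simp only [Finset.coe_filter, Set.mem_setOf_eq, mem_filter, mem_univ, true_and] at hx
    obtain ⟨⟨hEF, hn⟩, hr, hv⟩ := hx
    simp only [Function.update_self, RT1 hr]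
  · rintro ⟨f', r⟩ hy
    simp only [Function.update_self, RT2]

open scoped Classical in
lemma F_card_top : (F α (Fintype.card α)).card = 1 := by
  have : F α (Fintype.card α) = {id} := by
    ext f
    simp only [F, mem_filter, mem_univ, true_and, mem_singleton]
    constructor
    · rintro ⟨hEF, hn⟩
      have huniv : (univ.filter fun x => f x = x) = univ :=
        Finset.eq_univ_of_card _ (by rw [← Finset.card_univ] at hn ⊢; exact hn)
      funext x
      have hx : x ∈ univ.filter fun x => f x = x := by rw [huniv]; exact mem_univ x
      simpa using (mem_filter.mp hx).2
    · rintro rfl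
      refine ⟨fun x => ⟨0, rfl⟩, ?_⟩
      simp [nfix]
  rw [this, Finset.card_singleton]

open scoped Classical in
lemma F_card (p : ℕ) (hp : 1 ≤ p) (hpm : p ≤ Fintype.card α) :
    (F α p).card = (Fintype.card α - 1).choose (p - 1)
      * Fintype.card α ^ (Fintype.card α - p) := by
  obtain ⟨d, hd⟩ : ∃ d, p + d = Fintype.card α := ⟨Fintype.card α - p, by omega⟩
  clear hpm
  induction d generalizing p with
  | zero =>
    have hpm' : p = Fintype.card α := by omega
    rw [hpm']
    simp [F_card_top, Nat.choose_self, Nat.sub_self]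
  | succ d ih =>
    have hp1 : (F α (p + 1)).card = (Fintype.card α - 1).choose p
        * Fintype.card α ^ (Fintype.card α - (p + 1)) := by
      have h := ih (p + 1) (by omega) (by omega)
      simpa only [Nat.add_sub_cancel] using h
    have hrec := recurrence (α := α) p
    rw [hp1] at hrec
    have e1 : Fintype.card α ^ (Fintype.card α - p)
        = Fintype.card α ^ (Fintype.card α - (p + 1)) * Fintype.card α := by
      rw [← pow_succ]; congr 1; omega
    have e2 : (Fintype.card α - 1).choose p * p
        = (Fintype.card α - 1).choose (p - 1) * (Fintype.card α - p) := by
      have h := Nat.choose_succ_right_eq (Fintype.card α - 1) (p - 1)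
      rw [show p - 1 + 1 = p by omega] at h
      rw [h]; congr 1; omega
    have key : (Fintype.card α - 1).choose p
          * Fintype.card α ^ (Fintype.card α - (p + 1)) * (Fintype.card α * p)
        = ((Fintype.card α - 1).choose (p - 1)
          * Fintype.card α ^ (Fintype.card α - p)) * (Fintype.card α - p) := by
      calc (Fintype.card α - 1).choose p
            * Fintype.card α ^ (Fintype.card α - (p + 1)) * (Fintype.card α * p)
          = ((Fintype.card α - 1).choose p * p)
            * (Fintype.card α ^ (Fintype.card α - (p + 1)) * Fintype.card α) := by ring
        _ = ((Fintype.card α - 1).choose (p - 1) * (Fintype.card α - p))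
            * Fintype.card α ^ (Fintype.card α - p) := by rw [e2, ← e1]
        _ = ((Fintype.card α - 1).choose (p - 1)
            * Fintype.card α ^ (Fintype.card α - p)) * (Fintype.card α - p) := by ring
    rw [key] at hrec
    exact (Nat.eq_of_mul_eq_mul_right (by omega) hrec.symm)

open scoped Classical in
/-- the partition of `α` into the fibers of `rt f` -/
noncomputable def blocks (f : α → α) : Finset (Finset α) :=
  univ.image (fun x => univ.filter fun y => rt f y = rt f x)

lemma blocks_nonempty {f : α → α} {θ : Finset α} (hθ : θ ∈ blocks f) : θ.Nonempty := by
  classical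
  obtain ⟨x, -, rfl⟩ := Finset.mem_image.mp hθ
  exact ⟨x, by simp⟩

lemma blocks_disjoint (f : α → α) :
    ((blocks f : Set (Finset α))).PairwiseDisjoint id := by
  classical
  intro a ha b hb hab
  have ha' : a ∈ blocks f := ha
  have hb' : b ∈ blocks f := hb
  obtain ⟨x, -, rfl⟩ := Finset.mem_image.mp ha'
  obtain ⟨y, -, rfl⟩ := Finset.mem_image.mp hb'
  refine Finset.disjoint_left.mpr fun z hz hz' => ?_
  simp only [id, mem_filter, mem_univ, true_and] at hz hz'
  exact hab (by rw [← hz, ← hz'])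

lemma blocks_sup (f : α → α) : (blocks f).sup id = univ := by
  classical
  apply Finset.eq_univ_of_forall
  intro x
  rw [Finset.mem_sup]
  exact ⟨univ.filter fun y => rt f y = rt f x,
    Finset.mem_image_of_mem _ (mem_univ x), by simp⟩

lemma blocks_card {f : α → α} (hf : EF f) : (blocks f).card = nfix f := by
  classical
  have h1 : blocks f = (univ.image (rt f)).image (fun r => univ.filter fun y => rt f y = r) := by
    rw [Finset.image_image]
    rfl
  have h2 : univ.image (rt f) = univ.filter (fun x => f x = x) := by
    ext r
    simp only [Finset.mem_image, mem_univ, true_and, mem_filter]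
    constructor
    · rintro ⟨x, -, rfl⟩; exact rt_fixed hf x
    · intro hr; exact ⟨r, rt_of_fixed hr⟩
  rw [h1, Finset.card_image_of_injOn, h2, nfix]
  intro r hr r' hr' h
  simp only [Finset.coe_image, Set.mem_image, Finset.mem_coe] at hr hr'
  obtain ⟨x, -, rfl⟩ := hr
  obtain ⟨y, -, rfl⟩ := hr'
  have hmem : rt f x ∈ univ.filter fun z => rt f z = rt f x := by
    simp [rt_rt hf x]
  have h3 : rt f x ∈ (fun r => univ.filter fun y => rt f y = r) (rt f y) := h ▸ hmem
  simpa [rt_rt hf x] using h3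

lemma nfix_one {β : Type*} [Fintype β] [DecidableEq β] {g : β → β} (h : nfix g = 1)
    {z w : β} (hz : g z = z) (hw : g w = w) : z = w := by
  obtain ⟨a, ha⟩ := Finset.card_eq_one.mp h
  have hz' : z ∈ univ.filter (fun x => g x = x) := mem_filter.mpr ⟨mem_univ _, hz⟩
  have hw' : w ∈ univ.filter (fun x => g x = x) := mem_filter.mpr ⟨mem_univ _, hw⟩
  rw [ha, mem_singleton] at hz' hw'
  rw [hz', hw']

open scoped Classical in
lemma card_EF_blocks (Θ : Finset (Finset α))
    (hne : ∀ θ ∈ Θ, θ.Nonempty)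
    (hdisj : (Θ : Set (Finset α)).PairwiseDisjoint id)
    (hsup : Θ.sup id = univ) :
    (univ.filter fun f : α → α => EF f ∧ blocks f = Θ).card
      = ∏ θ ∈ Θ, θ.card ^ (θ.card - 1) := by
  classical
  have hex : ∀ x : α, ∃ θ, θ ∈ Θ ∧ x ∈ θ := by
    intro x
    have hx : x ∈ Θ.sup id := hsup ▸ mem_univ x
    rw [Finset.mem_sup] at hx
    obtain ⟨θ, hθ, hxθ⟩ := hx
    exact ⟨θ, hθ, hxθ⟩
  choose blk hblk hxblk using hex
  have huniq : ∀ {θ x}, θ ∈ Θ → x ∈ θ → θ = blk x := by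
    intro θ x hθ hxθ
    by_contra hne'
    have hd := hdisj hθ (hblk x) hne'
    exact (Finset.disjoint_left.mp hd hxθ) (hxblk x)
  -- facts about an f with blocks f = Θ
  have hblock_eq : ∀ (f : α → α), EF f → blocks f = Θ → ∀ θ ∈ Θ, ∀ x ∈ θ,
      θ = univ.filter fun y => rt f y = rt f x := by
    intro f hf hb θ hθ x hxθ
    rw [← hb] at hθ
    obtain ⟨x₀, -, rfl⟩ := Finset.mem_image.mp hθ
    have hx0 : rt f x = rt f x₀ := by simpa using (mem_filter.mp hxθ).2
    ext y
    simp only [mem_filter, mem_univ, true_and, hx0]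
  have hclosed : ∀ (f : α → α), EF f → blocks f = Θ → ∀ θ ∈ Θ, ∀ x ∈ θ, f x ∈ θ := by
    intro f hf hb θ hθ x hxθ
    rw [hblock_eq f hf hb θ hθ x hxθ]
    simp [rt_apply hf]
  -- restriction of f to a block
  set res : ∀ (f : {f : α → α // EF f ∧ blocks f = Θ}) (θ : {θ // θ ∈ Θ}), θ.1 → θ.1 :=
    fun f θ z => ⟨f.1 z.1, hclosed f.1 f.2.1 f.2.2 θ.1 θ.2 z.1 z.2⟩ with hres
  have hres_iter : ∀ f θ (n : ℕ) (z : θ.1), (((res f θ)^[n]) z).1 = (f.1)^[n] z.1 := by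
    intro f θ n
    induction n with
    | zero => intro z; rfl
    | succ n ih =>
      intro z
      rw [Function.iterate_succ_apply, Function.iterate_succ_apply, ih]
  have hres_EF : ∀ f θ, EF (res f θ) := by
    intro f θ z
    obtain ⟨n, hn⟩ := f.2.1 z.1
    refine ⟨n, Subtype.ext ?_⟩
    show (f.1 (((res f θ)^[n]) z).1) = (((res f θ)^[n]) z).1
    rw [hres_iter f θ n z]
    exact hn
  have hres_nfix : ∀ f θ, nfix (res f θ) = 1 := by
    intro f θ
    obtain ⟨x₀, hx₀⟩ := hne θ.1 θ.2
    have hblkθ := hblock_eq f.1 f.2.1 f.2.2 θ.1 θ.2 x₀ hx₀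
    set r := rt f.1 x₀ with hr
    have hrθ : r ∈ θ.1 := by
      rw [hblkθ]
      simp [hr, rt_rt f.2.1]
    have hrfix : f.1 r = r := rt_fixed f.2.1 x₀
    rw [nfix, Finset.card_eq_one]
    refine ⟨⟨r, hrθ⟩, ?_⟩
    ext z
    simp only [mem_filter, mem_univ, true_and, mem_singleton]
    constructor
    · intro hz
      have hzfix : f.1 z.1 = z.1 := congrArg Subtype.val hz
      apply Subtype.ext
      have hz1 : z.1 ∈ univ.filter fun y => rt f.1 y = rt f.1 x₀ := by
        rw [← hblkθ]; exact z.2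
      have h1 : rt f.1 z.1 = rt f.1 x₀ := by simpa using (mem_filter.mp hz1).2
      calc z.1 = rt f.1 z.1 := (rt_of_fixed hzfix).symm
        _ = r := h1
    · rintro rfl
      exact Subtype.ext hrfix
  -- gluing a family of per-block functions
  set inv : (∀ θ : {θ // θ ∈ Θ}, {g : θ.1 → θ.1 // EF g ∧ nfix g = 1}) → (α → α) :=
    fun G x => ((G ⟨blk x, hblk x⟩).1 ⟨x, hxblk x⟩).1 with hinv
  have hinv_coe : ∀ G θ (hθ : θ ∈ Θ) (z : θ), inv G z.1 = ((G ⟨θ, hθ⟩).1 z).1 := by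
    intro G θ hθ z
    obtain ⟨z, hz⟩ := z
    have h := huniq hθ hz
    subst h
    rfl
  have hinv_iter : ∀ G θ (hθ : θ ∈ Θ) (z : θ) (n : ℕ),
      (inv G)^[n] z.1 = (((G ⟨θ, hθ⟩).1)^[n] z).1 := by
    intro G θ hθ z n
    induction n generalizing z with
    | zero => rfl
    | succ n ih =>
      rw [Function.iterate_succ_apply, Function.iterate_succ_apply,
        hinv_coe G θ hθ z]
      exact ih ((G ⟨θ, hθ⟩).1 z)
  have hinv_EF : ∀ G, EF (inv G) := by
    intro G x
    obtain ⟨n, hn⟩ := (G ⟨blk x, hblk x⟩).2.1 ⟨x, hxblk x⟩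
    refine ⟨n, ?_⟩
    rw [hinv_iter G (blk x) (hblk x) ⟨x, hxblk x⟩ n,
      hinv_coe G (blk x) (hblk x) _, hn]
  have hrt_mem : ∀ G x, rt (inv G) x ∈ blk x := by
    intro G x
    have h := hinv_iter G (blk x) (hblk x) ⟨x, hxblk x⟩ (Fintype.card α)
    show (inv G)^[Fintype.card α] x ∈ blk x
    rw [h]
    exact ((((G ⟨blk x, hblk x⟩).1)^[Fintype.card α]) ⟨x, hxblk x⟩).2
  have hrt_fix_val : ∀ G x, inv G (rt (inv G) x) = rt (inv G) x :=
    fun G x => rt_fixed (hinv_EF G) x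
  have hinv_blocks : ∀ G, blocks (inv G) = Θ := by
    intro G
    have hfeq : ∀ x, (univ.filter fun y => rt (inv G) y = rt (inv G) x) = blk x := by
      intro x
      ext y
      simp only [mem_filter, mem_univ, true_and]
      constructor
      · intro h
        have h1 : rt (inv G) x ∈ blk y := h ▸ hrt_mem G y
        have h2 : rt (inv G) x ∈ blk x := hrt_mem G x
        have hblkeq : blk y = blk x := by
          by_contra hne'
          have hd := hdisj (hblk y) (hblk x) hne'
          exact (Finset.disjoint_left.mp hd h1) h2
        rw [← hblkeq]
        exact hxblk y
      · intro hyblk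
        have hbyx : blk x = blk y := huniq (hblk x) hyblk
        -- both roots are fixed points of the same block function
        set g := (G ⟨blk x, hblk x⟩).1 with hg
        have hgy : rt (inv G) y ∈ blk x := by rw [hbyx]; exact hrt_mem G y
        have hgx : rt (inv G) x ∈ blk x := hrt_mem G x
        have hfixy : g ⟨rt (inv G) y, hgy⟩ = ⟨rt (inv G) y, hgy⟩ := by
          apply Subtype.ext
          have := hinv_coe G (blk x) (hblk x) ⟨rt (inv G) y, hgy⟩
          rw [← this]
          exact hrt_fix_val G y
        have hfixx : g ⟨rt (inv G) x, hgx⟩ = ⟨rt (inv G) x, hgx⟩ := by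
          apply Subtype.ext
          have := hinv_coe G (blk x) (hblk x) ⟨rt (inv G) x, hgx⟩
          rw [← this]
          exact hrt_fix_val G x
        have := nfix_one (G ⟨blk x, hblk x⟩).2.2 hfixy hfixx
        exact congrArg Subtype.val this
    have himg : blocks (inv G) = univ.image blk := by
      apply Finset.image_congr
      intro x _
      exact hfeq x
    rw [himg]
    ext θ
    simp only [Finset.mem_image, mem_univ, true_and]
    constructor
    · rintro ⟨x, rfl⟩; exact hblk x
    · intro hθ
      obtain ⟨x₀, hx₀⟩ := hne θ hθ
      exact ⟨x₀, (huniq hθ hx₀).symm⟩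
  -- the equivalence
  have E : {f : α → α // EF f ∧ blocks f = Θ}
      ≃ (∀ θ : {θ // θ ∈ Θ}, {g : θ.1 → θ.1 // EF g ∧ nfix g = 1}) :=
    { toFun := fun f θ => ⟨res f θ, hres_EF f θ, hres_nfix f θ⟩
      invFun := fun G => ⟨inv G, hinv_EF G, hinv_blocks G⟩
      left_inv := by
        intro f
        apply Subtype.ext
        funext x
        rfl
      right_inv := by
        intro G
        funext θ
        apply Subtype.ext
        funext z
        apply Subtype.ext
        exact hinv_coe G θ.1 θ.2 z }
  have hcount : (univ.filter fun f : α → α => EF f ∧ blocks f = Θ).card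
      = ∏ θ ∈ Θ.attach, Fintype.card {g : θ.1 → θ.1 // EF g ∧ nfix g = 1} := by
    rw [← Fintype.card_subtype, Fintype.card_congr E, Fintype.card_pi, Finset.univ_eq_attach]
  rw [hcount, ← Finset.prod_attach Θ (fun θ => θ.card ^ (θ.card - 1))]
  refine Finset.prod_congr rfl fun θ _ => ?_
  -- per-block count
  obtain ⟨x₀, hx₀⟩ := hne θ.1 θ.2
  have hpos : 1 ≤ Fintype.card θ.1 := by
    rw [Fintype.card_coe]
    exact Finset.card_pos.mpr ⟨x₀, hx₀⟩
  have h1 : Fintype.card {g : θ.1 → θ.1 // EF g ∧ nfix g = 1} = (F θ.1 1).card := by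
    rw [F, Fintype.card_subtype]
  rw [h1, F_card 1 le_rfl hpos]
  simp [Fintype.card_coe]

open scoped Classical in
lemma sum_over_partitions (p : ℕ) (hp : 1 ≤ p) (hpm : p ≤ Fintype.card α) :
    ∑ Θ ∈ univ.filter (fun Θ : Finset (Finset α) =>
        (∀ θ ∈ Θ, θ.Nonempty) ∧
        (Θ : Set (Finset α)).PairwiseDisjoint id ∧
        Θ.sup id = univ ∧
        Θ.card = p),
      ∏ θ ∈ Θ, θ.card ^ (θ.card - 1)
    = (Fintype.card α - 1).choose (p - 1) * Fintype.card α ^ (Fintype.card α - p) := by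
  rw [← F_card p hp hpm]
  have hmaps : ∀ f ∈ F α p, blocks f ∈ univ.filter (fun Θ : Finset (Finset α) =>
      (∀ θ ∈ Θ, θ.Nonempty) ∧
      (Θ : Set (Finset α)).PairwiseDisjoint id ∧
      Θ.sup id = univ ∧
      Θ.card = p) := by
    intro f hf
    have hf' : EF f ∧ nfix f = p := by
      have := (mem_filter.mp hf).2
      exact this
    simp only [mem_filter, mem_univ, true_and]
    exact ⟨fun θ hθ => blocks_nonempty hθ, blocks_disjoint f, blocks_sup f,
      by rw [blocks_card hf'.1, hf'.2]⟩
  rw [Finset.card_eq_sum_card_fiberwise hmaps]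
  refine Finset.sum_congr rfl fun Θ hΘ => ?_
  simp only [mem_filter, mem_univ, true_and] at hΘ
  obtain ⟨hne, hdisj, hsup, hcard⟩ := hΘ
  have hfib : (F α p).filter (fun f => blocks f = Θ)
      = univ.filter (fun f : α → α => EF f ∧ blocks f = Θ) := by
    ext f
    simp only [F, Finset.filter_filter, mem_filter, mem_univ, true_and]
    constructor
    · rintro ⟨⟨h1, h2⟩, h3⟩; exact ⟨h1, h3⟩
    · rintro ⟨h1, h3⟩
      refine ⟨⟨h1, ?_⟩, h3⟩
      rw [← blocks_card h1, h3]
      exact hcard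
  rw [hfib, card_EF_blocks Θ hne hdisj hsup]

end PWS

open Classical in
/-- For `1 ≤ p ≤ m`, summing over all partitions `Θ` of the `m`-element
set `Fin m` into exactly `p` nonempty blocks,
`Σ_{Θ : |Θ| = p} ∏_{θ ∈ Θ} |θ|^{|θ|-1} = C(m-1, p-1) · m^{m-p}`,
where `C(m-1, p-1) = (m-1)!/((p-1)!(m-p)!)` is the binomial coefficient. -/
theorem partition_weight_sum_fixed_blocks
    (m p : ℕ) (hp : 1 ≤ p) (hpm : p ≤ m) :
    ∑ Θ ∈ Finset.univ.filter (fun Θ : Finset (Finset (Fin m)) =>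
        (∀ θ ∈ Θ, θ.Nonempty) ∧
        (Θ : Set (Finset (Fin m))).PairwiseDisjoint id ∧
        Θ.sup id = Finset.univ ∧
        Θ.card = p),
      ∏ θ ∈ Θ, θ.card ^ (θ.card - 1)
    = Nat.choose (m - 1) (p - 1) * m ^ (m - p) := by
  have h := PWS.sum_over_partitions (α := Fin m) p hp (by simpa using hpm)
  simpa using h
end

section
/- Let a < b be real numbers, let V : ℝ → ℂ be a bounded measurable function with V(t) = 0 for all t outside [a, b], and let k ∈ ℂ with k ≠ 0. Then there exists a unique continuous function X : ℝ → ℂ satisfying the Volterra integral equation X(x) = e^{−ikx} + ∫_{a}^{x} (sin(k(x−t))/k) · V(t) · X(t) dt for all x ∈ ℝ. In particular, X(x) = e^{−ikx} for all x ≤ a. -/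
open MeasureTheory intervalIntegral Set

namespace VolterraAux

lemma norm_exp_le (z : ℂ) : ‖Complex.exp z‖ ≤ Real.exp ‖z‖ := by
  rw [Complex.norm_exp]
  exact Real.exp_le_exp.2 ((le_abs_self _).trans (Complex.abs_re_le_norm _))

lemma norm_sin_le (z : ℂ) : ‖Complex.sin z‖ ≤ Real.exp ‖z‖ := by
  rw [Complex.sin]
  have h1 : ‖Complex.exp (-z * Complex.I)‖ ≤ Real.exp ‖z‖ := by
    refine (norm_exp_le _).trans (Real.exp_le_exp.2 (le_of_eq ?_))
    simp
  have h2 : ‖Complex.exp (z * Complex.I)‖ ≤ Real.exp ‖z‖ := by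
    refine (norm_exp_le _).trans (Real.exp_le_exp.2 (le_of_eq ?_))
    simp
  calc ‖(Complex.exp (-z * Complex.I) - Complex.exp (z * Complex.I)) * Complex.I / 2‖
      = ‖Complex.exp (-z * Complex.I) - Complex.exp (z * Complex.I)‖ / 2 := by
        simp [norm_div, norm_mul]
    _ ≤ (Real.exp ‖z‖ + Real.exp ‖z‖) / 2 := by
        gcongr
        exact (norm_sub_le _ _).trans (add_le_add h1 h2)
    _ = Real.exp ‖z‖ := by ring

lemma norm_cos_le' (z : ℂ) : ‖Complex.cos z‖ ≤ Real.exp ‖z‖ := by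
  rw [Complex.cos]
  have h1 : ‖Complex.exp (-z * Complex.I)‖ ≤ Real.exp ‖z‖ := by
    refine (norm_exp_le _).trans (Real.exp_le_exp.2 (le_of_eq ?_))
    simp
  have h2 : ‖Complex.exp (z * Complex.I)‖ ≤ Real.exp ‖z‖ := by
    refine (norm_exp_le _).trans (Real.exp_le_exp.2 (le_of_eq ?_))
    simp
  calc ‖(Complex.exp (z * Complex.I) + Complex.exp (-z * Complex.I)) / 2‖
      = ‖Complex.exp (z * Complex.I) + Complex.exp (-z * Complex.I)‖ / 2 := by
        simp [norm_div]
    _ ≤ (Real.exp ‖z‖ + Real.exp ‖z‖) / 2 := by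
        gcongr
        exact (norm_add_le _ _).trans (add_le_add h2 h1)
    _ = Real.exp ‖z‖ := by ring

lemma ker_bound (k : ℂ) (hk : k ≠ 0) {x t r : ℝ} (h : |x - t| ≤ r) :
    ‖Complex.sin (k * ((x : ℂ) - (t : ℂ))) / k‖ ≤ Real.exp (‖k‖ * r) / ‖k‖ := by
  rw [norm_div]
  have hnum : ‖Complex.sin (k * ((x : ℂ) - (t : ℂ)))‖ ≤ Real.exp (‖k‖ * r) :=
    calc ‖Complex.sin (k * ((x : ℂ) - (t : ℂ)))‖ ≤ Real.exp ‖k * ((x : ℂ) - (t : ℂ))‖ :=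
        norm_sin_le _
    _ ≤ Real.exp (‖k‖ * r) := by
        apply Real.exp_le_exp.2
        rw [norm_mul, ← Complex.ofReal_sub, Complex.norm_real]
        exact mul_le_mul_of_nonneg_left h (norm_nonneg k)
  gcongr

lemma II_of_bdd {f : ℝ → ℂ} (hf : AEStronglyMeasurable f volume) {C : ℝ}
    (h : ∀ t, ‖f t‖ ≤ C) (x y : ℝ) : IntervalIntegrable f volume x y := by
  rw [intervalIntegrable_iff]
  refine Integrable.mono' (g := fun _ => C) ?_ hf.restrict (ae_of_all _ h)
  exact integrableOn_const measure_Ioc_lt_top.ne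

lemma abs_le_sum {a b t : ℝ} (ht : t ∈ Icc a b) : |t| ≤ |a| + |b| := by
  rw [abs_le]
  constructor
  · have := neg_abs_le a
    have := abs_nonneg b
    have := ht.1
    linarith
  · have := le_abs_self b
    have := abs_nonneg a
    have := ht.2
    linarith

lemma contJ (a b : ℝ) (k : ℂ) {g : ℝ → ℂ} (hg : AEStronglyMeasurable g volume)
    {C : ℝ} (hgb : ∀ t, ‖g t‖ ≤ C) (hsupp : ∀ t, t ∉ Icc a b → g t = 0) :
    Continuous (fun x : ℝ =>
      ∫ t in a..x, Complex.sin (k * ((x : ℂ) - (t : ℂ))) / k * g t) := by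
  have hC0 : 0 ≤ C := (norm_nonneg _).trans (hgb a)
  set E : ℝ := Real.exp (‖k‖ * (|a| + |b|)) with hE
  have hE0 : 0 < E := Real.exp_pos _
  have hb1 : ∀ t : ℝ, ‖Complex.cos (k * (t : ℂ)) * g t‖ ≤ E * C := by
    intro t
    by_cases ht : t ∈ Icc a b
    · rw [norm_mul]
      refine mul_le_mul ?_ (hgb t) (norm_nonneg _) hE0.le
      refine (norm_cos_le' _).trans (Real.exp_le_exp.2 ?_)
      rw [norm_mul, Complex.norm_real]
      exact mul_le_mul_of_nonneg_left (abs_le_sum ht) (norm_nonneg k)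
    · simp [hsupp t ht]
      positivity
  have hb2 : ∀ t : ℝ, ‖Complex.sin (k * (t : ℂ)) * g t‖ ≤ E * C := by
    intro t
    by_cases ht : t ∈ Icc a b
    · rw [norm_mul]
      refine mul_le_mul ?_ (hgb t) (norm_nonneg _) hE0.le
      refine (norm_sin_le _).trans (Real.exp_le_exp.2 ?_)
      rw [norm_mul, Complex.norm_real]
      exact mul_le_mul_of_nonneg_left (abs_le_sum ht) (norm_nonneg k)
    · simp [hsupp t ht]
      positivity
  have hcont1 : Continuous fun t : ℝ => Complex.cos (k * (t : ℂ)) :=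
    Complex.continuous_cos.comp (continuous_const.mul Complex.continuous_ofReal)
  have hcont2 : Continuous fun t : ℝ => Complex.sin (k * (t : ℂ)) :=
    Complex.continuous_sin.comp (continuous_const.mul Complex.continuous_ofReal)
  have hm1 : AEStronglyMeasurable (fun t : ℝ => Complex.cos (k * (t : ℂ)) * g t) volume :=
    hcont1.aestronglyMeasurable.mul hg
  have hm2 : AEStronglyMeasurable (fun t : ℝ => Complex.sin (k * (t : ℂ)) * g t) volume :=
    hcont2.aestronglyMeasurable.mul hg
  have hi1 : ∀ x y : ℝ, IntervalIntegrable (fun t : ℝ => Complex.cos (k * (t : ℂ)) * g t)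
      volume x y := II_of_bdd hm1 hb1
  have hi2 : ∀ x y : ℝ, IntervalIntegrable (fun t : ℝ => Complex.sin (k * (t : ℂ)) * g t)
      volume x y := II_of_bdd hm2 hb2
  have key : ∀ x : ℝ, (∫ t in a..x, Complex.sin (k * ((x : ℂ) - (t : ℂ))) / k * g t)
      = Complex.sin (k * (x : ℂ)) / k * (∫ t in a..x, Complex.cos (k * (t : ℂ)) * g t)
        - Complex.cos (k * (x : ℂ)) / k * (∫ t in a..x, Complex.sin (k * (t : ℂ)) * g t) := by
    intro x
    rw [← intervalIntegral.integral_const_mul, ← intervalIntegral.integral_const_mul,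
      ← intervalIntegral.integral_sub ((hi1 a x).const_mul _) ((hi2 a x).const_mul _)]
    apply intervalIntegral.integral_congr
    intro t _
    show Complex.sin (k * ((x : ℂ) - (t : ℂ))) / k * g t = _
    have hsub : k * ((x : ℂ) - (t : ℂ)) = k * (x : ℂ) - k * (t : ℂ) := by ring
    rw [hsub, Complex.sin_sub]
    ring
  have : Continuous fun x : ℝ =>
      Complex.sin (k * (x : ℂ)) / k * (∫ t in a..x, Complex.cos (k * (t : ℂ)) * g t)
        - Complex.cos (k * (x : ℂ)) / k * (∫ t in a..x, Complex.sin (k * (t : ℂ)) * g t) := by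
    have hp1 : Continuous fun x : ℝ => ∫ t in a..x, Complex.cos (k * (t : ℂ)) * g t :=
      intervalIntegral.continuous_primitive hi1 a
    have hp2 : Continuous fun x : ℝ => ∫ t in a..x, Complex.sin (k * (t : ℂ)) * g t :=
      intervalIntegral.continuous_primitive hi2 a
    exact ((hcont2.div_const k).mul hp1).sub ((hcont1.div_const k).mul hp2)
  exact this.congr fun x => (key x).symm

end VolterraAux

/-- For a bounded measurable potential `V` vanishing outside `[a, b]`
and `k ≠ 0`, the Volterra integral equation
`X(x) = e^{-ikx} + ∫_a^x (sin(k(x-t))/k) V(t) X(t) dt`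
has a unique continuous solution `X : ℝ → ℂ`; moreover any such solution satisfies
`X(x) = e^{-ikx}` for all `x ≤ a`. -/
theorem volterra_jost_solution_exists_unique
    (a b : ℝ) (hab : a < b) (V : ℝ → ℂ) (hVmeas : Measurable V)
    (hVbdd : ∃ C : ℝ, ∀ t : ℝ, ‖V t‖ ≤ C)
    (hVsupp : ∀ t : ℝ, t ∉ Set.Icc a b → V t = 0)
    (k : ℂ) (hk : k ≠ 0) :
    (∃! X : ℝ → ℂ, Continuous X ∧
      ∀ x : ℝ, X x = Complex.exp (-Complex.I * k * (x : ℂ)) +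
        ∫ t in a..x, (Complex.sin (k * ((x : ℂ) - (t : ℂ))) / k) * V t * X t) ∧
    ∀ X : ℝ → ℂ,
      (Continuous X ∧
        ∀ x : ℝ, X x = Complex.exp (-Complex.I * k * (x : ℂ)) +
          ∫ t in a..x, (Complex.sin (k * ((x : ℂ) - (t : ℂ))) / k) * V t * X t) →
      ∀ x : ℝ, x ≤ a → X x = Complex.exp (-Complex.I * k * (x : ℂ)) := by
  classical
  obtain ⟨C, hC⟩ := hVbdd
  have hC' : ∀ t, ‖V t‖ ≤ C := fun t => by
    simpa using hC t
  have hC0 : 0 ≤ C := (norm_nonneg _).trans (hC' a)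
  have hab' : a ≤ b := hab.le
  haveI : Nonempty (Set.Icc a b) := ⟨⟨a, Set.left_mem_Icc.2 hab'⟩⟩
  -- extension of a continuous map on [a,b] to ℝ
  set bar : C(Set.Icc a b, ℂ) → ℝ → ℂ := fun f t => f (Set.projIcc a b hab' t) with hbar
  have bar_cont : ∀ f, Continuous (bar f) := fun f => f.continuous.comp continuous_projIcc
  have bar_eq : ∀ (f : C(Set.Icc a b, ℂ)) (t : ℝ) (ht : t ∈ Set.Icc a b),
      bar f t = f ⟨t, ht⟩ := by
    intro f t ht
    simp [hbar, Set.projIcc_of_mem hab' ht]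
  have bar_le : ∀ (f : C(Set.Icc a b, ℂ)) (t : ℝ), ‖bar f t‖ ≤ ‖f‖ :=
    fun f t => f.norm_coe_le_norm _
  -- the product V * extension
  set g : C(Set.Icc a b, ℂ) → ℝ → ℂ := fun f t => V t * bar f t with hg
  have g_meas : ∀ f, AEStronglyMeasurable (g f) volume := fun f =>
    hVmeas.aestronglyMeasurable.mul (bar_cont f).aestronglyMeasurable
  have g_bdd : ∀ f t, ‖g f t‖ ≤ C * ‖f‖ := fun f t => by
    rw [hg]
    exact (norm_mul _ _).le.trans (mul_le_mul (hC' t) (bar_le f t) (norm_nonneg _) hC0)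
  have g_supp : ∀ f t, t ∉ Set.Icc a b → g f t = 0 := fun f t ht => by
    simp [hg, hVsupp t ht]
  -- integrability of the kernel-times-supported-function integrand
  have II : ∀ (h : ℝ → ℂ), AEStronglyMeasurable h volume → ∀ (D : ℝ),
      (∀ t, ‖h t‖ ≤ D) → (∀ t, t ∉ Set.Icc a b → h t = 0) → ∀ (x u v : ℝ),
      IntervalIntegrable
        (fun t => Complex.sin (k * ((x : ℂ) - (t : ℂ))) / k * h t) volume u v := by
    intro h hm D hb hs x u v
    have hD0 : 0 ≤ D := (norm_nonneg _).trans (hb a)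
    have hker : Continuous fun t : ℝ => Complex.sin (k * ((x : ℂ) - (t : ℂ))) / k :=
      (Complex.continuous_sin.comp
        (continuous_const.mul (continuous_const.sub Complex.continuous_ofReal))).div_const k
    refine VolterraAux.II_of_bdd
      (f := fun t => Complex.sin (k * ((x : ℂ) - (t : ℂ))) / k * h t)
      (C := Real.exp (‖k‖ * (|x| + (|a| + |b|))) / ‖k‖ * D)
      (hker.aestronglyMeasurable.mul hm) ?_ u v
    intro t
    by_cases ht : t ∈ Set.Icc a b
    · rw [norm_mul]
      refine mul_le_mul (VolterraAux.ker_bound k hk ?_) (hb t) (norm_nonneg _)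
        (by positivity)
      calc |x - t| ≤ |x| + |t| := by
            rw [sub_eq_add_neg]
            exact (abs_add_le _ _).trans (by rw [abs_neg])
        _ ≤ |x| + (|a| + |b|) := by
            have := VolterraAux.abs_le_sum ht
            linarith
    · simp only [hs t ht, mul_zero, norm_zero]
      exact mul_nonneg (by positivity) hD0
  -- the Volterra map on all of ℝ
  set Φ : C(Set.Icc a b, ℂ) → ℝ → ℂ := fun f x =>
    Complex.exp (-Complex.I * k * (x : ℂ)) +
      ∫ t in a..x, Complex.sin (k * ((x : ℂ) - (t : ℂ))) / k * g f t with hΦ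
  have Φcont : ∀ f, Continuous (Φ f) := fun f => by
    rw [hΦ]
    exact (Complex.continuous_exp.comp
        ((continuous_const.mul Complex.continuous_ofReal))).add
      (VolterraAux.contJ a b k (g_meas f) (g_bdd f) (g_supp f))
  -- the Volterra operator on C([a,b], ℂ)
  set T : C(Set.Icc a b, ℂ) → C(Set.Icc a b, ℂ) := fun f =>
    ⟨fun s => Φ f s.1, (Φcont f).comp continuous_subtype_val⟩ with hT
  have T_apply : ∀ (f : C(Set.Icc a b, ℂ)) (s : Set.Icc a b), T f s = Φ f s.1 :=
    fun f s => rfl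
  -- difference formula
  have hdiff : ∀ (f₁ f₂ : C(Set.Icc a b, ℂ)) (x : ℝ),
      Φ f₁ x - Φ f₂ x =
        ∫ t in a..x,
          Complex.sin (k * ((x : ℂ) - (t : ℂ))) / k * (V t * (bar f₁ t - bar f₂ t)) := by
    intro f₁ f₂ x
    have h1 := II (g f₁) (g_meas f₁) _ (g_bdd f₁) (g_supp f₁) x a x
    have h2 := II (g f₂) (g_meas f₂) _ (g_bdd f₂) (g_supp f₂) x a x
    rw [hΦ]
    simp only [add_sub_add_left_eq_sub]
    rw [← intervalIntegral.integral_sub h1 h2]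
    apply intervalIntegral.integral_congr
    intro t _
    show Complex.sin (k * ((x : ℂ) - (t : ℂ))) / k * g f₁ t -
        Complex.sin (k * ((x : ℂ) - (t : ℂ))) / k * g f₂ t =
      Complex.sin (k * ((x : ℂ) - (t : ℂ))) / k * (V t * (bar f₁ t - bar f₂ t))
    rw [hg]
    ring
  -- contraction constant
  set Bc : ℝ := Real.exp (‖k‖ * (b - a)) / ‖k‖ * C with hBc
  have hBc0 : 0 ≤ Bc := mul_nonneg (by positivity) hC0
  -- key iterated estimate
  have key : ∀ (f₁ f₂ : C(Set.Icc a b, ℂ)) (n : ℕ) (x : ℝ) (hx : x ∈ Set.Icc a b),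
      ‖(T^[n] f₁) ⟨x, hx⟩ - (T^[n] f₂) ⟨x, hx⟩‖ ≤
        Bc ^ n * (x - a) ^ n / (n.factorial : ℝ) * dist f₁ f₂ := by
    intro f₁ f₂ n
    induction n with
    | zero =>
      intro x hx
      have := ContinuousMap.dist_apply_le_dist (f := f₁) (g := f₂) (⟨x, hx⟩ : Set.Icc a b)
      rw [dist_eq_norm] at this
      simpa using this
    | succ n ih =>
      intro x hx
      have hax : a ≤ x := hx.1
      have hxb : x ≤ b := hx.2
      rw [Function.iterate_succ_apply' T n f₁, Function.iterate_succ_apply' T n f₂]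
      set F := T^[n] f₁ with hF
      set G := T^[n] f₂ with hG
      have h1 : (T F) ⟨x, hx⟩ - (T G) ⟨x, hx⟩ = Φ F x - Φ G x := rfl
      rw [h1, hdiff F G x]
      have hbound : ∀ t ∈ Set.Ioc a x,
          ‖Complex.sin (k * ((x : ℂ) - (t : ℂ))) / k * (V t * (bar F t - bar G t))‖ ≤
            Bc ^ (n + 1) * (t - a) ^ n / (n.factorial : ℝ) * dist f₁ f₂ := by
        intro t ht
        have htS : t ∈ Set.Icc a b := ⟨ht.1.le, ht.2.trans hxb⟩
        have hker : ‖Complex.sin (k * ((x : ℂ) - (t : ℂ))) / k‖ ≤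
            Real.exp (‖k‖ * (b - a)) / ‖k‖ := by
          refine VolterraAux.ker_bound k hk ?_
          rw [abs_le]
          constructor
          · have := htS.2; linarith
          · have := htS.1; linarith
        have hdb : ‖bar F t - bar G t‖ ≤
            Bc ^ n * (t - a) ^ n / (n.factorial : ℝ) * dist f₁ f₂ := by
          rw [bar_eq F t htS, bar_eq G t htS]
          exact ih t htS
        calc ‖Complex.sin (k * ((x : ℂ) - (t : ℂ))) / k * (V t * (bar F t - bar G t))‖
            = ‖Complex.sin (k * ((x : ℂ) - (t : ℂ))) / k‖ * ‖V t‖ * ‖bar F t - bar G t‖ := by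
              rw [norm_mul, norm_mul]; ring
          _ ≤ Real.exp (‖k‖ * (b - a)) / ‖k‖ * C *
              (Bc ^ n * (t - a) ^ n / (n.factorial : ℝ) * dist f₁ f₂) := by
              refine mul_le_mul ?_ hdb (norm_nonneg _) (mul_nonneg (by positivity) hC0)
              exact mul_le_mul hker (hC' t) (norm_nonneg _) (by positivity)
          _ = Bc ^ (n + 1) * (t - a) ^ n / (n.factorial : ℝ) * dist f₁ f₂ := by
              rw [hBc]; ring
      have hcont : Continuous fun t : ℝ =>
          Bc ^ (n + 1) * (t - a) ^ n / (n.factorial : ℝ) * dist f₁ f₂ := by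
        fun_prop
      have hval : (∫ t in a..x, Bc ^ (n + 1) * (t - a) ^ n / (n.factorial : ℝ) * dist f₁ f₂)
          = Bc ^ (n + 1) * (x - a) ^ (n + 1) / ((n + 1).factorial : ℝ) * dist f₁ f₂ := by
        have h1 : ∀ t : ℝ, Bc ^ (n + 1) * (t - a) ^ n / (n.factorial : ℝ) * dist f₁ f₂
            = (Bc ^ (n + 1) / (n.factorial : ℝ) * dist f₁ f₂) * (t - a) ^ n := fun t => by ring
        simp_rw [h1]
        rw [intervalIntegral.integral_const_mul,
          intervalIntegral.integral_comp_sub_right (fun u => u ^ n) a, sub_self,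
          integral_pow]
        rw [Nat.factorial_succ]
        push_cast
        have hnf : ((n.factorial : ℝ)) ≠ 0 := Nat.cast_ne_zero.2 n.factorial_pos.ne'
        have hn1 : ((n : ℝ) + 1) ≠ 0 := by positivity
        field_simp
        ring
      have hnn : 0 ≤ Bc ^ (n + 1) * (x - a) ^ (n + 1) / ((n + 1).factorial : ℝ) * dist f₁ f₂ := by
        have h1 : (0:ℝ) ≤ (x - a) ^ (n + 1) := pow_nonneg (by linarith) _
        have h2 : (0:ℝ) ≤ Bc ^ (n + 1) := pow_nonneg hBc0 _
        have h3 : (0:ℝ) ≤ ((n + 1).factorial : ℝ) := Nat.cast_nonneg _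
        exact mul_nonneg (div_nonneg (mul_nonneg h2 h1) h3) dist_nonneg
      calc ‖∫ t in a..x,
            Complex.sin (k * ((x : ℂ) - (t : ℂ))) / k * (V t * (bar F t - bar G t))‖
          ≤ |∫ t in a..x, Bc ^ (n + 1) * (t - a) ^ n / (n.factorial : ℝ) * dist f₁ f₂| := by
            refine intervalIntegral.norm_integral_le_abs_of_norm_le ?_
              (hcont.intervalIntegrable a x)
            filter_upwards [ae_restrict_mem measurableSet_uIoc] with t ht
            rw [Set.uIoc_of_le hax] at ht
            exact hbound t ht
        _ = Bc ^ (n + 1) * (x - a) ^ (n + 1) / ((n + 1).factorial : ℝ) * dist f₁ f₂ := by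
            rw [hval, abs_of_nonneg hnn]
  -- uniform Lipschitz estimate for iterates
  have lips : ∀ (n : ℕ) (f₁ f₂ : C(Set.Icc a b, ℂ)),
      dist (T^[n] f₁) (T^[n] f₂) ≤ Bc ^ n * (b - a) ^ n / (n.factorial : ℝ) * dist f₁ f₂ := by
    intro n f₁ f₂
    have hnn : 0 ≤ Bc ^ n * (b - a) ^ n / (n.factorial : ℝ) * dist f₁ f₂ :=
      mul_nonneg (div_nonneg (mul_nonneg (pow_nonneg hBc0 _)
        (pow_nonneg (by linarith) _)) (Nat.cast_nonneg _)) dist_nonneg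
    rw [ContinuousMap.dist_le hnn]
    rintro ⟨x, hx⟩
    rw [dist_eq_norm]
    refine (key f₁ f₂ n x hx).trans ?_
    have hmono : Bc ^ n * (x - a) ^ n ≤ Bc ^ n * (b - a) ^ n :=
      mul_le_mul_of_nonneg_left
        (pow_le_pow_left₀ (by linarith [hx.1]) (by linarith [hx.2]) n) (pow_nonneg hBc0 n)
    simp only [div_eq_mul_inv]
    exact mul_le_mul_of_nonneg_right
      (mul_le_mul_of_nonneg_right hmono (by positivity)) dist_nonneg
  -- choose an iterate that is a contraction
  obtain ⟨n, hn⟩ : ∃ n : ℕ, Bc ^ n * (b - a) ^ n / (n.factorial : ℝ) < 1 := by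
    have h2 := (FloorSemiring.tendsto_pow_div_factorial_atTop (K := ℝ)
      (Bc * (b - a))).eventually (gt_mem_nhds one_pos)
    obtain ⟨n, hn⟩ := h2.exists
    exact ⟨n, by rwa [mul_pow] at hn⟩
  have hκ0 : 0 ≤ Bc ^ n * (b - a) ^ n / (n.factorial : ℝ) :=
    div_nonneg (mul_nonneg (pow_nonneg hBc0 _) (pow_nonneg (by linarith) _))
      (Nat.cast_nonneg _)
  set K : NNReal := ⟨Bc ^ n * (b - a) ^ n / (n.factorial : ℝ), hκ0⟩ with hK
  have hCW : ContractingWith K (T^[n]) := by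
    constructor
    · exact_mod_cast hn
    · exact LipschitzWith.of_dist_le_mul fun f₁ f₂ => lips n f₁ f₂
  set fp : C(Set.Icc a b, ℂ) := ContractingWith.fixedPoint (T^[n]) hCW with hfpdef
  have hfp : Function.IsFixedPt (T^[n]) fp := hCW.fixedPoint_isFixedPt
  have hTfp : T fp = fp := by
    have h1 : Function.IsFixedPt (T^[n]) (T fp) := by
      show T^[n] (T fp) = T fp
      rw [← Function.iterate_succ_apply, Function.iterate_succ_apply', hfp.eq]
    exact hCW.fixedPoint_unique h1
  have hUniq : ∀ h : C(Set.Icc a b, ℂ), Function.IsFixedPt T h → h = fp :=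
    fun h hh => hCW.fixedPoint_unique (hh.iterate n)
  -- the solution on ℝ
  set X₀ : ℝ → ℂ := Φ fp with hX₀
  have hX₀c : Continuous X₀ := Φcont fp
  have hX₀S : ∀ (t : ℝ) (ht : t ∈ Set.Icc a b), X₀ t = fp ⟨t, ht⟩ := by
    intro t ht
    have h1 : (T fp) ⟨t, ht⟩ = fp ⟨t, ht⟩ := by rw [hTfp]
    exact h1.symm ▸ rfl
  have hX₀eq : ∀ x : ℝ, X₀ x = Complex.exp (-Complex.I * k * (x : ℂ)) +
      ∫ t in a..x, (Complex.sin (k * ((x : ℂ) - (t : ℂ))) / k) * V t * X₀ t := by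
    intro x
    show Φ fp x = _
    rw [hΦ]
    beta_reduce
    congr 1
    apply intervalIntegral.integral_congr
    intro t _
    show Complex.sin (k * ((x : ℂ) - (t : ℂ))) / k * g fp t =
      Complex.sin (k * ((x : ℂ) - (t : ℂ))) / k * V t * X₀ t
    by_cases ht : t ∈ Set.Icc a b
    · rw [hg]
      simp only []
      rw [bar_eq fp t ht, ← hX₀S t ht]
      ring
    · rw [hg]
      simp only [hVsupp t ht, zero_mul, mul_zero]
  -- any continuous solution coincides with X₀
  have hsol_eq : ∀ Y : ℝ → ℂ, Continuous Y →
      (∀ x : ℝ, Y x = Complex.exp (-Complex.I * k * (x : ℂ)) +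
        ∫ t in a..x, (Complex.sin (k * ((x : ℂ) - (t : ℂ))) / k) * V t * Y t) →
      Y = X₀ := by
    intro Y hYc hYeq
    set rY : C(Set.Icc a b, ℂ) := ⟨fun s => Y s.1, hYc.comp continuous_subtype_val⟩ with hrY
    have hbarY : ∀ (t : ℝ) (ht : t ∈ Set.Icc a b), bar rY t = Y t := by
      intro t ht
      rw [bar_eq rY t ht]
      rfl
    have hfix : Function.IsFixedPt T rY := by
      show T rY = rY
      ext s
      obtain ⟨x, hx⟩ := s
      show Φ rY x = Y x
      rw [hYeq x, hΦ]
      beta_reduce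
      congr 1
      apply intervalIntegral.integral_congr
      intro t _
      show Complex.sin (k * ((x : ℂ) - (t : ℂ))) / k * g rY t =
        Complex.sin (k * ((x : ℂ) - (t : ℂ))) / k * V t * Y t
      by_cases ht : t ∈ Set.Icc a b
      · rw [hg]
        simp only []
        rw [hbarY t ht]
        ring
      · rw [hg]
        simp only [hVsupp t ht, zero_mul, mul_zero]
    have hrYfp : rY = fp := hUniq rY hfix
    have hYX : ∀ t : ℝ, V t * Y t = V t * X₀ t := by
      intro t
      by_cases ht : t ∈ Set.Icc a b
      · have hYt : Y t = X₀ t := by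
          rw [hX₀S t ht, ← hrYfp]
          rfl
        rw [hYt]
      · rw [hVsupp t ht, zero_mul, zero_mul]
    funext x
    rw [hYeq x, hX₀eq x]
    congr 1
    apply intervalIntegral.integral_congr
    intro t _
    show Complex.sin (k * ((x : ℂ) - (t : ℂ))) / k * V t * Y t =
      Complex.sin (k * ((x : ℂ) - (t : ℂ))) / k * V t * X₀ t
    rw [mul_assoc, mul_assoc, hYX t]
  constructor
  · exact ⟨X₀, ⟨hX₀c, hX₀eq⟩, fun Y hY => hsol_eq Y hY.1 hY.2⟩
  · rintro X ⟨hXc, hXeq⟩ x hxa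
    rw [hXeq x]
    have hzero : (∫ t in a..x,
        (Complex.sin (k * ((x : ℂ) - (t : ℂ))) / k) * V t * X t) = 0 := by
      have hae : ∀ᵐ t : ℝ, t ≠ a := by
        have hset : {t : ℝ | ¬ t ≠ a} = {a} := by ext t; simp
        rw [MeasureTheory.ae_iff, hset]
        exact measure_singleton a
      rw [intervalIntegral.integral_congr_ae (g := fun _ => (0 : ℂ)) ?_]
      · simp
      · filter_upwards [hae] with t hta ht
        rw [Set.uIoc_comm, Set.uIoc_of_le hxa] at ht
        have htlt : t < a := lt_of_le_of_ne ht.2 hta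
        have htn : t ∉ Set.Icc a b := fun hc => absurd hc.1 (not_le.2 htlt)
        rw [hVsupp t htn, mul_zero, zero_mul]
    rw [hzero, add_zero]
end

section
/- Let d₋, d₊ > 0, ℓ > 0, and k ∈ ℂ with k ≠ 0. Let V₋, V₊ : ℝ → ℂ be continuous functions with V₋(x) = 0 outside [−d₋, 0] and V₊(x) = 0 outside [0, d₊]. Suppose X₋, X₊, X̃₊ : ℝ → ℂ are twice continuously differentiable functions satisfying: −X₋″ + V₋·X₋ = k²·X₋ on ℝ with X₋(x) = e^{−ikx} for x ≤ −d₋; −X₊″ + V₊·X₊ = k²·X₊ on ℝ with X₊(x) = e^{−ikx} for x ≤ 0; and −X̃₊″ + V₊·X̃₊ = (−k)²·X̃₊ on ℝ with X̃₊(x) = e^{ikx} for x ≤ 0. Assume X₋′(0) + ik·X₋(0) ≠ 0 and X̃₊′(d₊) − ik·X̃₊(d₊) ≠ 0, and define F(k) := [(X₋′(0) − ik·X₋(0))/(X₋′(0) + ik·X₋(0))] · [(X₊′(d₊) − ik·X₊(d₊))/(X̃₊′(d₊) − ik·X̃₊(d₊))]. If e^{4ikℓ} = F(k), then there exist a function ψ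 : ℝ → ℂ, not identically zero, twice continuously differentiable, and constants C₋, C₊ ∈ ℂ such that −ψ″(x) + (V₊(x−ℓ) + V₋(x+ℓ))·ψ(x) = k²·ψ(x) for all x ∈ ℝ, ψ(x) = C₋·e^{−ikx} for all x ≤ −ℓ−d₋, and ψ(x) = C₊·e^{ikx} for all x ≥ ℓ+d₊. -/
open Complex Filter Set Topology

private lemma constOn (u : ℝ → ℂ) (x₀ : ℝ)
    (h : ∀ x, x₀ ≤ x → HasDerivAt u 0 x) :
    ∀ x, x₀ ≤ x → u x = u x₀ := by
  intro x hx
  exact constant_of_has_deriv_right_zero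
    (fun y hy => ((h y hy.1).continuousAt).continuousWithinAt)
    (fun y hy => (h y hy.1).hasDerivWithinAt)
    x (Set.right_mem_Icc.mpr hx)

private lemma free_rep (k : ℂ) (hk : k ≠ 0) (f : ℝ → ℂ) (hf : ContDiff ℝ 2 f) (x₀ : ℝ)
    (hode : ∀ x : ℝ, x₀ ≤ x → deriv (deriv f) x = -k ^ 2 * f x) (A B : ℂ)
    (hA : 2 * Complex.I * k * A =
      (deriv f x₀ + Complex.I * k * f x₀) * Complex.exp (-(Complex.I * k * x₀)))
    (hB : 2 * Complex.I * k * B =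
      -(deriv f x₀ - Complex.I * k * f x₀) * Complex.exp (Complex.I * k * x₀)) :
    ∀ x : ℝ, x₀ ≤ x →
      f x = A * Complex.exp (Complex.I * k * x) + B * Complex.exp (-(Complex.I * k * x)) := by
  have hf1 : Differentiable ℝ f := hf.differentiable (by norm_num)
  have hf2 : Differentiable ℝ (deriv f) := by
    simpa [iteratedDeriv_one] using hf.differentiable_iteratedDeriv 1 (by norm_num)
  have h2ik : (2 : ℂ) * Complex.I * k ≠ 0 := by
    simp [Complex.I_ne_zero, hk]
  have hcoe : ∀ x : ℝ, HasDerivAt (fun y : ℝ => (y : ℂ)) 1 x := fun x =>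
    Complex.ofRealCLM.hasDerivAt
  -- step 1
  set u : ℝ → ℂ := fun x => (deriv f x + Complex.I * k * f x) * Complex.exp (-(Complex.I * k * x))
    with hu_def
  have hu : ∀ x, x₀ ≤ x → u x = u x₀ := by
    apply constOn
    intro x hx
    have h1 : HasDerivAt f (deriv f x) x := (hf1 x).hasDerivAt
    have h2 : HasDerivAt (deriv f) (-k ^ 2 * f x) x := by
      have := (hf2 x).hasDerivAt
      rwa [hode x hx] at this
    have h3 : HasDerivAt (fun y : ℝ => -(Complex.I * k * (y : ℂ))) (-(Complex.I * k)) x := by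
      have := ((hcoe x).const_mul (Complex.I * k)).neg
      simp only [mul_one] at this
      exact this
    have h4 := h3.cexp
    have h6 := (h2.add (h1.const_mul (Complex.I * k))).mul h4
    have : (-k ^ 2 * f x + Complex.I * k * deriv f x) * Complex.exp (-(Complex.I * k * x)) +
        (deriv f x + Complex.I * k * f x) *
          (Complex.exp (-(Complex.I * k * x)) * -(Complex.I * k)) = 0 := by
      linear_combination (-(k ^ 2) * f x * Complex.exp (-(Complex.I * k * (x : ℂ)))) *
        Complex.I_sq
    replace h6 := h6.congr_deriv this
    exact h6
  -- consequence of step 1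
  have hux : ∀ x : ℝ, x₀ ≤ x → deriv f x + Complex.I * k * f x =
      2 * Complex.I * k * A * Complex.exp (Complex.I * k * x) := by
    intro x hx
    have h := hu x hx
    simp only [hu_def] at h
    rw [hA]
    have hne : Complex.exp (-(Complex.I * k * (x : ℂ))) ≠ 0 := Complex.exp_ne_zero _
    have hinv : Complex.exp (Complex.I * k * (x : ℂ)) =
        (Complex.exp (-(Complex.I * k * (x : ℂ))))⁻¹ := by
      rw [← Complex.exp_neg]; ring_nf
    rw [hinv]
    field_simp
    linear_combination h
  -- step 2
  set v : ℝ → ℂ := fun x =>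
    (f x - A * Complex.exp (Complex.I * k * x)) * Complex.exp (Complex.I * k * x) with hv_def
  have hv : ∀ x, x₀ ≤ x → v x = v x₀ := by
    apply constOn
    intro x hx
    have h1 : HasDerivAt f (deriv f x) x := (hf1 x).hasDerivAt
    have h3 : HasDerivAt (fun y : ℝ => Complex.I * k * (y : ℂ)) (Complex.I * k) x := by
      simpa using ((hcoe x).const_mul (Complex.I * k))
    have h4 := h3.cexp
    have h9 := (h1.sub (h4.const_mul A)).mul h4
    have : (deriv f x - A * (Complex.exp (Complex.I * k * x) * (Complex.I * k))) *
          Complex.exp (Complex.I * k * x) +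
        (f x - A * Complex.exp (Complex.I * k * x)) *
          (Complex.exp (Complex.I * k * x) * (Complex.I * k)) = 0 := by
      linear_combination Complex.exp (Complex.I * k * (x : ℂ)) * hux x hx
    replace h9 := h9.congr_deriv this
    exact h9
  -- conclude
  intro x hx
  have h := hv x hx
  simp only [hv_def] at h
  have hE : Complex.exp (Complex.I * k * (x : ℂ)) ≠ 0 := Complex.exp_ne_zero _
  have hE0 : Complex.exp (Complex.I * k * (x₀ : ℂ)) ≠ 0 := Complex.exp_ne_zero _
  have hA' : 2 * Complex.I * k * A * Complex.exp (Complex.I * k * (x₀ : ℂ)) =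
      deriv f x₀ + Complex.I * k * f x₀ := by
    rw [Complex.exp_neg] at hA
    field_simp at hA
    linear_combination hA
  have hBv : (f x₀ - A * Complex.exp (Complex.I * k * x₀)) * Complex.exp (Complex.I * k * x₀)
      = B := by
    apply mul_left_cancel₀ h2ik
    linear_combination -(Complex.exp (Complex.I * k * (x₀ : ℂ)) * hA') - hB
  rw [hBv] at h
  rw [Complex.exp_neg, ← h]
  field_simp
  ring
private lemma it2 (f : ℝ → ℂ) : iteratedDeriv 2 f = deriv (deriv f) := by
  rw [show (2:ℕ) = 1+1 from rfl, iteratedDeriv_succ, iteratedDeriv_one]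

private lemma itsub (n : ℕ) (f : ℝ → ℂ) (s : ℝ) :
    iteratedDeriv n (fun z => f (z - s)) = fun t => iteratedDeriv n f (t - s) := by
  simpa [sub_eq_add_neg] using iteratedDeriv_comp_add_const n f (-s)

private lemma it2_combo (a b : ℂ) (f g : ℝ → ℂ) (hf : ContDiff ℝ 2 f) (hg : ContDiff ℝ 2 g)
    (x : ℝ) :
    iteratedDeriv 2 (fun y => a * f y - b * g y) x
      = a * iteratedDeriv 2 f x - b * iteratedDeriv 2 g x := by
  have hf1 : Differentiable ℝ f := hf.differentiable (by norm_num)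
  have hg1 : Differentiable ℝ g := hg.differentiable (by norm_num)
  have hf2 : Differentiable ℝ (deriv f) := by
    simpa [iteratedDeriv_one] using hf.differentiable_iteratedDeriv 1 (by norm_num)
  have hg2 : Differentiable ℝ (deriv g) := by
    simpa [iteratedDeriv_one] using hg.differentiable_iteratedDeriv 1 (by norm_num)
  rw [it2, it2, it2]
  have hd : deriv (fun y => a * f y - b * g y) = fun y => a * deriv f y - b * deriv g y := by
    funext y
    rw [deriv_fun_sub ((hf1 y).const_mul a) ((hg1 y).const_mul b), deriv_const_mul a (hf1 y),
      deriv_const_mul b (hg1 y)]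
  rw [hd, deriv_fun_sub ((hf2 x).const_mul a) ((hg2 x).const_mul b), deriv_const_mul a (hf2 x),
    deriv_const_mul b (hg2 x)]

/-- Let `V₋, V₊` be continuous potentials supported in `[-d₋, 0]` and
`[0, d₊]`, and let `X₋, X₊, X̃₊` be the Jost-type solutions of the corresponding
Schrödinger equations (the first two for wavenumber `k`, equal to `e^{-ikx}` to the left
of the supports, and the third for wavenumber `-k`, equal to `e^{ikx}` to the left of the
support). If `e^{4ikℓ} = F(k)`, where
`F(k) = [(X₋'(0) - ik X₋(0))/(X₋'(0) + ik X₋(0))] ·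
        [(X₊'(d₊) - ik X₊(d₊))/(X̃₊'(d₊) - ik X̃₊(d₊))]`,
then the bipartite Schrödinger equation with potential `V₊(x-ℓ) + V₋(x+ℓ)` possesses a
nontrivial solution `ψ` which behaves as `C₋ e^{-ikx}` for `x ≤ -ℓ-d₋` and as
`C₊ e^{ikx}` for `x ≥ ℓ+d₊`, i.e. `k` corresponds to a resonance or an eigenvalue. -/
theorem exp_eq_F_implies_resonance_or_eigenvalue
    (dm dp ℓ : ℝ) (hdm : 0 < dm) (hdp : 0 < dp) (hℓ : 0 < ℓ)
    (k : ℂ) (hk : k ≠ 0)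
    (Vm Vp : ℝ → ℂ) (hVmc : Continuous Vm) (hVpc : Continuous Vp)
    (hVmsupp : ∀ x : ℝ, x ∉ Set.Icc (-dm) 0 → Vm x = 0)
    (hVpsupp : ∀ x : ℝ, x ∉ Set.Icc 0 dp → Vp x = 0)
    (Xm Xp Xt : ℝ → ℂ)
    (hXm : ContDiff ℝ 2 Xm) (hXp : ContDiff ℝ 2 Xp) (hXt : ContDiff ℝ 2 Xt)
    (hXmeq : ∀ x : ℝ, -(iteratedDeriv 2 Xm x) + Vm x * Xm x = k ^ 2 * Xm x)
    (hXmval : ∀ x : ℝ, x ≤ -dm → Xm x = Complex.exp (-Complex.I * k * (x : ℂ)))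
    (hXpeq : ∀ x : ℝ, -(iteratedDeriv 2 Xp x) + Vp x * Xp x = k ^ 2 * Xp x)
    (hXpval : ∀ x : ℝ, x ≤ 0 → Xp x = Complex.exp (-Complex.I * k * (x : ℂ)))
    (hXteq : ∀ x : ℝ, -(iteratedDeriv 2 Xt x) + Vp x * Xt x = (-k) ^ 2 * Xt x)
    (hXtval : ∀ x : ℝ, x ≤ 0 → Xt x = Complex.exp (Complex.I * k * (x : ℂ)))
    (hden1 : deriv Xm 0 + Complex.I * k * Xm 0 ≠ 0)
    (hden2 : deriv Xt dp - Complex.I * k * Xt dp ≠ 0)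
    (heq : Complex.exp (4 * Complex.I * k * (ℓ : ℂ)) =
      ((deriv Xm 0 - Complex.I * k * Xm 0) / (deriv Xm 0 + Complex.I * k * Xm 0)) *
      ((deriv Xp dp - Complex.I * k * Xp dp) / (deriv Xt dp - Complex.I * k * Xt dp))) :
    ∃ (ψ : ℝ → ℂ) (Cm Cp : ℂ),
      (∃ x : ℝ, ψ x ≠ 0) ∧ ContDiff ℝ 2 ψ ∧
      (∀ x : ℝ, -(iteratedDeriv 2 ψ x) + (Vp (x - ℓ) + Vm (x + ℓ)) * ψ x = k ^ 2 * ψ x) ∧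
      (∀ x : ℝ, x ≤ -ℓ - dm → ψ x = Cm * Complex.exp (-Complex.I * k * (x : ℂ))) ∧
      (∀ x : ℝ, ℓ + dp ≤ x → ψ x = Cp * Complex.exp (Complex.I * k * (x : ℂ))) := by
  have h2ik : (2 : ℂ) * Complex.I * k ≠ 0 := by simp [Complex.I_ne_zero, hk]
  -- the potentials vanish on closed right half-lines
  have hVm0 : ∀ x : ℝ, 0 ≤ x → Vm x = 0 := by
    intro x hx
    rcases eq_or_lt_of_le hx with h | h
    · subst h
      have h1 : Filter.Tendsto Vm (nhdsWithin 0 (Set.Ioi 0)) (nhds (Vm 0)) :=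
        (hVmc.tendsto 0).mono_left nhdsWithin_le_nhds
      have h2 : Filter.Tendsto Vm (nhdsWithin 0 (Set.Ioi 0)) (nhds 0) := by
        refine Filter.Tendsto.congr' ?_ tendsto_const_nhds
        filter_upwards [self_mem_nhdsWithin] with y hy
        exact (hVmsupp y (by simp only [Set.mem_Icc, not_and_or, not_le]; exact Or.inr (Set.mem_Ioi.mp hy))).symm
      exact tendsto_nhds_unique h1 h2
    · exact hVmsupp x (by simp only [Set.mem_Icc, not_and_or, not_le]; right; exact h)
  have hVpdp : ∀ x : ℝ, dp ≤ x → Vp x = 0 := by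
    intro x hx
    rcases eq_or_lt_of_le hx with h | h
    · subst h
      have h1 : Filter.Tendsto Vp (nhdsWithin dp (Set.Ioi dp)) (nhds (Vp dp)) :=
        (hVpc.tendsto dp).mono_left nhdsWithin_le_nhds
      have h2 : Filter.Tendsto Vp (nhdsWithin dp (Set.Ioi dp)) (nhds 0) := by
        refine Filter.Tendsto.congr' ?_ tendsto_const_nhds
        filter_upwards [self_mem_nhdsWithin] with y hy
        exact (hVpsupp y (by simp only [Set.mem_Icc, not_and_or, not_le]; exact Or.inr (Set.mem_Ioi.mp hy))).symm
      exact tendsto_nhds_unique h1 h2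
    · exact hVpsupp x (by simp only [Set.mem_Icc, not_and_or, not_le]; right; exact h)
  -- free ODEs
  have hodem : ∀ x : ℝ, (0:ℝ) ≤ x → deriv (deriv Xm) x = -k ^ 2 * Xm x := by
    intro x hx
    have h := hXmeq x
    rw [hVm0 x hx, it2 Xm] at h
    linear_combination -h
  have hodep : ∀ x : ℝ, dp ≤ x → deriv (deriv Xp) x = -k ^ 2 * Xp x := by
    intro x hx
    have h := hXpeq x
    rw [hVpdp x hx, it2 Xp] at h
    linear_combination -h
  have hodet : ∀ x : ℝ, dp ≤ x → deriv (deriv Xt) x = -k ^ 2 * Xt x := by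
    intro x hx
    have h := hXteq x
    rw [hVpdp x hx, it2 Xt] at h
    linear_combination -h
  -- abbreviations
  set e : ℝ → ℂ := fun t => Complex.exp (Complex.I * k * (t : ℂ)) with he_def
  have heC : ∀ t : ℝ, e t = Complex.exp (Complex.I * k * (t : ℂ)) := fun t => rfl
  have hene : ∀ t : ℝ, e t ≠ 0 := fun t => Complex.exp_ne_zero _
  set P := deriv Xm 0 + Complex.I * k * Xm 0 with hP_def
  set M := deriv Xm 0 - Complex.I * k * Xm 0 with hM_def
  set Qp := deriv Xp dp - Complex.I * k * Xp dp with hQp_def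
  set Qt := deriv Xt dp - Complex.I * k * Xt dp with hQt_def
  obtain ⟨am, ham_def⟩ : ∃ z : ℂ, z = P / (2 * Complex.I * k) := ⟨_, rfl⟩
  obtain ⟨bm, hbm_def⟩ : ∃ z : ℂ, z = -M / (2 * Complex.I * k) := ⟨_, rfl⟩
  obtain ⟨ap, hap_def⟩ : ∃ z : ℂ,
    z = (deriv Xp dp + Complex.I * k * Xp dp) * (e dp)⁻¹ / (2 * Complex.I * k) := ⟨_, rfl⟩
  obtain ⟨bp, hbp_def⟩ : ∃ z : ℂ, z = -Qp * e dp / (2 * Complex.I * k) := ⟨_, rfl⟩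
  obtain ⟨at', hat_def⟩ : ∃ z : ℂ,
    z = (deriv Xt dp + Complex.I * k * Xt dp) * (e dp)⁻¹ / (2 * Complex.I * k) := ⟨_, rfl⟩
  obtain ⟨bt, hbt_def⟩ : ∃ z : ℂ, z = -Qt * e dp / (2 * Complex.I * k) := ⟨_, rfl⟩
  obtain ⟨c, hc_def⟩ : ∃ z : ℂ, z = Qp / Qt := ⟨_, rfl⟩
  -- representations
  have repm : ∀ x : ℝ, (0:ℝ) ≤ x →
      Xm x = am * Complex.exp (Complex.I * k * x) + bm * Complex.exp (-(Complex.I * k * x)) := by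
    refine free_rep k hk Xm hXm 0 hodem am bm ?_ ?_
    · rw [ham_def]
      simp only [Complex.ofReal_zero, mul_zero, neg_zero, Complex.exp_zero, mul_one]
      field_simp
      exact hP_def
    · rw [hbm_def, hM_def]
      simp only [Complex.ofReal_zero, mul_zero, Complex.exp_zero, mul_one]
      field_simp
  have repp : ∀ x : ℝ, dp ≤ x →
      Xp x = ap * Complex.exp (Complex.I * k * x) + bp * Complex.exp (-(Complex.I * k * x)) := by
    have hedp : e dp ≠ 0 := hene dp
    refine free_rep k hk Xp hXp dp hodep ap bp ?_ ?_
    · rw [hap_def, Complex.exp_neg, ← heC dp]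
      field_simp
    · rw [hbp_def, ← heC dp, hQp_def]
      field_simp
  have rept : ∀ x : ℝ, dp ≤ x →
      Xt x = at' * Complex.exp (Complex.I * k * x) + bt * Complex.exp (-(Complex.I * k * x)) := by
    have hedp : e dp ≠ 0 := hene dp
    refine free_rep k hk Xt hXt dp hodet at' bt ?_ ?_
    · rw [hat_def, Complex.exp_neg, ← heC dp]
      field_simp
    · rw [hbt_def, ← heC dp, hQt_def]
      field_simp
  -- basic relations
  have hbpbt : bp = c * bt := by
    rw [hbp_def, hbt_def, hc_def]
    field_simp
  have hkey : am * (e ℓ) ^ 4 = -(bm * c) := by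
    have h4 : (e ℓ) ^ 4 = (M / P) * (Qp / Qt) := by
      rw [← heq, heC]
      rw [← Complex.exp_nat_mul]
      congr 1
      push_cast
      ring
    rw [h4, ham_def, hbm_def, hc_def]
    field_simp
  obtain ⟨lam, hlam_def⟩ : ∃ z : ℂ, z = bm * e (-ℓ) ^ 2 := ⟨_, rfl⟩
  have hll : e ℓ * e (-ℓ) = 1 := by
    rw [heC, heC, ← Complex.exp_add]
    have harg : Complex.I * k * ((ℓ : ℝ) : ℂ) + Complex.I * k * ((-ℓ : ℝ) : ℂ) = 0 := by
      push_cast; ring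
    rw [harg, Complex.exp_zero]
  have hll3 : (e ℓ) ^ 3 * (e (-ℓ)) ^ 3 = 1 := by
    rw [← mul_pow, hll, one_pow]
  -- the glued function
  set g : ℝ → ℂ := fun x => am * e (x + ℓ) + bm * e (-(x + ℓ)) with hg_def
  set ψ : ℝ → ℂ := fun x =>
      Xm (x + ℓ) + (lam * (Xp (x - ℓ) - c * Xt (x - ℓ)) - g x) with hψ_def
  have HL : ∀ x : ℝ, -ℓ ≤ x → Xm (x + ℓ) = g x := by
    intro x hx
    rw [repm (x + ℓ) (by linarith), hg_def]
    simp only [heC]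
    have harg : Complex.I * k * ((-(x + ℓ) : ℝ) : ℂ) = -(Complex.I * k * (((x + ℓ) : ℝ) : ℂ)) := by
      push_cast
      ring
    rw [harg]
  have HR : ∀ x : ℝ, x ≤ ℓ → lam * (Xp (x - ℓ) - c * Xt (x - ℓ)) = g x := by
    intro x hx
    rw [hXpval (x - ℓ) (by linarith), hXtval (x - ℓ) (by linarith)]
    simp only [hg_def]
    have h1 : Complex.exp (-Complex.I * k * ((x - ℓ : ℝ) : ℂ)) = e (-x) * e ℓ := by
      rw [heC, heC, ← Complex.exp_add]
      congr 1
      push_cast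
      ring
    have h2 : Complex.exp (Complex.I * k * ((x - ℓ : ℝ) : ℂ)) = e x * e (-ℓ) := by
      rw [heC, heC, ← Complex.exp_add]
      congr 1
      push_cast
      ring
    have h3 : e (x + ℓ) = e x * e ℓ := by
      rw [heC, heC, heC, ← Complex.exp_add]
      congr 1
      push_cast
      ring
    have h4 : e (-(x + ℓ)) = e (-x) * e (-ℓ) := by
      rw [heC, heC, heC, ← Complex.exp_add]
      congr 1
      push_cast
      ring
    rw [h1, h2, h3, h4]
    linear_combination (e (-x) * e ℓ - c * (e x * e (-ℓ))) * hlam_def -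
      (e x * e (-ℓ) ^ 3) * hkey + (bm * e (-x) * e (-ℓ)) * hll +
      (am * e x * e ℓ) * hll3
  have psiL : ∀ x : ℝ, x ≤ ℓ → ψ x = Xm (x + ℓ) := by
    intro x hx
    simp only [hψ_def]
    rw [HR x hx]
    ring
  have psiR : ∀ x : ℝ, -ℓ ≤ x → ψ x = lam * (Xp (x - ℓ) - c * Xt (x - ℓ)) := by
    intro x hx
    simp only [hψ_def]
    rw [HL x hx]
    ring
  -- smoothness
  have hcoeC : ContDiff ℝ 2 (fun x : ℝ => (x : ℂ)) := Complex.ofRealCLM.contDiff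
  have hexp : ∀ a b : ℂ, ContDiff ℝ 2 (fun x : ℝ => Complex.exp (a * (x : ℂ) + b)) := by
    intro a b
    exact Complex.contDiff_exp.comp
      ((contDiff_const.mul hcoeC).add contDiff_const)
  have hg1 : ContDiff ℝ 2 (fun x : ℝ => e (x + ℓ)) := by
    have hfun : (fun x : ℝ => e (x + ℓ))
        = fun x : ℝ => Complex.exp (Complex.I * k * (x : ℂ) + Complex.I * k * (ℓ : ℂ)) := by
      funext x
      rw [heC]
      congr 1
      push_cast
      ring
    rw [hfun]
    exact hexp _ _
  have hg2 : ContDiff ℝ 2 (fun x : ℝ => e (-(x + ℓ))) := by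
    have hfun : (fun x : ℝ => e (-(x + ℓ)))
        = fun x : ℝ => Complex.exp (-(Complex.I * k) * (x : ℂ) + -(Complex.I * k) * (ℓ : ℂ)) := by
      funext x
      rw [heC]
      congr 1
      push_cast
      ring
    rw [hfun]
    exact hexp _ _
  have hψc : ContDiff ℝ 2 ψ := by
    rw [hψ_def]
    have hXmS : ContDiff ℝ 2 (fun x : ℝ => Xm (x + ℓ)) :=
      hXm.comp (contDiff_id.add contDiff_const)
    have hXpS : ContDiff ℝ 2 (fun x : ℝ => Xp (x - ℓ)) :=
      hXp.comp (contDiff_id.sub contDiff_const)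
    have hXtS : ContDiff ℝ 2 (fun x : ℝ => Xt (x - ℓ)) :=
      hXt.comp (contDiff_id.sub contDiff_const)
    have hgc : ContDiff ℝ 2 g := by
      rw [hg_def]
      exact (contDiff_const.mul hg1).add (contDiff_const.mul hg2)
    exact hXmS.add ((contDiff_const.mul (hXpS.sub (contDiff_const.mul hXtS))).sub hgc)
  -- the Schrodinger equation
  have hmain : ∀ x : ℝ,
      -(iteratedDeriv 2 ψ x) + (Vp (x - ℓ) + Vm (x + ℓ)) * ψ x = k ^ 2 * ψ x := by
    intro x
    rcases lt_or_ge x ℓ with hx | hx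
    · have hev : ψ =ᶠ[nhds x] fun y => Xm (y + ℓ) := by
        filter_upwards [Iio_mem_nhds hx] with y hy
        exact psiL y (le_of_lt hy)
      rw [Filter.EventuallyEq.iteratedDeriv_eq 2 hev, iteratedDeriv_comp_add_const 2 Xm ℓ,
        psiL x hx.le,
        hVpsupp (x - ℓ) (by simp only [Set.mem_Icc, not_and_or, not_le]; left; linarith),
        zero_add]
      exact hXmeq (x + ℓ)
    · have hx' : -ℓ < x := by linarith
      have hev : ψ =ᶠ[nhds x] fun y => lam * (Xp (y - ℓ) - c * Xt (y - ℓ)) := by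
        filter_upwards [Ioi_mem_nhds hx'] with y hy
        exact psiR y (le_of_lt hy)
      have hcombo : iteratedDeriv 2 (fun y => lam * (Xp (y - ℓ) - c * Xt (y - ℓ))) x
          = lam * iteratedDeriv 2 (fun z => Xp (z - ℓ)) x
            - (lam * c) * iteratedDeriv 2 (fun z => Xt (z - ℓ)) x := by
        have hfun : (fun y => lam * (Xp (y - ℓ) - c * Xt (y - ℓ)))
            = fun y => lam * (fun z => Xp (z - ℓ)) y - (lam * c) * (fun z => Xt (z - ℓ)) y := by
          funext y
          simp only
          ring
        rw [hfun]
        exact it2_combo lam (lam * c) _ _ (hXp.comp (contDiff_id.sub contDiff_const))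
          (hXt.comp (contDiff_id.sub contDiff_const)) x
      rw [Filter.EventuallyEq.iteratedDeriv_eq 2 hev, hcombo, itsub 2 Xp ℓ, itsub 2 Xt ℓ,
        psiR x hx'.le,
        hVmsupp (x + ℓ) (by simp only [Set.mem_Icc, not_and_or, not_le]; right; linarith),
        add_zero]
      linear_combination lam * hXpeq (x - ℓ) - (lam * c) * hXteq (x - ℓ)
  -- packaging
  refine ⟨ψ, Complex.exp (-Complex.I * k * (ℓ : ℂ)), lam * (ap - c * at') * e (-ℓ),
    ⟨-ℓ - dm, ?_⟩, hψc, hmain, ?_, ?_⟩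
  · rw [psiL (-ℓ - dm) (by linarith), show -ℓ - dm + ℓ = -dm by ring, hXmval (-dm) le_rfl]
    exact Complex.exp_ne_zero _
  · intro x hx
    rw [psiL x (by linarith), hXmval (x + ℓ) (by linarith), ← Complex.exp_add]
    congr 1
    push_cast
    ring
  · intro x hx
    rw [psiR x (by linarith), repp (x - ℓ) (by linarith), rept (x - ℓ) (by linarith)]
    have h1 : Complex.exp (-(Complex.I * k * ((x - ℓ : ℝ) : ℂ))) = e (-x) * e ℓ := by
      rw [heC, heC, ← Complex.exp_add]
      congr 1
      push_cast
      ring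
    have h2 : Complex.exp (Complex.I * k * ((x - ℓ : ℝ) : ℂ)) = e x * e (-ℓ) := by
      rw [heC, heC, ← Complex.exp_add]
      congr 1
      push_cast
      ring
    rw [h1, h2, ← heC x]
    linear_combination (lam * (e (-x) * e ℓ)) * hbpbt
end
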